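/- arXiv:1503.05339 — 4 statements merged into one kernel-verified Lean document; each statement's English description precedes it below -/
import Mathlib

section
/- Let L ≥ 3 and p, q ≥ 0. Fix a horizontal edge e₀ of the hexagonal torus T_L, and let N be a nonempty set of perfect matchings of T_L that is closed under single-bead up-jumps, down-jumps and under the vertical translation τ. Let N̂ = {σ ∈ N : σ has a bead at e₀}, assumed nonempty, and let 𝓛̂ be the generator of the process viewed from the tagged bead at e₀. Then the uniform probability measure π̂ on N̂ is stationary for 𝓛̂: for every σ ∈ N̂, Σ_{σ' ∈ N̂} π̂(σ')·𝓛̂(σ',σ) = 0. -/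
/-!
Dimer coverings (perfect matchings) of the hexagonal torus `T_L`, beads, elementary
moves, and the sets `I⁺_b`, `I⁻_b` of positions available above/below a bead.

Statement-specific material follows the common setup below.

-/

namespace HexDimer

variable (L : ℕ)

/-- Positions `x ∈ (ℤ/Lℤ)²` indexing the white vertices `w_x`, the black vertices `b_x`,
and the horizontal edges (hence the faces / possible bead positions). -/
abbrev Pos := ZMod L × ZMod L

/-- An edge of the hexagonal torus is encoded by its white endpoint `x` together with a
direction `d : Fin 3`: `d = 0` is the horizontal edge `{w_x, b_x}`, `d = 1` is
`{w_x, b_{x+(1,0)}}`, `d = 2` is `{w_x, b_{x+(0,1)}}`. -/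
abbrev Edge := Pos L × Fin 3

/-- The displacement of the black endpoint of an edge in direction `d`. -/
def dvec : Fin 3 → Pos L := ![(0, 0), (1, 0), (0, 1)]

/-- A configuration: a (finite) set of edges. -/
abbrev Config := Finset (Edge L)

/-- `σ` is a perfect matching of the hexagonal torus: every white vertex `w_x` and every
black vertex `b_x` belongs to exactly one edge of `σ`. -/
def IsPM (σ : Config L) : Prop :=
  (∀ x : Pos L, ∃! d : Fin 3, (x, d) ∈ σ) ∧
  (∀ x : Pos L, ∃! e : Edge L, e ∈ σ ∧ e.1 + dvec L e.2 = x)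

/-- The upward shift `(1,-1)` along a column. -/
def u : Pos L := (1, -1)

/-- The set of beads (horizontal dimers) of `σ`, recorded by their positions. -/
def beadPos (σ : Config L) : Finset (Pos L) :=
  (σ.filter (fun e => e.2 = 0)).image Prod.fst

/-- The alternating triple of edges of the face `F_x` containing the lower horizontal
edge `{w_x, b_x}`: the edges `(x,0)`, `(x+(1,-1),2)` and `(x-(0,1),1)`. -/
def lowTriple (x : Pos L) : Finset (Edge L) :=
  {(x, 0), (x + u L, 2), (x - (0, 1), 1)}

/-- The alternating triple of edges of the face `F_x` containing the upper horizontal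
edge `{w_{x+(1,-1)}, b_{x+(1,-1)}}`: the edges `(x,1)`, `(x+(1,-1),0)` and `(x-(0,1),2)`. -/
def highTriple (x : Pos L) : Finset (Edge L) :=
  {(x, 1), (x + u L, 0), (x - (0, 1), 2)}

/-- The elementary up-move at the face `F_x` is allowed: `σ` contains the alternating
triple through the lower horizontal edge of `F_x` (in particular there is a bead at `x`). -/
def CanUp (σ : Config L) (x : Pos L) : Prop := lowTriple L x ⊆ σ

/-- The configuration after the elementary up-move at `F_x`: the three dimers of the low
triple are rotated onto the high triple; the bead at `x` moves up to `x + (1,-1)`. -/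
def upMove (σ : Config L) (x : Pos L) : Config L := (σ \ lowTriple L x) ∪ highTriple L x

/-- The elementary down-move bringing the bead at `x` down to `x - (1,-1)` is allowed. -/
def CanDown (σ : Config L) (x : Pos L) : Prop := highTriple L (x - u L) ⊆ σ

/-- The configuration after the elementary down-move of the bead at `x`. -/
def downMove (σ : Config L) (x : Pos L) : Config L :=
  (σ \ highTriple L (x - u L)) ∪ lowTriple L (x - u L)

/-- `UpPath σ x y σ'` holds if, starting from `σ` with a bead at `x`, a concatenation of
elementary up-moves (each moving this bead and no other bead) brings the bead to
position `y`, the configuration becoming `σ'`. -/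
inductive UpPath : Config L → Pos L → Pos L → Config L → Prop
  | refl (σ : Config L) (x : Pos L) : UpPath σ x x σ
  | step {σ : Config L} {x y : Pos L} {σ' : Config L} :
      CanUp L σ x → UpPath (upMove L σ x) (x + u L) y σ' → UpPath σ x y σ'

/-- `DownPath σ x y σ'`: a concatenation of elementary down-moves of a single bead brings
it from `x` to `y`, the configuration becoming `σ'`. -/
inductive DownPath : Config L → Pos L → Pos L → Config L → Prop
  | refl (σ : Config L) (x : Pos L) : DownPath σ x x σ
  | step {σ : Config L} {x y : Pos L} {σ' : Config L} :
      CanDown L σ x → DownPath (downMove L σ x) (x - u L) y σ' → DownPath σ x y σ'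

/-- `I⁺_b(σ)`: the set of positions available above the bead at `x`. -/
def Iplus (σ : Config L) (x : Pos L) : Set (Pos L) :=
  {y | y ≠ x ∧ ∃ σ' : Config L, UpPath L σ x y σ'}

/-- `I⁻_b(σ)`: the set of positions available below the bead at `x`. -/
def Iminus (σ : Config L) (x : Pos L) : Set (Pos L) :=
  {y | y ≠ x ∧ ∃ σ' : Config L, DownPath L σ x y σ'}


/-- `UpPathN σ x n σ'`: a concatenation of `n` elementary up-moves (each moving the same
bead and no other bead) brings the bead from `x` to `x + n·(1,-1)`, the configuration
becoming `σ'`. -/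
inductive UpPathN : Config L → Pos L → ℕ → Config L → Prop
  | refl (σ : Config L) (x : Pos L) : UpPathN σ x 0 σ
  | step {σ : Config L} {x : Pos L} {n : ℕ} {σ' : Config L} :
      CanUp L σ x → UpPathN (upMove L σ x) (x + u L) n σ' → UpPathN σ x (n + 1) σ'

/-- `DownPathN σ x n σ'`: `n` elementary down-moves of a single bead starting at `x`. -/
inductive DownPathN : Config L → Pos L → ℕ → Config L → Prop
  | refl (σ : Config L) (x : Pos L) : DownPathN σ x 0 σ
  | step {σ : Config L} {x : Pos L} {n : ℕ} {σ' : Config L} :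
      CanDown L σ x → DownPathN (downMove L σ x) (x - u L) n σ' → DownPathN σ x (n + 1) σ'

/-- The vertical translation `τ^k` (`k ∈ ℤ`): every edge is translated by `k·(1,-1)`. -/
def tshift (k : ℤ) (σ : Config L) : Config L :=
  σ.image (fun e => (e.1 + k • u L, e.2))

/-- Number of up-transitions of the tagged-bead process from `σ` producing `τ`, the
tagged bead sitting at the horizontal edge `x₀`.  A bead other than the tagged one
up-jumps and the configuration is unchanged otherwise; if the tagged bead up-jumps `n`
steps, the resulting matching is translated back by `τ^{-n}`. -/
noncomputable def numUpHat (x₀ : Pos L) (σ τ : Config L) : ℕ :=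
  Set.ncard {pr : Pos L × Pos L | pr.2 ≠ pr.1 ∧
    ((pr.1 ≠ x₀ ∧ ∃ n : ℕ, pr.2 = pr.1 + n • u L ∧ UpPathN L σ pr.1 n τ) ∨
     (pr.1 = x₀ ∧ ∃ n : ℕ, 0 < n ∧ pr.2 = x₀ + n • u L ∧
        ∃ σ' : Config L, UpPathN L σ x₀ n σ' ∧ τ = tshift L (-(n : ℤ)) σ'))}

/-- Number of down-transitions of the tagged-bead process from `σ` producing `τ`. -/
noncomputable def numDownHat (x₀ : Pos L) (σ τ : Config L) : ℕ :=
  Set.ncard {pr : Pos L × Pos L | pr.2 ≠ pr.1 ∧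
    ((pr.1 ≠ x₀ ∧ ∃ n : ℕ, pr.2 = pr.1 - n • u L ∧ DownPathN L σ pr.1 n τ) ∨
     (pr.1 = x₀ ∧ ∃ n : ℕ, 0 < n ∧ pr.2 = x₀ - n • u L ∧
        ∃ σ' : Config L, DownPathN L σ x₀ n σ' ∧ τ = tshift L (n : ℤ) σ'))}

/-- The generator `𝓛̂` of the process viewed from the tagged bead at `x₀`:
off-diagonal entries are `p·#{up-transitions} + q·#{down-transitions}`, and the diagonal
entry is minus the sum of the off-diagonal entries of its row. -/
noncomputable def HatGen [NeZero L] (x₀ : Pos L) (p q : ℝ) (σ τ : Config L) : ℝ :=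
  if τ = σ then
    -∑ τ' ∈ Finset.univ.erase σ, (p * numUpHat L x₀ σ τ' + q * numDownHat L x₀ σ τ')
  else p * numUpHat L x₀ σ τ + q * numDownHat L x₀ σ τ

/-- `τ` is obtained from `σ` by a single-bead up-jump. -/
def IsUpJump (σ τ : Config L) : Prop :=
  ∃ x y : Pos L, y ≠ x ∧ UpPath L σ x y τ

/-- `τ` is obtained from `σ` by a single-bead down-jump. -/
def IsDownJump (σ τ : Config L) : Prop :=
  ∃ x y : Pos L, y ≠ x ∧ DownPath L σ x y τ

/-! ### Auxiliary development -/

section Aux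

open Finset

variable {L : ℕ}

/-- Gate for an up-move into position `y`. -/
def Gp (σ : Config L) (y : Pos L) : Prop := (y, 2) ∈ σ ∧ (y - (1, 0), 1) ∈ σ

/-- Gate for a down-move into position `y`. -/
def Gm (σ : Config L) (y : Pos L) : Prop := (y, 1) ∈ σ ∧ (y - (0, 1), 2) ∈ σ

/-- White-vertex uniqueness condition. -/
def Wcond (σ : Config L) : Prop := ∀ x : Pos L, ∃! d : Fin 3, (x, d) ∈ σ

lemma Wcond.eq {σ : Config L} (hW : Wcond σ) {x : Pos L} {d d' : Fin 3}
    (h : (x, d) ∈ σ) (h' : (x, d') ∈ σ) : d = d' := by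
  obtain ⟨e, he, hu⟩ := hW x
  rw [hu d h, hu d' h']

lemma natCast_zmod_ne {n : ℕ} (hL : 3 ≤ L) (h1 : 1 ≤ n) (h2 : n < L) : (n : ZMod L) ≠ 0 := by
  rw [Ne, ZMod.natCast_eq_zero_iff]
  intro hdvd
  exact absurd (Nat.le_of_dvd h1 hdvd) (by omega)

lemma nsmul_u (n : ℕ) : n • u L = ((n : ZMod L), -(n : ZMod L)) := by
  show (n • (1 : ZMod L), n • (-1 : ZMod L)) = _
  simp [nsmul_eq_mul]

lemma zsmul_u (k : ℤ) : k • u L = ((k : ZMod L), -(k : ZMod L)) := by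
  show (k • (1 : ZMod L), k • (-1 : ZMod L)) = _
  simp [zsmul_eq_mul]

lemma nsmul_u_ne_zero (hL : 3 ≤ L) {n : ℕ} (h1 : 1 ≤ n) (h2 : n < L) : n • u L ≠ 0 := by
  rw [nsmul_u, Ne, Prod.ext_iff]
  rintro ⟨h, -⟩
  exact natCast_zmod_ne hL h1 h2 h

lemma nsmul_u_inj (hL : 3 ≤ L) {n m : ℕ} (hn : n < L) (hm : m < L)
    (h : n • u L = m • u L) : n = m := by
  rw [nsmul_u, nsmul_u, Prod.ext_iff] at h
  have hc : (n : ZMod L) = (m : ZMod L) := h.1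
  haveI : NeZero L := ⟨by omega⟩
  have hc2 := (ZMod.natCast_eq_natCast_iff' n m L).mp hc
  rwa [Nat.mod_eq_of_lt hn, Nat.mod_eq_of_lt hm] at hc2

lemma L_nsmul_u : L • u L = 0 := by
  rw [nsmul_u]
  simp [ZMod.natCast_self]

lemma u_ne_zero (hL : 3 ≤ L) : u L ≠ 0 := by
  have := nsmul_u_ne_zero hL (n := 1) le_rfl (by omega)
  simpa using this

lemma one_zmod_ne_zero (hL : 3 ≤ L) : (1 : ZMod L) ≠ 0 := by
  have := natCast_zmod_ne (n := 1) hL le_rfl (by omega)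
  simpa using this

lemma mem_lowTriple {e : Edge L} {x : Pos L} :
    e ∈ lowTriple L x ↔ e = (x, 0) ∨ e = (x + u L, 2) ∨ e = (x - (0, 1), 1) := by
  simp [lowTriple]

lemma mem_highTriple {e : Edge L} {x : Pos L} :
    e ∈ highTriple L x ↔ e = (x, 1) ∨ e = (x + u L, 0) ∨ e = (x - (0, 1), 2) := by
  simp [highTriple]

lemma mem_upMove {e : Edge L} {σ : Config L} {x : Pos L} :
    e ∈ upMove L σ x ↔ (e ∈ σ ∧ e ∉ lowTriple L x) ∨ e ∈ highTriple L x := by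
  simp [upMove, Finset.mem_union, Finset.mem_sdiff]

lemma mem_downMove {e : Edge L} {σ : Config L} {x : Pos L} :
    e ∈ downMove L σ x ↔ (e ∈ σ ∧ e ∉ highTriple L (x - u L)) ∨ e ∈ lowTriple L (x - u L) := by
  simp [downMove, Finset.mem_union, Finset.mem_sdiff]

lemma canUp_iff {σ : Config L} {x : Pos L} :
    CanUp L σ x ↔ (x, 0) ∈ σ ∧ Gp σ (x + u L) := by
  constructor
  · intro h
    refine ⟨h (by simp [mem_lowTriple]), h (by simp [mem_lowTriple]), ?_⟩
    have : (x - (0,1), 1) ∈ σ := h (by simp [mem_lowTriple])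
    have hxy : x + u L - (1, 0) = x - (0, 1) := by
      show x + (1, -1) - (1,0) = _
      rw [Prod.ext_iff]
      constructor <;> simp <;> ring
    rwa [hxy]
  · rintro ⟨h0, h2, h1⟩
    intro e he
    rw [mem_lowTriple] at he
    rcases he with rfl | rfl | rfl
    · exact h0
    · exact h2
    · have hxy : x + u L - (1, 0) = x - (0, 1) := by
        show x + (1, -1) - (1,0) = _
        rw [Prod.ext_iff]
        constructor <;> simp <;> ring
      rwa [hxy] at h1

lemma canDown_iff {σ : Config L} {x : Pos L} :
    CanDown L σ x ↔ (x, 0) ∈ σ ∧ Gm σ (x - u L) := by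
  have hxy : x - u L - (0, 1) = x - u L - (0, 1) := rfl
  constructor
  · intro h
    have h1 : (x - u L, 1) ∈ σ := h (by simp [mem_highTriple])
    have h0 : (x - u L + u L, 0) ∈ σ := h (by simp [mem_highTriple])
    have h2 : (x - u L - (0,1), 2) ∈ σ := h (by simp [mem_highTriple])
    rw [sub_add_cancel] at h0
    exact ⟨h0, h1, h2⟩
  · rintro ⟨h0, h1, h2⟩
    intro e he
    rw [mem_highTriple] at he
    rcases he with rfl | rfl | rfl
    · exact h1
    · rwa [sub_add_cancel]
    · exact h2

end Aux
section Aux2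

open Finset

variable {L : ℕ}

lemma pos01_ne_zero (hL : 3 ≤ L) : ((0, 1) : Pos L) ≠ 0 := by
  intro h
  rw [Prod.ext_iff] at h
  exact one_zmod_ne_zero hL h.2

lemma pos10_ne_zero (hL : 3 ≤ L) : ((1, 0) : Pos L) ≠ 0 := by
  intro h
  rw [Prod.ext_iff] at h
  exact one_zmod_ne_zero hL h.1

lemma u_add_01 : u L + (0, 1) = ((1 : ZMod L), (0 : ZMod L)) := by
  show ((1 : ZMod L) + 0, (-1 : ZMod L) + 1) = _
  norm_num

lemma add_u_ne (hL : 3 ≤ L) (x : Pos L) : x + u L ≠ x := by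
  rw [Ne, add_eq_left]
  exact u_ne_zero hL

lemma sub01_ne (hL : 3 ≤ L) (x : Pos L) : x - (0, 1) ≠ x :=
  fun hh => pos01_ne_zero hL (sub_eq_self.mp hh)

lemma sub_u_ne (hL : 3 ≤ L) (x : Pos L) : x - u L ≠ x :=
  fun hh => u_ne_zero hL (sub_eq_self.mp hh)

lemma addu_ne_sub01 (hL : 3 ≤ L) (x : Pos L) : x + u L ≠ x - (0, 1) := by
  intro h
  have h2 : u L + (0,1) = 0 := by
    have h3 := sub_eq_zero.mpr h
    rw [show x + u L - (x - (0,1)) = u L + (0,1) by abel] at h3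
    exact h3
  rw [u_add_01] at h2
  exact pos10_ne_zero hL h2

lemma subu_sub01_ne (hL : 3 ≤ L) (x : Pos L) : x - u L - (0, 1) ≠ x := by
  intro h
  have h3 : x - (u L + (0,1)) = x := by
    rw [show x - (u L + (0,1)) = x - u L - (0,1) from by abel]; exact h
  have h4 := sub_eq_self.mp h3
  rw [u_add_01] at h4
  exact pos10_ne_zero hL h4

lemma fst_ne_elim {z w : Pos L} {d d' : Fin 3} (h : z ≠ w) (he : (z, d) = (w, d')) : False :=
  h (Prod.ext_iff.mp he).1

lemma Wcond.upMove {σ : Config L} {x : Pos L} (hL : 3 ≤ L) (hW : Wcond σ)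
    (h : CanUp L σ x) : Wcond (upMove L σ x) := by
  obtain ⟨h0, hg2, hg1'⟩ := canUp_iff.mp h
  have hxy : x + u L - (1, 0) = x - (0, 1) := by
    show x + (1, -1) - (1,0) = _
    rw [Prod.ext_iff]; constructor <;> simp <;> ring
  have hg1 : (x - (0,1), 1) ∈ σ := by rwa [hxy] at hg1'
  intro z
  by_cases hz0 : z = x
  · subst hz0
    refine ⟨1, mem_upMove.mpr (Or.inr (mem_highTriple.mpr (Or.inl rfl))), ?_⟩
    intro d' hd'
    rcases mem_upMove.mp hd' with ⟨hmem, hnot⟩ | hmem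
    · have hd0 : d' = 0 := hW.eq hmem h0
      subst hd0
      exact absurd (mem_lowTriple.mpr (Or.inl rfl)) hnot
    · rcases mem_highTriple.mp hmem with he | he | he
      · exact (Prod.ext_iff.mp he).2
      · exact absurd he (fun he => fst_ne_elim (Ne.symm (add_u_ne hL z)) he)
      · exact absurd he (fun he => fst_ne_elim (Ne.symm (sub01_ne hL z)) he)
  · by_cases hz1 : z = x + u L
    · subst hz1
      refine ⟨0, mem_upMove.mpr (Or.inr (mem_highTriple.mpr (Or.inr (Or.inl rfl)))), ?_⟩
      intro d' hd'
      rcases mem_upMove.mp hd' with ⟨hmem, hnot⟩ | hmem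
      · have hd2 : d' = 2 := hW.eq hmem hg2
        subst hd2
        exact absurd (mem_lowTriple.mpr (Or.inr (Or.inl rfl))) hnot
      · rcases mem_highTriple.mp hmem with he | he | he
        · exact absurd he (fun he => fst_ne_elim (add_u_ne hL x) he)
        · exact (Prod.ext_iff.mp he).2
        · exact absurd he (fun he => fst_ne_elim (addu_ne_sub01 hL x) he)
    · by_cases hz2 : z = x - (0, 1)
      · subst hz2
        refine ⟨2, mem_upMove.mpr (Or.inr (mem_highTriple.mpr (Or.inr (Or.inr rfl)))), ?_⟩
        intro d' hd'
        rcases mem_upMove.mp hd' with ⟨hmem, hnot⟩ | hmem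
        · have hd1 : d' = 1 := hW.eq hmem hg1
          subst hd1
          exact absurd (mem_lowTriple.mpr (Or.inr (Or.inr rfl))) hnot
        · rcases mem_highTriple.mp hmem with he | he | he
          · exact absurd he (fun he => fst_ne_elim (sub01_ne hL x) he)
          · exact absurd he (fun he => fst_ne_elim (Ne.symm (addu_ne_sub01 hL x)) he)
          · exact (Prod.ext_iff.mp he).2
      · obtain ⟨d, hd, hdu⟩ := hW z
        refine ⟨d, mem_upMove.mpr (Or.inl ⟨hd, ?_⟩), ?_⟩
        · intro hmem
          rcases mem_lowTriple.mp hmem with he | he | he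
          · exact fst_ne_elim hz0 he
          · exact fst_ne_elim hz1 he
          · exact fst_ne_elim hz2 he
        · intro d' hd'
          rcases mem_upMove.mp hd' with ⟨hmem, -⟩ | hmem
          · exact hdu d' hmem
          · rcases mem_highTriple.mp hmem with he | he | he
            · exact absurd he (fun he => fst_ne_elim hz0 he)
            · exact absurd he (fun he => fst_ne_elim hz1 he)
            · exact absurd he (fun he => fst_ne_elim hz2 he)

lemma Wcond.downMove {σ : Config L} {x : Pos L} (hL : 3 ≤ L) (hW : Wcond σ)
    (h : CanDown L σ x) : Wcond (downMove L σ x) := by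
  obtain ⟨h0, hg1, hg2⟩ : (x,0) ∈ σ ∧ (x - u L, 1) ∈ σ ∧ (x - u L - (0,1), 2) ∈ σ := by
    obtain ⟨a, b, c⟩ := canDown_iff.mp h
    exact ⟨a, b, c⟩
  have n7 : x - u L + u L = x := sub_add_cancel x (u L)
  have n4 : x - u L ≠ x := sub_u_ne hL x
  have n5 : x - u L - (0,1) ≠ x - u L := sub01_ne hL _
  have n6 : x - u L - (0,1) ≠ x := subu_sub01_ne hL x
  intro z
  by_cases hz0 : z = x - u L
  · subst hz0
    refine ⟨0, mem_downMove.mpr (Or.inr (mem_lowTriple.mpr (Or.inl rfl))), ?_⟩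
    intro d' hd'
    rcases mem_downMove.mp hd' with ⟨hmem, hnot⟩ | hmem
    · have hd1 : d' = 1 := hW.eq hmem hg1
      subst hd1
      exact absurd (mem_highTriple.mpr (Or.inl rfl)) hnot
    · rcases mem_lowTriple.mp hmem with he | he | he
      · exact (Prod.ext_iff.mp he).2
      · rw [n7] at he
        exact absurd he (fun he => fst_ne_elim n4 he)
      · exact absurd he (fun he => fst_ne_elim (Ne.symm n5) he)
  · by_cases hz1 : z = x
    · subst hz1
      refine ⟨2, mem_downMove.mpr (Or.inr (mem_lowTriple.mpr (Or.inr (Or.inl (by rw [n7]))))), ?_⟩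
      intro d' hd'
      rcases mem_downMove.mp hd' with ⟨hmem, hnot⟩ | hmem
      · have hd0 : d' = 0 := hW.eq hmem h0
        subst hd0
        refine absurd (mem_highTriple.mpr (Or.inr (Or.inl (by rw [n7])))) hnot
      · rcases mem_lowTriple.mp hmem with he | he | he
        · exact absurd he (fun he => fst_ne_elim (Ne.symm n4) he)
        · rw [n7] at he
          exact (Prod.ext_iff.mp he).2
        · exact absurd he (fun he => fst_ne_elim (Ne.symm n6) he)
    · by_cases hz2 : z = x - u L - (0, 1)
      · subst hz2
        refine ⟨1, mem_downMove.mpr (Or.inr (mem_lowTriple.mpr (Or.inr (Or.inr rfl)))), ?_⟩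
        intro d' hd'
        rcases mem_downMove.mp hd' with ⟨hmem, hnot⟩ | hmem
        · have hd2 : d' = 2 := hW.eq hmem hg2
          subst hd2
          exact absurd (mem_highTriple.mpr (Or.inr (Or.inr rfl))) hnot
        · rcases mem_lowTriple.mp hmem with he | he | he
          · exact absurd he (fun he => fst_ne_elim n5 he)
          · rw [n7] at he
            exact absurd he (fun he => fst_ne_elim n6 he)
          · exact (Prod.ext_iff.mp he).2
      · obtain ⟨d, hd, hdu⟩ := hW z
        have hz1' : z ≠ x - u L + u L := by rw [n7]; exact hz1
        refine ⟨d, mem_downMove.mpr (Or.inl ⟨hd, ?_⟩), ?_⟩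
        · intro hmem
          rcases mem_highTriple.mp hmem with he | he | he
          · exact fst_ne_elim hz0 he
          · exact fst_ne_elim hz1' he
          · exact fst_ne_elim hz2 he
        · intro d' hd'
          rcases mem_downMove.mp hd' with ⟨hmem, -⟩ | hmem
          · exact hdu d' hmem
          · rcases mem_lowTriple.mp hmem with he | he | he
            · exact absurd he (fun he => fst_ne_elim hz0 he)
            · exact absurd he (fun he => fst_ne_elim hz1' he)
            · exact absurd he (fun he => fst_ne_elim hz2 he)

end Aux2
section Aux3

open Finset

variable {L : ℕ}

lemma natCast_inj_lt {n m : ℕ} (hL : 3 ≤ L) (hn : n < L) (hm : m < L)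
    (h : (n : ZMod L) = m) : n = m := by
  haveI : NeZero L := ⟨by omega⟩
  have hc2 := (ZMod.natCast_eq_natCast_iff' n m L).mp h
  rwa [Nat.mod_eq_of_lt hn, Nat.mod_eq_of_lt hm] at hc2

lemma mem_upMove_far {σ : Config L} {x z : Pos L} {d : Fin 3}
    (hz0 : z ≠ x) (hz1 : z ≠ x + u L) (hz2 : z ≠ x - (0,1)) :
    (z, d) ∈ upMove L σ x ↔ (z, d) ∈ σ := by
  rw [mem_upMove]
  constructor
  · rintro (⟨h, -⟩ | hmem)
    · exact h
    · rcases mem_highTriple.mp hmem with he | he | he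
      · exact absurd he (fun he => fst_ne_elim hz0 he)
      · exact absurd he (fun he => fst_ne_elim hz1 he)
      · exact absurd he (fun he => fst_ne_elim hz2 he)
  · intro h
    refine Or.inl ⟨h, fun hmem => ?_⟩
    rcases mem_lowTriple.mp hmem with he | he | he
    · exact fst_ne_elim hz0 he
    · exact fst_ne_elim hz1 he
    · exact fst_ne_elim hz2 he

lemma mem_downMove_far {σ : Config L} {x z : Pos L} {d : Fin 3}
    (hz0 : z ≠ x - u L) (hz1 : z ≠ x) (hz2 : z ≠ x - u L - (0,1)) :
    (z, d) ∈ downMove L σ x ↔ (z, d) ∈ σ := by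
  have hz1' : z ≠ x - u L + u L := by rw [sub_add_cancel]; exact hz1
  rw [mem_downMove]
  constructor
  · rintro (⟨h, -⟩ | hmem)
    · exact h
    · rcases mem_lowTriple.mp hmem with he | he | he
      · exact absurd he (fun he => fst_ne_elim hz0 he)
      · exact absurd he (fun he => fst_ne_elim hz1' he)
      · exact absurd he (fun he => fst_ne_elim hz2 he)
  · intro h
    refine Or.inl ⟨h, fun hmem => ?_⟩
    rcases mem_highTriple.mp hmem with he | he | he
    · exact fst_ne_elim hz0 he
    · exact fst_ne_elim hz1' he
    · exact fst_ne_elim hz2 he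

section consts
variable (hL : 3 ≤ L)
variable {k : ℕ} (h2 : 2 ≤ k) (hk : k ≤ L - 1)
include hL h2 hk

lemma ksmul_ne_u : k • u L ≠ u L := by
  rw [nsmul_u, Ne, Prod.ext_iff]
  rintro ⟨ha, -⟩
  have : k = 1 := natCast_inj_lt hL (by omega) (by omega) (by simpa [u] using ha)
  omega

lemma ksmul_ne_neg01 : k • u L ≠ -(0, 1) := by
  rw [nsmul_u, Ne, Prod.ext_iff]
  rintro ⟨ha, -⟩
  have h0 : (k : ZMod L) = 0 := by simpa using ha
  exact natCast_zmod_ne hL (by omega) (by omega) h0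

lemma ksmul_ne_10 : k • u L ≠ ((1 : ZMod L), (0 : ZMod L)) := by
  rw [nsmul_u, Ne, Prod.ext_iff]
  rintro ⟨-, hb⟩
  have h0 : (k : ZMod L) = 0 := neg_eq_zero.mp (by simpa using hb)
  exact natCast_zmod_ne hL (by omega) (by omega) h0

lemma ksmul_ne_u_add_10 : k • u L ≠ u L + ((1 : ZMod L), (0 : ZMod L)) := by
  rw [nsmul_u, Ne, Prod.ext_iff]
  rintro ⟨-, hb⟩
  have hb' : -(k : ZMod L) = -1 := by
    have heq : u L + ((1:ZMod L), (0:ZMod L)) = ((2 : ZMod L), (-1 : ZMod L)) := by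
      show ((1 : ZMod L) + 1, (-1 : ZMod L) + 0) = _
      norm_num
    rw [heq] at hb
    simpa using hb
  have hk1 : (k : ZMod L) = 1 := neg_injective hb'
  have : k = 1 := natCast_inj_lt hL (by omega) (by omega) (by simpa using hk1)
  omega

lemma ksmul_ne_u_sub_01 : k • u L ≠ u L - ((0 : ZMod L), (1 : ZMod L)) := by
  rw [nsmul_u, Ne, Prod.ext_iff]
  rintro ⟨ha, -⟩
  have ha' : (k : ZMod L) = 1 := by
    have : u L - ((0:ZMod L), (1:ZMod L)) = ((1 : ZMod L), (-2 : ZMod L)) := by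
      show ((1 : ZMod L) - 0, (-1 : ZMod L) - 1) = _
      norm_num
    rw [this] at ha
    simpa using ha
  have : k = 1 := natCast_inj_lt hL (by omega) (by omega) (by simpa using ha')
  omega

end consts

lemma Gp_upMove_far {σ : Config L} {x : Pos L} {k : ℕ} (hL : 3 ≤ L) (h2 : 2 ≤ k) (hk : k ≤ L - 1) :
    Gp (upMove L σ x) (x + k • u L) ↔ Gp σ (x + k • u L) := by
  have c1 := nsmul_u_ne_zero hL (n := k) (by omega) (by omega)
  have hy0 : x + k • u L ≠ x := fun hh => c1 (add_eq_left.mp hh)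
  have hy1 : x + k • u L ≠ x + u L := fun hh => ksmul_ne_u hL h2 hk (add_left_cancel hh)
  have hy2 : x + k • u L ≠ x - (0,1) := by
    rw [sub_eq_add_neg]
    exact fun hh => ksmul_ne_neg01 hL h2 hk (add_left_cancel hh)
  have hw : x + k • u L - (1, 0) = x + (k • u L - ((1:ZMod L), (0:ZMod L))) := by
    rw [add_sub_assoc]
  have hw0 : x + k • u L - (1, 0) ≠ x := by
    rw [hw]
    intro hh
    exact ksmul_ne_10 hL h2 hk (by rw [sub_eq_zero.mp (add_eq_left.mp hh)])
  have hw1 : x + k • u L - (1, 0) ≠ x + u L := by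
    rw [hw]
    intro hh
    have h3 := add_left_cancel hh
    exact ksmul_ne_u_add_10 hL h2 hk (by rw [sub_eq_iff_eq_add.mp h3])
  have hw2 : x + k • u L - (1, 0) ≠ x - (0,1) := by
    rw [hw, sub_eq_add_neg x]
    intro hh
    have h3 := add_left_cancel hh
    have h4 : k • u L = ((1:ZMod L),(0:ZMod L)) + -((0:ZMod L),(1:ZMod L)) := sub_eq_iff_eq_add'.mp h3
    apply ksmul_ne_u hL h2 hk
    rw [h4]
    show ((1:ZMod L) + -0, (0:ZMod L) + -1) = ((1:ZMod L), (-1:ZMod L))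
    norm_num
  unfold Gp
  rw [mem_upMove_far hy0 hy1 hy2, mem_upMove_far hw0 hw1 hw2]

lemma Gm_downMove_far {σ : Config L} {x : Pos L} {k : ℕ} (hL : 3 ≤ L) (h2 : 2 ≤ k) (hk : k ≤ L - 1) :
    Gm (downMove L σ x) (x - k • u L) ↔ Gm σ (x - k • u L) := by
  have c1 := nsmul_u_ne_zero hL (n := k) (by omega) (by omega)
  have hy0 : x - k • u L ≠ x - u L := by
    intro hh
    exact ksmul_ne_u hL h2 hk (sub_right_injective hh)
  have hy1 : x - k • u L ≠ x := fun hh => c1 (sub_eq_self.mp hh)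
  have hy2 : x - k • u L ≠ x - u L - (0,1) := by
    intro hh
    rw [show x - u L - (0,1) = x - (u L + (0,1)) from by abel] at hh
    have h3 := sub_right_injective hh
    apply ksmul_ne_10 hL h2 hk
    rw [h3, u_add_01]
  have hw0 : x - k • u L - (0,1) ≠ x - u L := by
    intro hh
    rw [show x - k • u L - (0,1) = x - (k • u L + (0,1)) from by abel] at hh
    have h3 := sub_right_injective hh
    exact ksmul_ne_u_sub_01 hL h2 hk (eq_sub_of_add_eq h3)
  have hw1 : x - k • u L - (0,1) ≠ x := by
    intro hh
    rw [show x - k • u L - (0,1) = x - (k • u L + (0,1)) from by abel] at hh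
    have h3 := sub_eq_self.mp hh
    apply ksmul_ne_neg01 hL h2 hk
    rw [eq_neg_of_add_eq_zero_left h3]
  have hw2 : x - k • u L - (0,1) ≠ x - u L - (0,1) := by
    intro hh
    have h3 : x - k • u L = x - u L := by
      have := sub_left_injective hh
      exact this
    exact hy0 h3
  unfold Gm
  rw [mem_downMove_far hy0 hy1 hy2, mem_downMove_far hw0 hw1 hw2]

end Aux3
section Aux4

open Finset

variable {L : ℕ}

lemma add_u_add_smul (x : Pos L) (n : ℕ) : (x + u L) + n • u L = x + (n + 1) • u L := by
  rw [succ_nsmul]; abel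

lemma sub_u_sub_smul (x : Pos L) (n : ℕ) : (x - u L) - n • u L = x - (n + 1) • u L := by
  rw [succ_nsmul]; abel

lemma add_L_smul (x : Pos L) : x + L • u L = x := by
  rw [L_nsmul_u, add_zero]

lemma sub_L_smul (x : Pos L) : x - L • u L = x := by
  rw [L_nsmul_u, sub_zero]

lemma high_disjoint {σ : Config L} {x : Pos L} (hW : Wcond σ) (h : CanUp L σ x) :
    ∀ e ∈ highTriple L x, e ∉ σ := by
  obtain ⟨h0, hg2, hg1'⟩ := canUp_iff.mp h
  intro e he hmem
  rcases mem_highTriple.mp he with rfl | rfl | rfl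
  · exact absurd (hW.eq hmem h0) (by decide)
  · exact absurd (hW.eq hmem hg2) (by decide)
  · have hxy : x + u L - (1, 0) = x - (0, 1) := by
      show x + (1, -1) - (1,0) = _
      rw [Prod.ext_iff]; constructor <;> simp <;> ring
    rw [hxy] at hg1'
    exact absurd (hW.eq hmem hg1') (by decide)

lemma low_disjoint {σ : Config L} {x : Pos L} (hW : Wcond σ) (h : CanDown L σ x) :
    ∀ e ∈ lowTriple L (x - u L), e ∉ σ := by
  obtain ⟨h0, hg1, hg2⟩ : (x,0) ∈ σ ∧ (x - u L, 1) ∈ σ ∧ (x - u L - (0,1), 2) ∈ σ := by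
    obtain ⟨a, b, c⟩ := canDown_iff.mp h
    exact ⟨a, b, c⟩
  intro e he hmem
  rcases mem_lowTriple.mp he with rfl | rfl | rfl
  · exact absurd (hW.eq hmem hg1) (by decide)
  · rw [sub_add_cancel] at hmem
    exact absurd (hW.eq hmem h0) (by decide)
  · exact absurd (hW.eq hmem hg2) (by decide)

lemma down_up {σ : Config L} {x : Pos L} (hW : Wcond σ) (h : CanUp L σ x) :
    CanDown L (upMove L σ x) (x + u L) ∧ downMove L (upMove L σ x) (x + u L) = σ := by
  have hxx : x + u L - u L = x := add_sub_cancel_right x (u L)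
  constructor
  · intro e he
    rw [hxx] at he
    exact mem_upMove.mpr (Or.inr he)
  · unfold downMove
    rw [hxx]
    ext e
    simp only [Finset.mem_union, Finset.mem_sdiff, mem_upMove]
    constructor
    · rintro (⟨⟨he, -⟩ | he, hne⟩ | he)
      · exact he
      · exact absurd he hne
      · exact h he
    · intro he
      by_cases hlo : e ∈ lowTriple L x
      · exact Or.inr hlo
      · exact Or.inl ⟨Or.inl ⟨he, hlo⟩, fun hhi => high_disjoint hW h e hhi he⟩

lemma up_down {σ : Config L} {x : Pos L} (hW : Wcond σ) (h : CanDown L σ x) :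
    CanUp L (downMove L σ x) (x - u L) ∧ upMove L (downMove L σ x) (x - u L) = σ := by
  constructor
  · intro e he
    exact mem_downMove.mpr (Or.inr he)
  · unfold upMove
    ext e
    simp only [Finset.mem_union, Finset.mem_sdiff, mem_downMove]
    constructor
    · rintro (⟨⟨he, -⟩ | he, hne⟩ | he)
      · exact he
      · exact absurd he hne
      · exact h he
    · intro he
      by_cases hhi : e ∈ highTriple L (x - u L)
      · exact Or.inr hhi
      · exact Or.inl ⟨Or.inl ⟨he, hhi⟩, fun hlo => low_disjoint hW h e hlo he⟩

lemma upPathN_w (hL : 3 ≤ L) {σ τ : Config L} {x : Pos L} {n : ℕ}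
    (hp : UpPathN L σ x n τ) (hW : Wcond σ) : Wcond τ := by
  induction hp with
  | refl => exact hW
  | step hc _ ih => exact ih (hW.upMove hL hc)

lemma downPathN_w (hL : 3 ≤ L) {σ τ : Config L} {x : Pos L} {n : ℕ}
    (hp : DownPathN L σ x n τ) (hW : Wcond σ) : Wcond τ := by
  induction hp with
  | refl => exact hW
  | step hc _ ih => exact ih (hW.downMove hL hc)

lemma upPathN_unique {σ τ₁ τ₂ : Config L} {x : Pos L} {n : ℕ}
    (h1 : UpPathN L σ x n τ₁) (h2 : UpPathN L σ x n τ₂) : τ₁ = τ₂ := by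
  induction h1 with
  | refl => cases h2; rfl
  | step hc p ih =>
    cases h2 with
    | step hc' p' => exact ih p'

lemma downPathN_unique {σ τ₁ τ₂ : Config L} {x : Pos L} {n : ℕ}
    (h1 : DownPathN L σ x n τ₁) (h2 : DownPathN L σ x n τ₂) : τ₁ = τ₂ := by
  induction h1 with
  | refl => cases h2; rfl
  | step hc p ih =>
    cases h2 with
    | step hc' p' => exact ih p'

lemma upPathN_snoc {σ τ : Config L} {x : Pos L} {n : ℕ}
    (hp : UpPathN L σ x n τ) (hc : CanUp L τ (x + n • u L)) :
    UpPathN L σ x (n + 1) (upMove L τ (x + n • u L)) := by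
  induction hp with
  | refl σ' x' =>
    have h0 : x' + 0 • u L = x' := by simp
    rw [h0] at hc ⊢
    exact UpPathN.step hc (UpPathN.refl _ _)
  | @step σ' x' n' τ' hc' p ih =>
    have harr : (x' + u L) + n' • u L = x' + (n' + 1) • u L := add_u_add_smul x' n'
    rw [← harr] at hc
    exact UpPathN.step hc' (harr ▸ ih hc)

lemma downPathN_snoc {σ τ : Config L} {x : Pos L} {n : ℕ}
    (hp : DownPathN L σ x n τ) (hc : CanDown L τ (x - n • u L)) :
    DownPathN L σ x (n + 1) (downMove L τ (x - n • u L)) := by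
  induction hp with
  | refl σ' x' =>
    have h0 : x' - 0 • u L = x' := by simp
    rw [h0] at hc ⊢
    exact DownPathN.step hc (DownPathN.refl _ _)
  | @step σ' x' n' τ' hc' p ih =>
    have harr : (x' - u L) - n' • u L = x' - (n' + 1) • u L := sub_u_sub_smul x' n'
    rw [← harr] at hc
    exact DownPathN.step hc' (harr ▸ ih hc)

lemma upPathN_rev (hL : 3 ≤ L) {σ τ : Config L} {x : Pos L} {n : ℕ}
    (hp : UpPathN L σ x n τ) (hW : Wcond σ) : DownPathN L τ (x + n • u L) n σ := by
  induction hp with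
  | refl σ' x' => simpa using DownPathN.refl σ' x'
  | @step σ' x' n' τ' hc p ih =>
    have hW1 : Wcond (upMove L σ' x') := hW.upMove hL hc
    have hd := ih hW1
    obtain ⟨hcd, heq⟩ := down_up hW hc
    have harr : (x' + u L) + n' • u L = x' + (n' + 1) • u L := add_u_add_smul x' n'
    have hsub : (x' + u L) + n' • u L - n' • u L = x' + u L := add_sub_cancel_right _ _
    have := downPathN_snoc hd (by rw [hsub]; exact hcd)
    rw [hsub, heq] at this
    rw [← harr]
    exact this

lemma downPathN_rev (hL : 3 ≤ L) {σ τ : Config L} {x : Pos L} {n : ℕ}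
    (hp : DownPathN L σ x n τ) (hW : Wcond σ) : UpPathN L τ (x - n • u L) n σ := by
  induction hp with
  | refl σ' x' => simpa using UpPathN.refl σ' x'
  | @step σ' x' n' τ' hc p ih =>
    have hW1 : Wcond (downMove L σ' x') := hW.downMove hL hc
    have hd := ih hW1
    obtain ⟨hcu, heq⟩ := up_down hW hc
    have harr : (x' - u L) - n' • u L = x' - (n' + 1) • u L := sub_u_sub_smul x' n'
    have hsub : (x' - u L) - n' • u L + n' • u L = x' - u L := sub_add_cancel _ _
    have := upPathN_snoc hd (by rw [hsub]; exact hcu)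
    rw [hsub, heq] at this
    rw [← harr]
    exact this

lemma upPathN_trans {σ τ ρ : Config L} {x : Pos L} {a b : ℕ}
    (h1 : UpPathN L σ x a τ) (h2 : UpPathN L τ (x + a • u L) b ρ) :
    UpPathN L σ x (a + b) ρ := by
  induction h1 with
  | refl σ' x' => simpa using h2
  | @step σ' x' n' τ' hc p ih =>
    have harr : (x' + u L) + n' • u L = x' + (n' + 1) • u L := add_u_add_smul x' n'
    rw [← harr] at h2
    have := ih h2
    rw [show n' + 1 + b = n' + b + 1 from by omega]
    exact UpPathN.step hc this

lemma downPathN_trans {σ τ ρ : Config L} {x : Pos L} {a b : ℕ}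
    (h1 : DownPathN L σ x a τ) (h2 : DownPathN L τ (x - a • u L) b ρ) :
    DownPathN L σ x (a + b) ρ := by
  induction h1 with
  | refl σ' x' => simpa using h2
  | @step σ' x' n' τ' hc p ih =>
    have harr : (x' - u L) - n' • u L = x' - (n' + 1) • u L := sub_u_sub_smul x' n'
    rw [← harr] at h2
    have := ih h2
    rw [show n' + 1 + b = n' + b + 1 from by omega]
    exact DownPathN.step hc this

lemma upPathN_gates (hL : 3 ≤ L) {σ τ : Config L} {x : Pos L} {n : ℕ}
    (hp : UpPathN L σ x n τ) (hW : Wcond σ) :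
    ∀ k, 1 ≤ k → k ≤ n → Gp σ (x + k • u L) := by
  induction hp with
  | refl => intro k hk1 hk2; omega
  | @step σ' x' n' τ' hc p ih =>
    intro k hk1 hk2
    have hW1 : Wcond (upMove L σ' x') := hW.upMove hL hc
    have ihg := ih hW1
    -- first, n' ≤ L - 2
    have hn' : n' ≤ L - 2 := by
      by_contra hcon
      push_neg at hcon
      have hL1 : L - 1 ≤ n' := by omega
      have hg := ihg (L - 1) (by omega) hL1
      rw [add_u_add_smul, show L - 1 + 1 = L from by omega, add_L_smul] at hg
      have h1 : (x', 1) ∈ upMove L σ' x' := mem_upMove.mpr (Or.inr (mem_highTriple.mpr (Or.inl rfl)))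
      exact absurd (hW1.eq hg.1 h1) (by decide)
    rcases Nat.eq_or_lt_of_le hk1 with h1 | h1
    · rw [← h1]
      have := (canUp_iff.mp hc).2
      simpa using this
    · have hk2' : k ≤ L - 1 := by omega
      have hg := ihg (k - 1) (by omega) (by omega)
      rw [add_u_add_smul, show k - 1 + 1 = k from by omega] at hg
      exact (Gp_upMove_far hL (by omega) hk2').mp hg

lemma downPathN_gates (hL : 3 ≤ L) {σ τ : Config L} {x : Pos L} {n : ℕ}
    (hp : DownPathN L σ x n τ) (hW : Wcond σ) :
    ∀ k, 1 ≤ k → k ≤ n → Gm σ (x - k • u L) := by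
  induction hp with
  | refl => intro k hk1 hk2; omega
  | @step σ' x' n' τ' hc p ih =>
    intro k hk1 hk2
    have hW1 : Wcond (downMove L σ' x') := hW.downMove hL hc
    have ihg := ih hW1
    have hn' : n' ≤ L - 2 := by
      by_contra hcon
      push_neg at hcon
      have hL1 : L - 1 ≤ n' := by omega
      have hg := ihg (L - 1) (by omega) hL1
      rw [sub_u_sub_smul, show L - 1 + 1 = L from by omega, sub_L_smul] at hg
      have h1 : (x', 2) ∈ downMove L σ' x' := by
        refine mem_downMove.mpr (Or.inr (mem_lowTriple.mpr (Or.inr (Or.inl ?_))))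
        rw [sub_add_cancel]
      exact absurd (hW1.eq hg.1 h1) (by decide)
    rcases Nat.eq_or_lt_of_le hk1 with h1 | h1
    · rw [← h1]
      have := (canDown_iff.mp hc).2
      simpa using this
    · have hk2' : k ≤ L - 1 := by omega
      have hg := ihg (k - 1) (by omega) (by omega)
      rw [sub_u_sub_smul, show k - 1 + 1 = k from by omega] at hg
      exact (Gm_downMove_far hL (by omega) hk2').mp hg

lemma upPathN_canUp {σ τ : Config L} {x : Pos L} {n : ℕ}
    (hp : UpPathN L σ x (n + 1) τ) : CanUp L σ x := by
  cases hp with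
  | step hc _ => exact hc

lemma downPathN_canDown {σ τ : Config L} {x : Pos L} {n : ℕ}
    (hp : DownPathN L σ x (n + 1) τ) : CanDown L σ x := by
  cases hp with
  | step hc _ => exact hc

lemma upPathN_le (hL : 3 ≤ L) {σ τ : Config L} {x : Pos L} {n : ℕ}
    (hp : UpPathN L σ x n τ) (hW : Wcond σ) : n ≤ L - 1 := by
  by_contra hcon
  push_neg at hcon
  obtain ⟨m, rfl⟩ : ∃ m, n = m + 1 := ⟨n - 1, by omega⟩
  have hb : (x, 0) ∈ σ := (canUp_iff.mp (upPathN_canUp hp)).1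
  have hg := upPathN_gates hL hp hW L (by omega) (by omega)
  rw [add_L_smul] at hg
  exact absurd (hW.eq hg.1 hb) (by decide)

lemma downPathN_le (hL : 3 ≤ L) {σ τ : Config L} {x : Pos L} {n : ℕ}
    (hp : DownPathN L σ x n τ) (hW : Wcond σ) : n ≤ L - 1 := by
  by_contra hcon
  push_neg at hcon
  obtain ⟨m, rfl⟩ : ∃ m, n = m + 1 := ⟨n - 1, by omega⟩
  have hb : (x, 0) ∈ σ := (canDown_iff.mp (downPathN_canDown hp)).1
  have hg := downPathN_gates hL hp hW L (by omega) (by omega)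
  rw [sub_L_smul] at hg
  exact absurd (hW.eq hg.1 hb) (by decide)

lemma gates_upPathN (hL : 3 ≤ L) {σ : Config L} {x : Pos L} {n : ℕ}
    (hW : Wcond σ) (hb : (x, 0) ∈ σ)
    (hg : ∀ k, 1 ≤ k → k ≤ n → Gp σ (x + k • u L)) :
    ∃ τ, UpPathN L σ x n τ := by
  induction n generalizing σ x with
  | zero => exact ⟨σ, UpPathN.refl σ x⟩
  | succ m ih =>
    have hbound : m + 1 ≤ L - 1 := by
      by_contra hcon
      push_neg at hcon
      have := hg L (by omega) (by omega)
      rw [add_L_smul] at this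
      exact absurd (hW.eq this.1 hb) (by decide)
    have hc : CanUp L σ x := canUp_iff.mpr ⟨hb, by simpa using hg 1 (by omega) (by omega)⟩
    have hW1 : Wcond (upMove L σ x) := hW.upMove hL hc
    have hb1 : (x + u L, 0) ∈ upMove L σ x :=
      mem_upMove.mpr (Or.inr (mem_highTriple.mpr (Or.inr (Or.inl rfl))))
    have hg1 : ∀ k, 1 ≤ k → k ≤ m → Gp (upMove L σ x) ((x + u L) + k • u L) := by
      intro k hk1 hk2
      rw [add_u_add_smul]
      exact (Gp_upMove_far hL (by omega) (by omega)).mpr (hg (k+1) (by omega) (by omega))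
    obtain ⟨τ, hτ⟩ := ih hW1 hb1 hg1
    exact ⟨τ, UpPathN.step hc hτ⟩

lemma gates_downPathN (hL : 3 ≤ L) {σ : Config L} {x : Pos L} {n : ℕ}
    (hW : Wcond σ) (hb : (x, 0) ∈ σ)
    (hg : ∀ k, 1 ≤ k → k ≤ n → Gm σ (x - k • u L)) :
    ∃ τ, DownPathN L σ x n τ := by
  induction n generalizing σ x with
  | zero => exact ⟨σ, DownPathN.refl σ x⟩
  | succ m ih =>
    have hbound : m + 1 ≤ L - 1 := by
      by_contra hcon
      push_neg at hcon
      have := hg L (by omega) (by omega)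
      rw [sub_L_smul] at this
      exact absurd (hW.eq this.1 hb) (by decide)
    have hc : CanDown L σ x := canDown_iff.mpr ⟨hb, by simpa using hg 1 (by omega) (by omega)⟩
    have hW1 : Wcond (downMove L σ x) := hW.downMove hL hc
    have hb1 : (x - u L, 0) ∈ downMove L σ x :=
      mem_downMove.mpr (Or.inr (mem_lowTriple.mpr (Or.inl rfl)))
    have hg1 : ∀ k, 1 ≤ k → k ≤ m → Gm (downMove L σ x) ((x - u L) - k • u L) := by
      intro k hk1 hk2
      rw [sub_u_sub_smul]
      exact (Gm_downMove_far hL (by omega) (by omega)).mpr (hg (k+1) (by omega) (by omega))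
    obtain ⟨τ, hτ⟩ := ih hW1 hb1 hg1
    exact ⟨τ, DownPathN.step hc hτ⟩

end Aux4
section Aux5

open Finset

variable {L : ℕ}

lemma natCast_zsmul_u (n : ℕ) : ((n : ℤ) • u L) = n • u L := natCast_zsmul (u L) n

lemma mem_tshift {σ : Config L} {k : ℤ} {z : Pos L} {d : Fin 3} :
    (z, d) ∈ tshift L k σ ↔ (z - k • u L, d) ∈ σ := by
  unfold tshift
  rw [Finset.mem_image]
  constructor
  · rintro ⟨⟨w, d'⟩, he, heq⟩
    simp only [Prod.mk.injEq] at heq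
    obtain ⟨h1, h2⟩ := heq
    subst h2
    have hw : w = z - k • u L := eq_sub_of_add_eq h1
    rwa [← hw]
  · intro h
    refine ⟨(z - k • u L, d), h, ?_⟩
    simp only [Prod.mk.injEq]
    exact ⟨by abel, trivial⟩

lemma tshift_tshift (a b : ℤ) (σ : Config L) : tshift L a (tshift L b σ) = tshift L (a + b) σ := by
  ext ⟨z, d⟩
  rw [mem_tshift, mem_tshift, mem_tshift]
  congr! 2
  rw [add_zsmul]
  abel

lemma tshift_zero (σ : Config L) : tshift L 0 σ = σ := by
  ext ⟨z, d⟩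
  rw [mem_tshift]
  simp

lemma tshift_cancel (n : ℤ) (σ : Config L) : tshift L (-n) (tshift L n σ) = σ := by
  rw [tshift_tshift, neg_add_cancel, tshift_zero]

lemma tshift_eq_of_smul_eq {a b : ℤ} (h : a • u L = b • u L) (σ : Config L) :
    tshift L a σ = tshift L b σ := by
  ext ⟨z, d⟩
  rw [mem_tshift, mem_tshift, h]

lemma zsmul_mod (k : ℤ) (hL : 3 ≤ L) : k • u L = (((k % L).toNat : ℕ) : ℤ) • u L := by
  have hnn : 0 ≤ k % L := Int.emod_nonneg k (by omega : (L:ℤ) ≠ 0)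
  rw [Int.toNat_of_nonneg hnn]
  rw [zsmul_u, zsmul_u]
  have : ((k % L : ℤ) : ZMod L) = (k : ZMod L) := by
    rw [ZMod.intCast_eq_intCast_iff]
    exact Int.emod_emod_of_dvd k dvd_rfl
  rw [this]

lemma lowTriple_shift {x z : Pos L} {d : Fin 3} (k : ℤ) :
    (z, d) ∈ lowTriple L (x + k • u L) ↔ (z - k • u L, d) ∈ lowTriple L x := by
  simp only [mem_lowTriple, Prod.mk.injEq, sub_eq_iff_eq_add]
  constructor
  · rintro (⟨h1, h2⟩ | ⟨h1, h2⟩ | ⟨h1, h2⟩)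
    · exact Or.inl ⟨h1, h2⟩
    · exact Or.inr (Or.inl ⟨by rw [h1]; abel, h2⟩)
    · exact Or.inr (Or.inr ⟨by rw [h1]; abel, h2⟩)
  · rintro (⟨h1, h2⟩ | ⟨h1, h2⟩ | ⟨h1, h2⟩)
    · exact Or.inl ⟨h1, h2⟩
    · exact Or.inr (Or.inl ⟨by rw [h1]; abel, h2⟩)
    · exact Or.inr (Or.inr ⟨by rw [h1]; abel, h2⟩)

lemma highTriple_shift {x z : Pos L} {d : Fin 3} (k : ℤ) :
    (z, d) ∈ highTriple L (x + k • u L) ↔ (z - k • u L, d) ∈ highTriple L x := by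
  simp only [mem_highTriple, Prod.mk.injEq, sub_eq_iff_eq_add]
  constructor
  · rintro (⟨h1, h2⟩ | ⟨h1, h2⟩ | ⟨h1, h2⟩)
    · exact Or.inl ⟨h1, h2⟩
    · exact Or.inr (Or.inl ⟨by rw [h1]; abel, h2⟩)
    · exact Or.inr (Or.inr ⟨by rw [h1]; abel, h2⟩)
  · rintro (⟨h1, h2⟩ | ⟨h1, h2⟩ | ⟨h1, h2⟩)
    · exact Or.inl ⟨h1, h2⟩
    · exact Or.inr (Or.inl ⟨by rw [h1]; abel, h2⟩)
    · exact Or.inr (Or.inr ⟨by rw [h1]; abel, h2⟩)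

lemma canUp_tshift {σ : Config L} {x : Pos L} (k : ℤ) (h : CanUp L σ x) :
    CanUp L (tshift L k σ) (x + k • u L) := by
  intro e he
  obtain ⟨z, d⟩ := e
  rw [mem_tshift]
  exact h ((lowTriple_shift k).mp he)

lemma canDown_tshift {σ : Config L} {x : Pos L} (k : ℤ) (h : CanDown L σ x) :
    CanDown L (tshift L k σ) (x + k • u L) := by
  intro e he
  obtain ⟨z, d⟩ := e
  rw [mem_tshift]
  apply h
  have harr : x + k • u L - u L = (x - u L) + k • u L := by abel
  rw [harr] at he
  exact (highTriple_shift k).mp he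

lemma upMove_tshift {σ : Config L} {x : Pos L} (k : ℤ) :
    tshift L k (upMove L σ x) = upMove L (tshift L k σ) (x + k • u L) := by
  ext ⟨z, d⟩
  rw [mem_tshift, mem_upMove, mem_upMove, mem_tshift]
  rw [lowTriple_shift k, highTriple_shift k]

lemma downMove_tshift {σ : Config L} {x : Pos L} (k : ℤ) :
    tshift L k (downMove L σ x) = downMove L (tshift L k σ) (x + k • u L) := by
  ext ⟨z, d⟩
  have harr : x + k • u L - u L = (x - u L) + k • u L := by abel
  rw [mem_tshift, mem_downMove, mem_downMove, mem_tshift, harr]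
  rw [lowTriple_shift k, highTriple_shift k]

lemma upPathN_tshift {σ τ : Config L} {x : Pos L} {n : ℕ} (k : ℤ)
    (hp : UpPathN L σ x n τ) :
    UpPathN L (tshift L k σ) (x + k • u L) n (tshift L k τ) := by
  induction hp with
  | refl σ' x' => exact UpPathN.refl _ _
  | @step σ' x' n' τ' hc p ih =>
    refine UpPathN.step (canUp_tshift k hc) ?_
    rw [← upMove_tshift k]
    have harr : x' + k • u L + u L = (x' + u L) + k • u L := by abel
    rw [harr]
    exact ih

lemma downPathN_tshift {σ τ : Config L} {x : Pos L} {n : ℕ} (k : ℤ)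
    (hp : DownPathN L σ x n τ) :
    DownPathN L (tshift L k σ) (x + k • u L) n (tshift L k τ) := by
  induction hp with
  | refl σ' x' => exact DownPathN.refl _ _
  | @step σ' x' n' τ' hc p ih =>
    refine DownPathN.step (canDown_tshift k hc) ?_
    rw [← downMove_tshift k]
    have harr : x' + k • u L - u L = (x' - u L) + k • u L := by abel
    rw [harr]
    exact ih

end Aux5
section Aux6

open Finset

variable {L : ℕ}

lemma fin3_cases (d : Fin 3) : d = 0 ∨ d = 1 ∨ d = 2 := by revert d; decide


lemma dvec_zero : dvec L 0 = ((0 : ZMod L), (0 : ZMod L)) := rfl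
lemma dvec_one : dvec L 1 = ((1 : ZMod L), (0 : ZMod L)) := rfl
lemma dvec_two : dvec L 2 = ((0 : ZMod L), (1 : ZMod L)) := rfl

lemma add_dvec_zero (y : Pos L) : y + dvec L 0 = y := by
  rw [dvec_zero]
  show y + 0 = y
  rw [add_zero]

lemma sub10_add_dvec_one (y : Pos L) : (y - (1,0)) + dvec L 1 = y := by
  rw [dvec_one, sub_add_cancel]

lemma sub01_add_dvec_two (y : Pos L) : (y - (0,1)) + dvec L 2 = y := by
  rw [dvec_two, sub_add_cancel]

lemma isPM_black_cases {σ : Config L} (hpm : IsPM L σ) (y : Pos L) :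
    (y, 0) ∈ σ ∨ (y - (1,0), 1) ∈ σ ∨ (y - (0,1), 2) ∈ σ := by
  obtain ⟨⟨z, d⟩, ⟨hmem, hsum⟩, -⟩ := hpm.2 y
  rcases fin3_cases d with rfl | rfl | rfl
  · rw [show (z, (0:Fin 3)).1 + dvec L (z, (0:Fin 3)).2 = z from add_dvec_zero z] at hsum
    subst hsum
    exact Or.inl hmem
  · rw [show (z, (1:Fin 3)).1 + dvec L (z, (1:Fin 3)).2 = z + (1,0) from by rw [dvec_one]] at hsum
    have : z = y - (1,0) := eq_sub_of_add_eq hsum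
    subst this
    exact Or.inr (Or.inl hmem)
  · rw [show (z, (2:Fin 3)).1 + dvec L (z, (2:Fin 3)).2 = z + (0,1) from by rw [dvec_two]] at hsum
    have : z = y - (0,1) := eq_sub_of_add_eq hsum
    subst this
    exact Or.inr (Or.inr hmem)

lemma isPM_black_not01 {σ : Config L} (hpm : IsPM L σ) (y : Pos L) :
    ¬((y, 0) ∈ σ ∧ (y - (1,0), 1) ∈ σ) := by
  rintro ⟨h0, h1⟩
  obtain ⟨e, -, hu⟩ := hpm.2 y
  have e1 := hu (y, 0) ⟨h0, add_dvec_zero y⟩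
  have e2 := hu (y - (1,0), 1) ⟨h1, sub10_add_dvec_one y⟩
  have hc : (1 : Fin 3) = 0 := (Prod.ext_iff.mp (e2.trans e1.symm)).2
  exact absurd hc (by decide)

lemma isPM_black_not02 {σ : Config L} (hpm : IsPM L σ) (y : Pos L) :
    ¬((y, 0) ∈ σ ∧ (y - (0,1), 2) ∈ σ) := by
  rintro ⟨h0, h2⟩
  obtain ⟨e, -, hu⟩ := hpm.2 y
  have e1 := hu (y, 0) ⟨h0, add_dvec_zero y⟩
  have e2 := hu (y - (0,1), 2) ⟨h2, sub01_add_dvec_two y⟩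
  have hc : (2 : Fin 3) = 0 := (Prod.ext_iff.mp (e2.trans e1.symm)).2
  exact absurd hc (by decide)

lemma isPM_black_not12 {σ : Config L} (hpm : IsPM L σ) (y : Pos L) :
    ¬((y - (1,0), 1) ∈ σ ∧ (y - (0,1), 2) ∈ σ) := by
  rintro ⟨h1, h2⟩
  obtain ⟨e, -, hu⟩ := hpm.2 y
  have e1 := hu (y - (1,0), 1) ⟨h1, sub10_add_dvec_one y⟩
  have e2 := hu (y - (0,1), 2) ⟨h2, sub01_add_dvec_two y⟩
  have hc : (2 : Fin 3) = 1 := (Prod.ext_iff.mp (e2.trans e1.symm)).2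
  exact absurd hc (by decide)

/-- position algebra: `y + (0,1) - (1,0) = y - u`. -/
lemma add01_sub10 (y : Pos L) : y + (0,1) - (1,0) = y - u L := by
  show _ = y - (1, -1)
  rw [Prod.ext_iff]
  constructor
  · show y.1 + 0 - 1 = y.1 - 1; ring
  · show y.2 + 1 - 0 = y.2 - (-1); ring

lemma add01_sub01 (y : Pos L) : y + (0,1) - (0,1) = y := add_sub_cancel_right y _

lemma add10_sub01 (y : Pos L) : y + (1,0) - (0,1) = y + u L := by
  show _ = y + (1, -1)
  rw [Prod.ext_iff]
  constructor
  · show y.1 + 1 - 0 = y.1 + 1; ring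
  · show y.2 + 0 - 1 = y.2 + (-1); ring

lemma add10_sub10 (y : Pos L) : y + (1,0) - (1,0) = y := add_sub_cancel_right y _

lemma subu_sub01 (y : Pos L) : y - u L - (0,1) = y - (1,0) := by
  show y - (1,-1) - (0,1) = _
  rw [Prod.ext_iff]
  constructor
  · show y.1 - 1 - 0 = y.1 - 1; ring
  · show y.2 - (-1) - 1 = y.2 - 0; ring

lemma addu_sub10 (y : Pos L) : y + u L - (1,0) = y - (0,1) := by
  show y + (1,-1) - (1,0) = _
  rw [Prod.ext_iff]
  constructor
  · show y.1 + 1 - 1 = y.1 - 0; ring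
  · show y.2 + (-1) - 0 = y.2 - 1; ring

/-- E1: above an up-gate, either a bead or another up-gate. -/
lemma gp_step {σ : Config L} (hpm : IsPM L σ) {y : Pos L} (hg : Gp σ y) :
    (y - u L, 0) ∈ σ ∨ Gp σ (y - u L) := by
  obtain ⟨hy2, hy1⟩ := hg
  have hW : Wcond σ := hpm.1
  obtain ⟨d, hd, -⟩ := hW (y - u L)
  rcases fin3_cases d with rfl | rfl | rfl
  · exact Or.inl hd
  · exfalso
    apply isPM_black_not12 hpm (y + (0,1))
    rw [add01_sub10, add01_sub01]
    exact ⟨hd, hy2⟩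
  · refine Or.inr ⟨hd, ?_⟩
    rcases isPM_black_cases hpm (y - u L) with h | h | h
    · have hc : (2 : Fin 3) = 0 := hW.eq hd h
      exact absurd hc (by decide)
    · exact h
    · rw [subu_sub01] at h
      have hc : (1 : Fin 3) = 2 := hW.eq hy1 h
      exact absurd hc (by decide)

/-- E2: below a down-gate, either a bead or another down-gate. -/
lemma gm_step {σ : Config L} (hpm : IsPM L σ) {y : Pos L} (hg : Gm σ y) :
    (y + u L, 0) ∈ σ ∨ Gm σ (y + u L) := by
  obtain ⟨hy1, hy2⟩ := hg
  have hW : Wcond σ := hpm.1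
  obtain ⟨d, hd, -⟩ := hW (y + u L)
  rcases fin3_cases d with rfl | rfl | rfl
  · exact Or.inl hd
  · refine Or.inr ⟨hd, ?_⟩
    rcases isPM_black_cases hpm (y + u L) with h | h | h
    · have hc : (1 : Fin 3) = 0 := hW.eq hd h
      exact absurd hc (by decide)
    · rw [addu_sub10] at h
      have hc : (1 : Fin 3) = 2 := hW.eq h hy2
      exact absurd hc (by decide)
    · exact h
  · exfalso
    apply isPM_black_not12 hpm (y + (1,0))
    rw [add10_sub01, add10_sub10]
    exact ⟨hy1, hd⟩

/-- Characterization: up-gate iff a `1` to the left and not a `1` here. -/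
lemma gp_iff {σ : Config L} (hpm : IsPM L σ) (y : Pos L) :
    Gp σ y ↔ ((y - (1,0), 1) ∈ σ ∧ (y, 1) ∉ σ) := by
  have hW : Wcond σ := hpm.1
  constructor
  · rintro ⟨hy2, hy1⟩
    refine ⟨hy1, fun h => ?_⟩
    have hc : (1 : Fin 3) = 2 := hW.eq h hy2
    exact absurd hc (by decide)
  · rintro ⟨hy1, hny⟩
    refine ⟨?_, hy1⟩
    obtain ⟨d, hd, -⟩ := hW y
    rcases fin3_cases d with rfl | rfl | rfl
    · exact absurd ⟨hd, hy1⟩ (isPM_black_not01 hpm y)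
    · exact absurd hd hny
    · exact hd

/-- Characterization: down-gate iff a `1` here and not a `1` to the left. -/
lemma gm_iff {σ : Config L} (hpm : IsPM L σ) (y : Pos L) :
    Gm σ y ↔ ((y, 1) ∈ σ ∧ (y - (1,0), 1) ∉ σ) := by
  have hW : Wcond σ := hpm.1
  constructor
  · rintro ⟨hy1, hy2⟩
    exact ⟨hy1, fun h => absurd ⟨h, hy2⟩ (isPM_black_not12 hpm y)⟩
  · rintro ⟨hy1, hny⟩
    refine ⟨hy1, ?_⟩
    rcases isPM_black_cases hpm y with h | h | h
    · exact absurd (hW.eq h hy1) (by decide)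
    · exact absurd h hny
    · exact h

variable [NeZero L]

open scoped Classical in
/-- The number of up-gates equals the number of down-gates. -/
lemma card_gp_eq_gm {σ : Config L} (hpm : IsPM L σ) :
    (Finset.univ.filter (fun y : Pos L => Gp σ y)).card =
    (Finset.univ.filter (fun y : Pos L => Gm σ y)).card := by
  classical
  have hW : Wcond σ := hpm.1
  set A : Finset (Pos L) := Finset.univ.filter (fun y => (y - (1,0), 1) ∈ σ) with hA
  set B : Finset (Pos L) := Finset.univ.filter (fun y => (y, 1) ∈ σ) with hB
  have hAB : A.card = B.card := by
    refine Finset.card_bij (fun y _ => y - (1,0)) ?_ ?_ ?_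
    · intro y hy
      simp only [hA, Finset.mem_filter, Finset.mem_univ, true_and] at hy
      simp only [hB, Finset.mem_filter, Finset.mem_univ, true_and]
      exact hy
    · intro y1 h1 y2 h2 heq
      exact sub_left_injective heq
    · intro y hy
      simp only [hB, Finset.mem_filter, Finset.mem_univ, true_and] at hy
      refine ⟨y + (1,0), ?_, add10_sub10 y⟩
      simp only [hA, Finset.mem_filter, Finset.mem_univ, true_and, add10_sub10]
      exact hy
  have h1 : (Finset.univ.filter (fun y : Pos L => Gp σ y)) =
      A.filter (fun y => (y, 1) ∉ σ) := by
    ext y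
    simp only [hA, Finset.mem_filter, Finset.mem_univ, true_and, gp_iff hpm]
  have h2 : (Finset.univ.filter (fun y : Pos L => Gm σ y)) =
      B.filter (fun y => (y - (1,0), 1) ∉ σ) := by
    ext y
    simp only [hB, Finset.mem_filter, Finset.mem_univ, true_and, gm_iff hpm]
  have h3 : A.filter (fun y => (y, 1) ∈ σ) = B.filter (fun y => (y - (1,0), 1) ∈ σ) := by
    ext y
    simp only [hA, hB, Finset.mem_filter, Finset.mem_univ, true_and]
    tauto
  have h4 : (A.filter (fun y => (y, 1) ∈ σ)).card
      + (A.filter (fun y => (y, 1) ∉ σ)).card = A.card :=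
    Finset.card_filter_add_card_filter_not (s := A) (p := fun y => (y, 1) ∈ σ)
  have h5 : (B.filter (fun y => (y - (1,0), 1) ∈ σ)).card
      + (B.filter (fun y => (y - (1,0), 1) ∉ σ)).card = B.card :=
    Finset.card_filter_add_card_filter_not (s := B) (p := fun y => (y - (1,0), 1) ∈ σ)
  have h3' := congrArg Finset.card h3
  rw [h1, h2]
  omega

end Aux6
section Aux7

open Finset
open scoped Classical

variable {L : ℕ} [NeZero L]

/-- Beads of `σ` in column `c`, indexed by first coordinate. -/
noncomputable def colBead (σ : Config L) (c : ZMod L) : Finset (ZMod L) :=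
  Finset.univ.filter (fun a => ((a, c - a), (0 : Fin 3)) ∈ σ)

lemma col_succ {σ : Config L} (hpm : IsPM L σ) (c : ZMod L) :
    (colBead σ (c + 1)).card = (colBead σ c).card := by
  have hW : Wcond σ := hpm.1
  have hsub1 : ∀ a : ZMod L, ((a, c + 1 - a) : Pos L) - (1,0) = (a - 1, c - (a - 1)) := by
    intro a
    rw [Prod.ext_iff]
    constructor
    · show a - 1 = a - 1; rfl
    · show c + 1 - a - 0 = c - (a - 1); ring
  have hsub2 : ∀ a : ZMod L, ((a, c + 1 - a) : Pos L) - (0,1) = (a, c - a) := by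
    intro a
    rw [Prod.ext_iff]
    constructor
    · show a - 0 = a; ring
    · show c + 1 - a - 1 = c - a; ring
  set P0 : ZMod L → Prop := fun a => ((a, c + 1 - a), (0 : Fin 3)) ∈ σ with hP0
  set P1 : ZMod L → Prop := fun a => ((a - 1, c - (a - 1)), (1 : Fin 3)) ∈ σ with hP1
  set P2 : ZMod L → Prop := fun a => ((a, c - a), (2 : Fin 3)) ∈ σ with hP2
  set Q0 : ZMod L → Prop := fun a => ((a, c - a), (0 : Fin 3)) ∈ σ with hQ0
  set Q1 : ZMod L → Prop := fun a => ((a, c - a), (1 : Fin 3)) ∈ σ with hQ1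
  have key1 : ∀ a : ZMod L,
      (if P0 a then 1 else 0) + ((if P1 a then 1 else 0) + (if P2 a then 1 else 0)) = 1 := by
    intro a
    have hex := isPM_black_cases hpm (a, c + 1 - a)
    rw [hsub1 a, hsub2 a] at hex
    have n01 := isPM_black_not01 hpm (a, c + 1 - a)
    have n02 := isPM_black_not02 hpm (a, c + 1 - a)
    have n12 := isPM_black_not12 hpm (a, c + 1 - a)
    rw [hsub1 a] at n01 n12
    rw [hsub2 a] at n02 n12
    by_cases h0 : P0 a <;> by_cases h1 : P1 a <;> by_cases h2 : P2 a <;>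
      simp only [h0, h1, h2, if_true, if_false] <;>
      simp only [hP0, hP1, hP2] at h0 h1 h2 <;> tauto
  have key2 : ∀ a : ZMod L,
      (if Q0 a then 1 else 0) + ((if Q1 a then 1 else 0) + (if P2 a then 1 else 0)) = 1 := by
    intro a
    obtain ⟨d, hd, hu⟩ := hW (a, c - a)
    have hex : Q0 a ∨ Q1 a ∨ P2 a := by
      rcases fin3_cases d with rfl | rfl | rfl
      · exact Or.inl hd
      · exact Or.inr (Or.inl hd)
      · exact Or.inr (Or.inr hd)
    have n01 : ¬(Q0 a ∧ Q1 a) := by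
      rintro ⟨x0, x1⟩
      have : (0 : Fin 3) = 1 := hW.eq x0 x1
      exact absurd this (by decide)
    have n02 : ¬(Q0 a ∧ P2 a) := by
      rintro ⟨x0, x1⟩
      have : (0 : Fin 3) = 2 := hW.eq x0 x1
      exact absurd this (by decide)
    have n12 : ¬(Q1 a ∧ P2 a) := by
      rintro ⟨x0, x1⟩
      have : (1 : Fin 3) = 2 := hW.eq x0 x1
      exact absurd this (by decide)
    by_cases h0 : Q0 a <;> by_cases h1 : Q1 a <;> by_cases h2 : P2 a <;>
      simp only [h0, h1, h2, if_true, if_false] <;> tauto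
  have sum1 : (Finset.univ.filter P0).card + ((Finset.univ.filter P1).card
      + (Finset.univ.filter P2).card) = Fintype.card (ZMod L) := by
    rw [Finset.card_filter, Finset.card_filter, Finset.card_filter,
        ← Finset.sum_add_distrib, ← Finset.sum_add_distrib]
    rw [show Fintype.card (ZMod L) = ∑ _a : ZMod L, 1 from by simp]
    exact Finset.sum_congr rfl (fun a _ => key1 a)
  have sum2 : (Finset.univ.filter Q0).card + ((Finset.univ.filter Q1).card
      + (Finset.univ.filter P2).card) = Fintype.card (ZMod L) := by
    rw [Finset.card_filter, Finset.card_filter, Finset.card_filter,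
        ← Finset.sum_add_distrib, ← Finset.sum_add_distrib]
    rw [show Fintype.card (ZMod L) = ∑ _a : ZMod L, 1 from by simp]
    exact Finset.sum_congr rfl (fun a _ => key2 a)
  have hP1Q1 : (Finset.univ.filter P1).card = (Finset.univ.filter Q1).card := by
    refine Finset.card_bij (fun a _ => a - 1) ?_ ?_ ?_
    · intro a ha
      simp only [hP1, Finset.mem_filter, Finset.mem_univ, true_and] at ha ⊢
      exact ha
    · intro a1 h1 a2 h2 heq
      exact sub_left_injective heq
    · intro b hb
      simp only [hQ1, Finset.mem_filter, Finset.mem_univ, true_and] at hb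
      refine ⟨b + 1, ?_, add_sub_cancel_right b 1⟩
      simp only [hP1, Finset.mem_filter, Finset.mem_univ, true_and, add_sub_cancel_right]
      exact hb
  have hcol1 : (colBead σ (c + 1)).card = (Finset.univ.filter P0).card := by
    unfold colBead
    congr 1
  have hcol0 : (colBead σ c).card = (Finset.univ.filter Q0).card := rfl
  rw [hcol1, hcol0]
  omega

lemma col_const {σ : Config L} (hpm : IsPM L σ) (c₁ c₂ : ZMod L) :
    (colBead σ c₁).card = (colBead σ c₂).card := by
  have hnat : ∀ (m : ℕ) (c : ZMod L), (colBead σ (c + (m : ZMod L))).card = (colBead σ c).card := by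
    intro m
    induction m with
    | zero => intro c; simp
    | succ k ih =>
      intro c
      have : c + ((k+1 : ℕ) : ZMod L) = (c + (k : ZMod L)) + 1 := by push_cast; ring
      rw [this, col_succ hpm, ih]
  have h := hnat (c₂ - c₁).val c₁
  rw [show c₁ + (((c₂ - c₁).val : ℕ) : ZMod L) = c₂ from by
    rw [ZMod.natCast_val, ZMod.cast_id]; ring] at h
  omega

lemma bead_in_col_down {σ : Config L} (hpm : IsPM L σ) {x₀ : Pos L} (hb : (x₀, 0) ∈ σ)
    (y : Pos L) : ∃ j : ℕ, j ≤ L - 1 ∧ (y - j • u L, 0) ∈ σ := by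
  have hne : (colBead σ (y.1 + y.2)).Nonempty := by
    rw [← Finset.card_pos, col_const hpm _ (x₀.1 + x₀.2)]
    rw [Finset.card_pos]
    refine ⟨x₀.1, ?_⟩
    unfold colBead
    simp only [Finset.mem_filter, Finset.mem_univ, true_and]
    rw [show ((x₀.1 : ZMod L), x₀.1 + x₀.2 - x₀.1) = x₀ from by
      rw [Prod.ext_iff]; exact ⟨rfl, by ring⟩]
    exact hb
  obtain ⟨a, ha⟩ := hne
  unfold colBead at ha
  simp only [Finset.mem_filter, Finset.mem_univ, true_and] at ha
  refine ⟨(y.1 - a).val, by have := ZMod.val_lt (y.1 - a); omega, ?_⟩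
  rw [show y - ((y.1 - a).val : ℕ) • u L = ((a : ZMod L), y.1 + y.2 - a) from ?_]
  · exact ha
  · rw [nsmul_u, ZMod.natCast_val, ZMod.cast_id]
    rw [Prod.ext_iff]
    constructor
    · show y.1 - (y.1 - a) = a; ring
    · show y.2 - -(y.1 - a) = y.1 + y.2 - a; ring

lemma bead_in_col_up {σ : Config L} (hpm : IsPM L σ) {x₀ : Pos L} (hb : (x₀, 0) ∈ σ)
    (y : Pos L) : ∃ j : ℕ, j ≤ L - 1 ∧ (y + j • u L, 0) ∈ σ := by
  have hne : (colBead σ (y.1 + y.2)).Nonempty := by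
    rw [← Finset.card_pos, col_const hpm _ (x₀.1 + x₀.2)]
    rw [Finset.card_pos]
    refine ⟨x₀.1, ?_⟩
    unfold colBead
    simp only [Finset.mem_filter, Finset.mem_univ, true_and]
    rw [show ((x₀.1 : ZMod L), x₀.1 + x₀.2 - x₀.1) = x₀ from by
      rw [Prod.ext_iff]; exact ⟨rfl, by ring⟩]
    exact hb
  obtain ⟨a, ha⟩ := hne
  unfold colBead at ha
  simp only [Finset.mem_filter, Finset.mem_univ, true_and] at ha
  refine ⟨(a - y.1).val, by have := ZMod.val_lt (a - y.1); omega, ?_⟩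
  rw [show y + ((a - y.1).val : ℕ) • u L = ((a : ZMod L), y.1 + y.2 - a) from ?_]
  · exact ha
  · rw [nsmul_u, ZMod.natCast_val, ZMod.cast_id]
    rw [Prod.ext_iff]
    constructor
    · show y.1 + (a - y.1) = a; ring
    · show y.2 + -(a - y.1) = y.1 + y.2 - a; ring

lemma chain_up (hL : 3 ≤ L) {σ : Config L} (hpm : IsPM L σ) {x₀ : Pos L}
    (hb : (x₀, 0) ∈ σ) {y : Pos L} (hg : Gp σ y) :
    ∃ n, 1 ≤ n ∧ n ≤ L - 1 ∧ (y - n • u L, 0) ∈ σ ∧ ∀ j < n, Gp σ (y - j • u L) := by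
  have hW : Wcond σ := hpm.1
  have hex : ∃ j : ℕ, ¬ Gp σ (y - j • u L) := by
    obtain ⟨j, hj1, hj2⟩ := bead_in_col_down hpm hb y
    exact ⟨j, fun hgp => absurd (hW.eq hgp.1 hj2) (by decide)⟩
  obtain ⟨j0, hj01, hj02⟩ := bead_in_col_down hpm hb y
  have hFj0 : ¬ Gp σ (y - j0 • u L) := fun hgp => absurd (hW.eq hgp.1 hj02) (by decide)
  set n := Nat.find hex with hn
  have hspec := Nat.find_spec hex
  have hmin : ∀ j < n, Gp σ (y - j • u L) := fun j hj => not_not.mp (Nat.find_min hex hj)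
  have hn1 : 1 ≤ n := by
    rcases Nat.eq_zero_or_pos n with h0 | h0
    · exfalso
      apply hspec
      rw [← hn, h0] at hspec ⊢
      simpa using hg
    · exact h0
  have hnle : n ≤ L - 1 := le_trans (Nat.find_min' hex hFj0) hj01
  refine ⟨n, hn1, hnle, ?_, hmin⟩
  have hprev : Gp σ (y - (n - 1) • u L) := hmin (n - 1) (by omega)
  rcases gp_step hpm hprev with hbead | hgp
  · rwa [show y - (n-1) • u L - u L = y - n • u L from by
      rw [show y - (n-1) • u L - u L = (y - u L) - (n-1) • u L from by abel,
        sub_u_sub_smul, show n - 1 + 1 = n from by omega]] at hbead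
  · exfalso
    apply hspec
    rwa [show y - (n-1) • u L - u L = y - n • u L from by
      rw [show y - (n-1) • u L - u L = (y - u L) - (n-1) • u L from by abel,
        sub_u_sub_smul, show n - 1 + 1 = n from by omega]] at hgp

lemma chain_down (hL : 3 ≤ L) {σ : Config L} (hpm : IsPM L σ) {x₀ : Pos L}
    (hb : (x₀, 0) ∈ σ) {y : Pos L} (hg : Gm σ y) :
    ∃ n, 1 ≤ n ∧ n ≤ L - 1 ∧ (y + n • u L, 0) ∈ σ ∧ ∀ j < n, Gm σ (y + j • u L) := by
  have hW : Wcond σ := hpm.1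
  have hex : ∃ j : ℕ, ¬ Gm σ (y + j • u L) := by
    obtain ⟨j, hj1, hj2⟩ := bead_in_col_up hpm hb y
    exact ⟨j, fun hgm => absurd (hW.eq hgm.1 hj2) (by decide)⟩
  obtain ⟨j0, hj01, hj02⟩ := bead_in_col_up hpm hb y
  have hFj0 : ¬ Gm σ (y + j0 • u L) := fun hgm => absurd (hW.eq hgm.1 hj02) (by decide)
  set n := Nat.find hex with hn
  have hspec := Nat.find_spec hex
  have hmin : ∀ j < n, Gm σ (y + j • u L) := fun j hj => not_not.mp (Nat.find_min hex hj)
  have hn1 : 1 ≤ n := by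
    rcases Nat.eq_zero_or_pos n with h0 | h0
    · exfalso
      apply hspec
      rw [← hn, h0] at hspec ⊢
      simpa using hg
    · exact h0
  have hnle : n ≤ L - 1 := le_trans (Nat.find_min' hex hFj0) hj01
  refine ⟨n, hn1, hnle, ?_, hmin⟩
  have hprev : Gm σ (y + (n - 1) • u L) := hmin (n - 1) (by omega)
  rcases gm_step hpm hprev with hbead | hgm
  · rwa [show y + (n-1) • u L + u L = y + n • u L from by
      rw [show y + (n-1) • u L + u L = (y + u L) + (n-1) • u L from by abel,
        add_u_add_smul, show n - 1 + 1 = n from by omega]] at hbead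
  · exfalso
    apply hspec
    rwa [show y + (n-1) • u L + u L = y + n • u L from by
      rw [show y + (n-1) • u L + u L = (y + u L) + (n-1) • u L from by abel,
        add_u_add_smul, show n - 1 + 1 = n from by omega]] at hgm

/-- All feasible up-jumps `(bead position, length)`. -/
noncomputable def upJumps (σ : Config L) : Finset (Pos L × ℕ) :=
  (Finset.univ ×ˢ Finset.Icc 1 (L-1)).filter
    (fun p => (p.1, 0) ∈ σ ∧ ∀ k, 1 ≤ k → k ≤ p.2 → Gp σ (p.1 + k • u L))

/-- All feasible down-jumps `(bead position, length)`. -/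
noncomputable def downJumps (σ : Config L) : Finset (Pos L × ℕ) :=
  (Finset.univ ×ˢ Finset.Icc 1 (L-1)).filter
    (fun p => (p.1, 0) ∈ σ ∧ ∀ k, 1 ≤ k → k ≤ p.2 → Gm σ (p.1 - k • u L))

lemma smul_shift_eq {y : Pos L} {n k : ℕ} (hk : k ≤ n) :
    y - n • u L + k • u L = y - (n - k) • u L := by
  rw [show n • u L = (n - k) • u L + k • u L from by rw [← add_nsmul, Nat.sub_add_cancel hk]]
  abel

lemma smul_shift_eq' {y : Pos L} {n k : ℕ} (hk : k ≤ n) :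
    y + n • u L - k • u L = y + (n - k) • u L := by
  rw [show n • u L = (n - k) • u L + k • u L from by rw [← add_nsmul, Nat.sub_add_cancel hk]]
  abel

lemma card_upJumps (hL : 3 ≤ L) {σ : Config L} (hpm : IsPM L σ) {x₀ : Pos L}
    (hb : (x₀, 0) ∈ σ) :
    (upJumps σ).card = (Finset.univ.filter (fun y : Pos L => Gp σ y)).card := by
  have hW : Wcond σ := hpm.1
  refine Finset.card_bij (fun p _ => p.1 + p.2 • u L) ?_ ?_ ?_
  · rintro ⟨x, n⟩ hp
    simp only [upJumps, Finset.mem_filter, Finset.mem_product, Finset.mem_univ, true_and,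
      Finset.mem_Icc] at hp
    obtain ⟨⟨hn1, hn2⟩, hbx, hgx⟩ := hp
    simp only [Finset.mem_filter, Finset.mem_univ, true_and]
    exact hgx n hn1 le_rfl
  · rintro ⟨x, n⟩ h1 ⟨x', n'⟩ h2 heq
    simp only [upJumps, Finset.mem_filter, Finset.mem_product, Finset.mem_univ, true_and,
      Finset.mem_Icc] at h1 h2
    obtain ⟨⟨hn1, hn2⟩, hbx, hgx⟩ := h1
    obtain ⟨⟨hn1', hn2'⟩, hbx', hgx'⟩ := h2
    have hlt : ∀ {a b : Pos L} {na nb : ℕ}, (a,0) ∈ σ → (b,0) ∈ σ →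
        (∀ k, 1 ≤ k → k ≤ nb → Gp σ (b + k • u L)) →
        a + na • u L = b + nb • u L → na < nb → False := by
      intro a b na nb hba hbb hgb heq2 hlt2
      have hg := hgb (nb - na) (by omega) (by omega)
      have hpos : b + (nb - na) • u L = a := by
        have h5 : b + (nb - na) • u L + na • u L = b + nb • u L := by
          rw [add_assoc, ← add_nsmul, Nat.sub_add_cancel (by omega)]
        have h6 : b + (nb - na) • u L + na • u L = a + na • u L := by rw [h5, heq2]
        exact add_right_cancel h6
      rw [hpos] at hg
      exact absurd (hW.eq hg.1 hba) (by decide)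
    rcases lt_trichotomy n n' with hlt2 | heq2 | hlt2
    · exact absurd (hlt hbx hbx' hgx' heq hlt2) (by simp)
    · subst heq2
      have hx : x = x' := add_right_cancel heq
      rw [hx]
    · exact absurd (hlt hbx' hbx hgx heq.symm hlt2) (by simp)
  · intro y hy
    simp only [Finset.mem_filter, Finset.mem_univ, true_and] at hy
    obtain ⟨n, hn1, hn2, hbead, hgates⟩ := chain_up hL hpm hb hy
    refine ⟨(y - n • u L, n), ?_, sub_add_cancel y _⟩
    simp only [upJumps, Finset.mem_filter, Finset.mem_product, Finset.mem_univ, true_and,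
      Finset.mem_Icc]
    refine ⟨⟨hn1, hn2⟩, hbead, ?_⟩
    intro k hk1 hk2
    rw [smul_shift_eq hk2]
    exact hgates (n - k) (by omega)

lemma card_downJumps (hL : 3 ≤ L) {σ : Config L} (hpm : IsPM L σ) {x₀ : Pos L}
    (hb : (x₀, 0) ∈ σ) :
    (downJumps σ).card = (Finset.univ.filter (fun y : Pos L => Gm σ y)).card := by
  have hW : Wcond σ := hpm.1
  refine Finset.card_bij (fun p _ => p.1 - p.2 • u L) ?_ ?_ ?_
  · rintro ⟨x, n⟩ hp
    simp only [downJumps, Finset.mem_filter, Finset.mem_product, Finset.mem_univ, true_and,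
      Finset.mem_Icc] at hp
    obtain ⟨⟨hn1, hn2⟩, hbx, hgx⟩ := hp
    simp only [Finset.mem_filter, Finset.mem_univ, true_and]
    exact hgx n hn1 le_rfl
  · rintro ⟨x, n⟩ h1 ⟨x', n'⟩ h2 heq
    simp only [downJumps, Finset.mem_filter, Finset.mem_product, Finset.mem_univ, true_and,
      Finset.mem_Icc] at h1 h2
    obtain ⟨⟨hn1, hn2⟩, hbx, hgx⟩ := h1
    obtain ⟨⟨hn1', hn2'⟩, hbx', hgx'⟩ := h2
    have hlt : ∀ {a b : Pos L} {na nb : ℕ}, (a,0) ∈ σ → (b,0) ∈ σ →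
        (∀ k, 1 ≤ k → k ≤ nb → Gm σ (b - k • u L)) →
        a - na • u L = b - nb • u L → na < nb → False := by
      intro a b na nb hba hbb hgb heq2 hlt2
      have hg := hgb (nb - na) (by omega) (by omega)
      have hpos : b - (nb - na) • u L = a := by
        have h5 : b - (nb - na) • u L - na • u L = b - nb • u L := by
          rw [show (nb : ℕ) • u L = (nb - na) • u L + na • u L from by
            rw [← add_nsmul, Nat.sub_add_cancel (by omega)]]
          abel
        have h6 : b - (nb - na) • u L - na • u L = a - na • u L := by rw [h5, heq2]
        exact sub_left_injective h6
      rw [hpos] at hg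
      exact absurd (hW.eq hg.1 hba) (by decide)
    rcases lt_trichotomy n n' with hlt2 | heq2 | hlt2
    · exact absurd (hlt hbx hbx' hgx' heq hlt2) (by simp)
    · subst heq2
      have hx : x = x' := sub_left_injective heq
      rw [hx]
    · exact absurd (hlt hbx' hbx hgx heq.symm hlt2) (by simp)
  · intro y hy
    simp only [Finset.mem_filter, Finset.mem_univ, true_and] at hy
    obtain ⟨n, hn1, hn2, hbead, hgates⟩ := chain_down hL hpm hb hy
    refine ⟨(y + n • u L, n), ?_, add_sub_cancel_right y _⟩
    simp only [downJumps, Finset.mem_filter, Finset.mem_product, Finset.mem_univ, true_and,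
      Finset.mem_Icc]
    refine ⟨⟨hn1, hn2⟩, hbead, ?_⟩
    intro k hk1 hk2
    rw [smul_shift_eq' hk2]
    exact hgates (n - k) (by omega)

lemma card_upJumps_eq_downJumps (hL : 3 ≤ L) {σ : Config L} (hpm : IsPM L σ) {x₀ : Pos L}
    (hb : (x₀, 0) ∈ σ) : (upJumps σ).card = (downJumps σ).card := by
  rw [card_upJumps hL hpm hb, card_downJumps hL hpm hb, card_gp_eq_gm hpm]

end Aux7
section Aux8

open Finset
open scoped Classical

variable {L : ℕ} [NeZero L]

/-- Tagged-process up-transition from `σ` to `τ`, moving the bead at `x` up `n` steps. -/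
def upT (x₀ x : Pos L) (n : ℕ) (σ τ : Config L) : Prop :=
  (x ≠ x₀ ∧ UpPathN L σ x n τ) ∨
  (x = x₀ ∧ ∃ σ'' : Config L, UpPathN L σ x₀ n σ'' ∧ τ = tshift L (-(n : ℤ)) σ'')

/-- Tagged-process down-transition from `σ` to `τ`. -/
def downT (x₀ x : Pos L) (n : ℕ) (σ τ : Config L) : Prop :=
  (x ≠ x₀ ∧ DownPathN L σ x n τ) ∨
  (x = x₀ ∧ ∃ σ'' : Config L, DownPathN L σ x₀ n σ'' ∧ τ = tshift L ((n : ℤ)) σ'')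

lemma upT_unique {x₀ x : Pos L} {n : ℕ} {σ τ₁ τ₂ : Config L}
    (h1 : upT x₀ x n σ τ₁) (h2 : upT x₀ x n σ τ₂) : τ₁ = τ₂ := by
  rcases h1 with ⟨hx, hp1⟩ | ⟨hx, s1, hp1, he1⟩
  · rcases h2 with ⟨-, hp2⟩ | ⟨hx2, -⟩
    · exact upPathN_unique hp1 hp2
    · exact absurd hx2 hx
  · rcases h2 with ⟨hx2, -⟩ | ⟨-, s2, hp2, he2⟩
    · exact absurd hx hx2
    · rw [he1, he2, upPathN_unique hp1 hp2]

lemma downT_unique {x₀ x : Pos L} {n : ℕ} {σ τ₁ τ₂ : Config L}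
    (h1 : downT x₀ x n σ τ₁) (h2 : downT x₀ x n σ τ₂) : τ₁ = τ₂ := by
  rcases h1 with ⟨hx, hp1⟩ | ⟨hx, s1, hp1, he1⟩
  · rcases h2 with ⟨-, hp2⟩ | ⟨hx2, -⟩
    · exact downPathN_unique hp1 hp2
    · exact absurd hx2 hx
  · rcases h2 with ⟨hx2, -⟩ | ⟨-, s2, hp2, he2⟩
    · exact absurd hx hx2
    · rw [he1, he2, downPathN_unique hp1 hp2]

lemma numUpHat_eq (hL : 3 ≤ L) {σ : Config L} (hW : Wcond σ) (x₀ : Pos L) (τ : Config L) :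
    numUpHat L x₀ σ τ =
      ((Finset.univ ×ˢ Finset.Icc 1 (L-1)).filter
        (fun p : Pos L × ℕ => upT x₀ p.1 p.2 σ τ)).card := by
  set F := (Finset.univ ×ˢ Finset.Icc 1 (L-1)).filter
    (fun p : Pos L × ℕ => upT x₀ p.1 p.2 σ τ) with hF
  have hset : {pr : Pos L × Pos L | pr.2 ≠ pr.1 ∧
      ((pr.1 ≠ x₀ ∧ ∃ n : ℕ, pr.2 = pr.1 + n • u L ∧ UpPathN L σ pr.1 n τ) ∨
       (pr.1 = x₀ ∧ ∃ n : ℕ, 0 < n ∧ pr.2 = x₀ + n • u L ∧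
          ∃ σ' : Config L, UpPathN L σ x₀ n σ' ∧ τ = tshift L (-(n : ℤ)) σ'))} =
      ↑(F.image (fun p : Pos L × ℕ => (p.1, p.1 + p.2 • u L))) := by
    ext ⟨x, y⟩
    simp only [Set.mem_setOf_eq, Finset.coe_image, Set.mem_image, Finset.mem_coe, hF,
      Finset.mem_filter, Finset.mem_product, Finset.mem_univ, true_and, Finset.mem_Icc]
    constructor
    · rintro ⟨hne, ⟨hx, n, hyeq, hp⟩ | ⟨hx, n, hn0, hyeq, s, hp, he⟩⟩
      · have hn1 : 1 ≤ n := by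
          rcases Nat.eq_zero_or_pos n with h0 | h0
          · exfalso; apply hne; rw [hyeq, h0]; simp
          · exact h0
        have hn2 : n ≤ L - 1 := upPathN_le hL hp hW
        exact ⟨(x, n), ⟨⟨hn1, hn2⟩, Or.inl ⟨hx, hp⟩⟩, by rw [Prod.mk.injEq]; exact ⟨rfl, hyeq.symm⟩⟩
      · have hn2 : n ≤ L - 1 := upPathN_le hL hp hW
        subst hx
        exact ⟨(x, n), ⟨⟨hn0, hn2⟩, Or.inr ⟨rfl, s, hp, he⟩⟩,
          by rw [Prod.mk.injEq]; exact ⟨rfl, hyeq.symm⟩⟩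
    · rintro ⟨⟨x', n⟩, ⟨⟨hn1, hn2⟩, hT⟩, heq⟩
      rw [Prod.mk.injEq] at heq
      obtain ⟨rfl, hy⟩ := heq
      have hy' : x' + n • u L = y := hy
      have hyne : y ≠ x' := by
        intro hc
        exact nsmul_u_ne_zero hL hn1 (by omega) (add_eq_left.mp (hy'.trans hc))
      rcases hT with ⟨hx, hp⟩ | ⟨hx, s, hp, he⟩
      · exact ⟨hyne, Or.inl ⟨hx, n, hy'.symm, hp⟩⟩
      · exact ⟨hyne, Or.inr ⟨hx, n, hn1, by rw [← hy', show x' = x₀ from hx], s, hp, he⟩⟩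
  unfold numUpHat
  rw [hset, Set.ncard_coe_finset]
  apply Finset.card_image_of_injOn
  rintro ⟨x, n⟩ h1 ⟨x', n'⟩ h2 heq
  simp only [hF, Finset.mem_coe, Finset.mem_filter, Finset.mem_product, Finset.mem_univ,
    true_and, Finset.mem_Icc] at h1 h2
  rw [Prod.mk.injEq] at heq
  obtain ⟨rfl, hsum⟩ := heq
  have := add_left_cancel hsum
  rw [Prod.mk.injEq]
  exact ⟨rfl, nsmul_u_inj hL (by omega) (by omega) this⟩

lemma numDownHat_eq (hL : 3 ≤ L) {σ : Config L} (hW : Wcond σ) (x₀ : Pos L) (τ : Config L) :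
    numDownHat L x₀ σ τ =
      ((Finset.univ ×ˢ Finset.Icc 1 (L-1)).filter
        (fun p : Pos L × ℕ => downT x₀ p.1 p.2 σ τ)).card := by
  set F := (Finset.univ ×ˢ Finset.Icc 1 (L-1)).filter
    (fun p : Pos L × ℕ => downT x₀ p.1 p.2 σ τ) with hF
  have hset : {pr : Pos L × Pos L | pr.2 ≠ pr.1 ∧
      ((pr.1 ≠ x₀ ∧ ∃ n : ℕ, pr.2 = pr.1 - n • u L ∧ DownPathN L σ pr.1 n τ) ∨
       (pr.1 = x₀ ∧ ∃ n : ℕ, 0 < n ∧ pr.2 = x₀ - n • u L ∧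
          ∃ σ' : Config L, DownPathN L σ x₀ n σ' ∧ τ = tshift L ((n : ℤ)) σ'))} =
      ↑(F.image (fun p : Pos L × ℕ => (p.1, p.1 - p.2 • u L))) := by
    ext ⟨x, y⟩
    simp only [Set.mem_setOf_eq, Finset.coe_image, Set.mem_image, Finset.mem_coe, hF,
      Finset.mem_filter, Finset.mem_product, Finset.mem_univ, true_and, Finset.mem_Icc]
    constructor
    · rintro ⟨hne, ⟨hx, n, hyeq, hp⟩ | ⟨hx, n, hn0, hyeq, s, hp, he⟩⟩
      · have hn1 : 1 ≤ n := by
          rcases Nat.eq_zero_or_pos n with h0 | h0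
          · exfalso; apply hne; rw [hyeq, h0]; simp
          · exact h0
        have hn2 : n ≤ L - 1 := downPathN_le hL hp hW
        exact ⟨(x, n), ⟨⟨hn1, hn2⟩, Or.inl ⟨hx, hp⟩⟩, by rw [Prod.mk.injEq]; exact ⟨rfl, hyeq.symm⟩⟩
      · have hn2 : n ≤ L - 1 := downPathN_le hL hp hW
        subst hx
        exact ⟨(x, n), ⟨⟨hn0, hn2⟩, Or.inr ⟨rfl, s, hp, he⟩⟩,
          by rw [Prod.mk.injEq]; exact ⟨rfl, hyeq.symm⟩⟩
    · rintro ⟨⟨x', n⟩, ⟨⟨hn1, hn2⟩, hT⟩, heq⟩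
      rw [Prod.mk.injEq] at heq
      obtain ⟨rfl, hy⟩ := heq
      have hy' : x' - n • u L = y := hy
      have hyne : y ≠ x' := by
        intro hc
        exact nsmul_u_ne_zero hL hn1 (by omega) (sub_eq_self.mp (hy'.trans hc))
      rcases hT with ⟨hx, hp⟩ | ⟨hx, s, hp, he⟩
      · exact ⟨hyne, Or.inl ⟨hx, n, hy'.symm, hp⟩⟩
      · exact ⟨hyne, Or.inr ⟨hx, n, hn1, by rw [← hy', show x' = x₀ from hx], s, hp, he⟩⟩
  unfold numDownHat
  rw [hset, Set.ncard_coe_finset]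
  apply Finset.card_image_of_injOn
  rintro ⟨x, n⟩ h1 ⟨x', n'⟩ h2 heq
  simp only [hF, Finset.mem_coe, Finset.mem_filter, Finset.mem_product, Finset.mem_univ,
    true_and, Finset.mem_Icc] at h1 h2
  rw [Prod.mk.injEq] at heq
  obtain ⟨rfl, hsum⟩ := heq
  have := sub_right_injective hsum
  rw [Prod.mk.injEq]
  exact ⟨rfl, nsmul_u_inj hL (by omega) (by omega) this⟩

lemma upPathN_final_bead {σ τ : Config L} {x : Pos L} {n : ℕ}
    (hp : UpPathN L σ x n τ) (hb : (x, 0) ∈ σ) : (x + n • u L, 0) ∈ τ := by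
  induction hp with
  | refl σ' x' => simpa using hb
  | @step σ' x' n' τ' hc p ih =>
    have hb1 : (x' + u L, 0) ∈ upMove L σ' x' :=
      mem_upMove.mpr (Or.inr (mem_highTriple.mpr (Or.inr (Or.inl rfl))))
    have := ih hb1
    rwa [add_u_add_smul] at this

lemma downPathN_final_bead {σ τ : Config L} {x : Pos L} {n : ℕ}
    (hp : DownPathN L σ x n τ) (hb : (x, 0) ∈ σ) : (x - n • u L, 0) ∈ τ := by
  induction hp with
  | refl σ' x' => simpa using hb
  | @step σ' x' n' τ' hc p ih =>
    have hb1 : (x' - u L, 0) ∈ downMove L σ' x' :=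
      mem_downMove.mpr (Or.inr (mem_lowTriple.mpr (Or.inl rfl)))
    have := ih hb1
    rwa [sub_u_sub_smul] at this

/-- An (untagged) up-jump never returns to the same configuration. -/
lemma upPathN_ne_self (hL : 3 ≤ L) {σ τ : Config L} {x : Pos L} {n : ℕ}
    (hW : Wcond σ) (hn1 : 1 ≤ n) (hp : UpPathN L σ x n τ) : τ ≠ σ := by
  intro hc
  subst hc
  obtain ⟨m, rfl⟩ : ∃ m, n = m + 1 := ⟨n - 1, by omega⟩
  have hb : (x, 0) ∈ τ := (canUp_iff.mp (upPathN_canUp hp)).1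
  have hfin : (x + (m+1) • u L, 0) ∈ τ := upPathN_final_bead hp hb
  have hg : Gp τ (x + (m+1) • u L) := upPathN_gates hL hp hW (m+1) (by omega) le_rfl
  exact absurd (hW.eq hg.1 hfin) (by decide)

lemma downPathN_ne_self (hL : 3 ≤ L) {σ τ : Config L} {x : Pos L} {n : ℕ}
    (hW : Wcond σ) (hn1 : 1 ≤ n) (hp : DownPathN L σ x n τ) : τ ≠ σ := by
  intro hc
  subst hc
  obtain ⟨m, rfl⟩ : ∃ m, n = m + 1 := ⟨n - 1, by omega⟩
  have hb : (x, 0) ∈ τ := (canDown_iff.mp (downPathN_canDown hp)).1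
  have hfin : (x - (m+1) • u L, 0) ∈ τ := downPathN_final_bead hp hb
  have hg : Gm τ (x - (m+1) • u L) := downPathN_gates hL hp hW (m+1) (by omega) le_rfl
  exact absurd (hW.eq hg.1 hfin) (by decide)

/-- A tagged up-jump never produces `tshift n σ`. -/
lemma upPathN_ne_tshift (hL : 3 ≤ L) {σ : Config L} {x₀ : Pos L} {n : ℕ}
    (hW : Wcond σ) (hn1 : 1 ≤ n) (hn2 : n ≤ L - 1)
    (hp : UpPathN L σ x₀ n (tshift L (n : ℤ) σ)) : False := by
  have key : ∀ m : ℕ, UpPathN L σ x₀ (m * n) (tshift L ((m * n : ℕ) : ℤ) σ) := by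
    intro m
    induction m with
    | zero => simpa [tshift_zero] using UpPathN.refl σ x₀
    | succ k ih =>
      have hsh := upPathN_tshift ((k * n : ℕ) : ℤ) hp
      rw [tshift_tshift, natCast_zsmul_u] at hsh
      have := upPathN_trans ih hsh
      rw [show k * n + n = (k+1) * n from by ring] at this
      rwa [show ((k * n : ℕ) : ℤ) + ((n : ℕ) : ℤ) = (((k+1) * n : ℕ) : ℤ) from by push_cast; ring]
        at this
  have hL2 := upPathN_le hL (key L) hW
  have : L * n ≥ L := Nat.le_mul_of_pos_right L (by omega)
  omega

lemma downPathN_ne_tshift (hL : 3 ≤ L) {σ : Config L} {x₀ : Pos L} {n : ℕ}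
    (hW : Wcond σ) (hn1 : 1 ≤ n) (hn2 : n ≤ L - 1)
    (hp : DownPathN L σ x₀ n (tshift L (-(n : ℤ)) σ)) : False := by
  have key : ∀ m : ℕ, DownPathN L σ x₀ (m * n) (tshift L (-((m * n : ℕ) : ℤ)) σ) := by
    intro m
    induction m with
    | zero => simpa [tshift_zero] using DownPathN.refl σ x₀
    | succ k ih =>
      have hsh := downPathN_tshift (-((k * n : ℕ) : ℤ)) hp
      rw [tshift_tshift] at hsh
      have harr : x₀ + -((k * n : ℕ) : ℤ) • u L = x₀ - (k * n) • u L := by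
        rw [neg_zsmul, natCast_zsmul_u]; abel
      rw [harr] at hsh
      have := downPathN_trans ih hsh
      rw [show k * n + n = (k+1) * n from by ring] at this
      rwa [show -((k * n : ℕ) : ℤ) + -((n : ℕ) : ℤ) = -(((k+1) * n : ℕ) : ℤ) from by
        push_cast; ring] at this
  have hL2 := downPathN_le hL (key L) hW
  have : L * n ≥ L := Nat.le_mul_of_pos_right L (by omega)
  omega

/-- Edges at whites untouched by an up path are preserved. -/
lemma upPathN_keep {σ τ : Config L} {x : Pos L} {n : ℕ} (hp : UpPathN L σ x n τ)
    (w : Pos L) (d : Fin 3)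
    (hw : ∀ j < n, w ≠ x + j • u L ∧ w ≠ x + (j+1) • u L ∧ w ≠ x + j • u L - (0,1)) :
    ((w, d) ∈ τ ↔ (w, d) ∈ σ) := by
  induction hp with
  | refl => exact Iff.rfl
  | @step σ' x' n' τ' hc p ih =>
    have h0 := hw 0 (by omega)
    have hw0 : w ≠ x' := by simpa using h0.1
    have hw1 : w ≠ x' + u L := by
      have := h0.2.1
      rwa [show x' + (0+1) • u L = x' + u L from by simp] at this
    have hw2 : w ≠ x' - (0,1) := by
      have := h0.2.2
      rwa [show x' + (0:ℕ) • u L - (0,1) = x' - (0,1) from by simp] at this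
    have ihh : (w, d) ∈ τ' ↔ (w, d) ∈ upMove L σ' x' := by
      apply ih
      intro j hj
      have hj1 := hw (j+1) (by omega)
      refine ⟨?_, ?_, ?_⟩
      · rw [add_u_add_smul]; exact hj1.1
      · rw [add_u_add_smul]; exact hj1.2.1
      · rw [add_u_add_smul]; exact hj1.2.2
    rw [ihh, mem_upMove_far hw0 hw1 hw2]

lemma downPathN_keep {σ τ : Config L} {x : Pos L} {n : ℕ} (hp : DownPathN L σ x n τ)
    (w : Pos L) (d : Fin 3)
    (hw : ∀ j < n, w ≠ x - j • u L ∧ w ≠ x - (j+1) • u L ∧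
      w ≠ x - (j+1) • u L - (0,1)) :
    ((w, d) ∈ τ ↔ (w, d) ∈ σ) := by
  induction hp with
  | refl => exact Iff.rfl
  | @step σ' x' n' τ' hc p ih =>
    have h0 := hw 0 (by omega)
    have hw1' : w ≠ x' := by simpa using h0.1
    have hw0 : w ≠ x' - u L := by
      have := h0.2.1
      rwa [show x' - (0+1) • u L = x' - u L from by simp] at this
    have hw2 : w ≠ x' - u L - (0,1) := by
      have := h0.2.2
      rwa [show x' - ((0:ℕ)+1) • u L - (0,1) = x' - u L - (0,1) from by simp] at this
    have ihh : (w, d) ∈ τ' ↔ (w, d) ∈ downMove L σ' x' := by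
      apply ih
      intro j hj
      have hj1 := hw (j+1) (by omega)
      refine ⟨?_, ?_, ?_⟩
      · rw [sub_u_sub_smul]; exact hj1.1
      · rw [sub_u_sub_smul]; exact hj1.2.1
      · rw [sub_u_sub_smul]; exact hj1.2.2
    rw [ihh, mem_downMove_far hw0 hw1' hw2]

/-- An up-jump of a bead other than the tagged one keeps the tagged bead. -/
lemma upPathN_keep_bead (hL : 3 ≤ L) {σ τ : Config L} {x x₀ : Pos L} {n : ℕ}
    (hW : Wcond σ) (hb0 : (x₀, 0) ∈ σ) (hx : x ≠ x₀)
    (hp : UpPathN L σ x n τ) : (x₀, 0) ∈ τ := by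
  rw [upPathN_keep hp x₀ 0 ?_]
  · exact hb0
  intro j hj
  have hgates := upPathN_gates hL hp hW
  refine ⟨?_, ?_, ?_⟩
  · rcases Nat.eq_zero_or_pos j with h0 | h0
    · subst h0; simpa using hx.symm
    · have hg := hgates j h0 (by omega)
      intro hc
      rw [← hc] at hg
      exact absurd (hW.eq hg.1 hb0) (by decide)
  · have hg := hgates (j+1) (by omega) (by omega)
    intro hc
    rw [← hc] at hg
    exact absurd (hW.eq hg.1 hb0) (by decide)
  · have hg := hgates (j+1) (by omega) (by omega)
    intro hc
    have h2 := hg.2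
    rw [show x + (j+1) • u L - (1,0) = x + j • u L - (0,1) from ?_] at h2
    · rw [← hc] at h2
      exact absurd (hW.eq h2 hb0) (by decide)
    · rw [succ_nsmul, show x + (j • u L + u L) - (1,0) = (x + j • u L) + u L - (1,0) from by
        abel, addu_sub10]

lemma downPathN_keep_bead (hL : 3 ≤ L) {σ τ : Config L} {x x₀ : Pos L} {n : ℕ}
    (hW : Wcond σ) (hb0 : (x₀, 0) ∈ σ) (hx : x ≠ x₀)
    (hp : DownPathN L σ x n τ) : (x₀, 0) ∈ τ := by
  rw [downPathN_keep hp x₀ 0 ?_]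
  · exact hb0
  intro j hj
  have hgates := downPathN_gates hL hp hW
  refine ⟨?_, ?_, ?_⟩
  · rcases Nat.eq_zero_or_pos j with h0 | h0
    · subst h0; simpa using hx.symm
    · have hg := hgates j h0 (by omega)
      intro hc
      rw [← hc] at hg
      exact absurd (hW.eq hg.1 hb0) (by decide)
  · have hg := hgates (j+1) (by omega) (by omega)
    intro hc
    rw [← hc] at hg
    exact absurd (hW.eq hg.1 hb0) (by decide)
  · have hg := hgates (j+1) (by omega) (by omega)
    intro hc
    have h2 := hg.2
    rw [← hc] at h2
    exact absurd (hW.eq h2 hb0) (by decide)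

lemma upPathN_to_path {σ τ : Config L} {x : Pos L} {n : ℕ} (hp : UpPathN L σ x n τ) :
    UpPath L σ x (x + n • u L) τ := by
  induction hp with
  | refl σ' x' => simpa using UpPath.refl σ' x'
  | @step σ' x' n' τ' hc p ih =>
    refine UpPath.step hc ?_
    rwa [add_u_add_smul] at ih

lemma downPathN_to_path {σ τ : Config L} {x : Pos L} {n : ℕ} (hp : DownPathN L σ x n τ) :
    DownPath L σ x (x - n • u L) τ := by
  induction hp with
  | refl σ' x' => simpa using DownPath.refl σ' x'
  | @step σ' x' n' τ' hc p ih =>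
    refine DownPath.step hc ?_
    rwa [sub_u_sub_smul] at ih

lemma upPathN_isUpJump (hL : 3 ≤ L) {σ τ : Config L} {x : Pos L} {n : ℕ}
    (hn1 : 1 ≤ n) (hn2 : n ≤ L - 1) (hp : UpPathN L σ x n τ) : IsUpJump L σ τ :=
  ⟨x, x + n • u L, fun hc => nsmul_u_ne_zero hL hn1 (by omega) (add_eq_left.mp hc),
    upPathN_to_path hp⟩

lemma downPathN_isDownJump (hL : 3 ≤ L) {σ τ : Config L} {x : Pos L} {n : ℕ}
    (hn1 : 1 ≤ n) (hn2 : n ≤ L - 1) (hp : DownPathN L σ x n τ) : IsDownJump L σ τ :=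
  ⟨x, x - n • u L, fun hc => nsmul_u_ne_zero hL hn1 (by omega) (sub_eq_self.mp hc),
    downPathN_to_path hp⟩

end Aux8
section Aux9

open Finset
open scoped Classical

variable {L : ℕ} [NeZero L]

lemma tshift_cancel' (n : ℤ) (σ : Config L) : tshift L n (tshift L (-n) σ) = σ := by
  rw [tshift_tshift, add_neg_cancel, tshift_zero]

lemma tshift_mem_N (hL : 3 ≤ L) {N : Finset (Config L)}
    (hNshift : ∀ σ ∈ N, tshift L 1 σ ∈ N) {σ : Config L} (hσ : σ ∈ N) (k : ℤ) :
    tshift L k σ ∈ N := by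
  have hnat : ∀ m : ℕ, tshift L (m : ℤ) σ ∈ N := by
    intro m
    induction m with
    | zero => rwa [show ((0:ℕ):ℤ) = 0 from rfl, tshift_zero]
    | succ j ih =>
      have := hNshift _ ih
      rwa [tshift_tshift, show (1 + (j:ℤ)) = ((j+1 : ℕ) : ℤ) from by push_cast; ring] at this
  rw [tshift_eq_of_smul_eq (zsmul_mod k hL) σ]
  exact hnat _

lemma sum_out_up (hL : 3 ≤ L) {σ : Config L} (hpm : IsPM L σ) (x₀ : Pos L)
    (hb : (x₀, 0) ∈ σ) :
    ∑ τ' ∈ Finset.univ.erase σ, numUpHat L x₀ σ τ' = (upJumps σ).card := by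
  have hW : Wcond σ := hpm.1
  set F : Config L → Finset (Pos L × ℕ) := fun τ' =>
    (Finset.univ ×ˢ Finset.Icc 1 (L-1)).filter (fun p : Pos L × ℕ => upT x₀ p.1 p.2 σ τ') with hF
  have hdisj : ∀ τ₁ ∈ Finset.univ.erase σ, ∀ τ₂ ∈ Finset.univ.erase σ, τ₁ ≠ τ₂ →
      Disjoint (F τ₁) (F τ₂) := by
    intro τ₁ _ τ₂ _ hne
    rw [Finset.disjoint_left]
    intro p hp1 hp2
    simp only [hF, Finset.mem_filter] at hp1 hp2
    exact hne (upT_unique hp1.2 hp2.2)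
  have hbi : (Finset.univ.erase σ).biUnion F = upJumps σ := by
    ext ⟨x, n⟩
    simp only [Finset.mem_biUnion, hF, Finset.mem_filter, Finset.mem_product, Finset.mem_univ,
      true_and, Finset.mem_Icc, Finset.mem_erase, upJumps]
    constructor
    · rintro ⟨τ', ⟨hτne, -⟩, ⟨hn1, hn2⟩, hT⟩
      refine ⟨⟨hn1, hn2⟩, ?_⟩
      obtain ⟨m, rfl⟩ : ∃ m, n = m + 1 := ⟨n - 1, by omega⟩
      rcases hT with ⟨hx, hp⟩ | ⟨hx, s, hp, he⟩
      · exact ⟨(canUp_iff.mp (upPathN_canUp hp)).1, fun k hk1 hk2 => upPathN_gates hL hp hW k hk1 hk2⟩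
      · subst hx
        exact ⟨(canUp_iff.mp (upPathN_canUp hp)).1, fun k hk1 hk2 => upPathN_gates hL hp hW k hk1 hk2⟩
    · rintro ⟨⟨hn1, hn2⟩, hbx, hg⟩
      obtain ⟨τ0, hp⟩ := gates_upPathN hL hW hbx hg
      by_cases hx : x = x₀
      · subst hx
        refine ⟨tshift L (-(n:ℤ)) τ0, ⟨?_, trivial⟩, ⟨hn1, hn2⟩, Or.inr ⟨rfl, τ0, hp, rfl⟩⟩
        intro hc
        have hτ0 : τ0 = tshift L (n:ℤ) σ := by
          rw [← hc, tshift_cancel']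
        rw [hτ0] at hp
        exact upPathN_ne_tshift hL hW hn1 hn2 hp
      · exact ⟨τ0, ⟨upPathN_ne_self hL hW hn1 hp, trivial⟩, ⟨hn1, hn2⟩, Or.inl ⟨hx, hp⟩⟩
  calc ∑ τ' ∈ Finset.univ.erase σ, numUpHat L x₀ σ τ'
      = ∑ τ' ∈ Finset.univ.erase σ, (F τ').card :=
        Finset.sum_congr rfl (fun τ' _ => numUpHat_eq hL hW x₀ τ')
    _ = ((Finset.univ.erase σ).biUnion F).card := (Finset.card_biUnion hdisj).symm
    _ = (upJumps σ).card := by rw [hbi]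

lemma sum_out_down (hL : 3 ≤ L) {σ : Config L} (hpm : IsPM L σ) (x₀ : Pos L)
    (hb : (x₀, 0) ∈ σ) :
    ∑ τ' ∈ Finset.univ.erase σ, numDownHat L x₀ σ τ' = (downJumps σ).card := by
  have hW : Wcond σ := hpm.1
  set F : Config L → Finset (Pos L × ℕ) := fun τ' =>
    (Finset.univ ×ˢ Finset.Icc 1 (L-1)).filter (fun p : Pos L × ℕ => downT x₀ p.1 p.2 σ τ') with hF
  have hdisj : ∀ τ₁ ∈ Finset.univ.erase σ, ∀ τ₂ ∈ Finset.univ.erase σ, τ₁ ≠ τ₂ →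
      Disjoint (F τ₁) (F τ₂) := by
    intro τ₁ _ τ₂ _ hne
    rw [Finset.disjoint_left]
    intro p hp1 hp2
    simp only [hF, Finset.mem_filter] at hp1 hp2
    exact hne (downT_unique hp1.2 hp2.2)
  have hbi : (Finset.univ.erase σ).biUnion F = downJumps σ := by
    ext ⟨x, n⟩
    simp only [Finset.mem_biUnion, hF, Finset.mem_filter, Finset.mem_product, Finset.mem_univ,
      true_and, Finset.mem_Icc, Finset.mem_erase, downJumps]
    constructor
    · rintro ⟨τ', ⟨hτne, -⟩, ⟨hn1, hn2⟩, hT⟩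
      refine ⟨⟨hn1, hn2⟩, ?_⟩
      obtain ⟨m, rfl⟩ : ∃ m, n = m + 1 := ⟨n - 1, by omega⟩
      rcases hT with ⟨hx, hp⟩ | ⟨hx, s, hp, he⟩
      · exact ⟨(canDown_iff.mp (downPathN_canDown hp)).1,
          fun k hk1 hk2 => downPathN_gates hL hp hW k hk1 hk2⟩
      · subst hx
        exact ⟨(canDown_iff.mp (downPathN_canDown hp)).1,
          fun k hk1 hk2 => downPathN_gates hL hp hW k hk1 hk2⟩
    · rintro ⟨⟨hn1, hn2⟩, hbx, hg⟩
      obtain ⟨τ0, hp⟩ := gates_downPathN hL hW hbx hg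
      by_cases hx : x = x₀
      · subst hx
        refine ⟨tshift L ((n:ℤ)) τ0, ⟨?_, trivial⟩, ⟨hn1, hn2⟩, Or.inr ⟨rfl, τ0, hp, rfl⟩⟩
        intro hc
        have hτ0 : τ0 = tshift L (-(n:ℤ)) σ := by
          rw [← hc, tshift_cancel]
        rw [hτ0] at hp
        exact downPathN_ne_tshift hL hW hn1 hn2 hp
      · exact ⟨τ0, ⟨downPathN_ne_self hL hW hn1 hp, trivial⟩, ⟨hn1, hn2⟩, Or.inl ⟨hx, hp⟩⟩
  calc ∑ τ' ∈ Finset.univ.erase σ, numDownHat L x₀ σ τ'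
      = ∑ τ' ∈ Finset.univ.erase σ, (F τ').card :=
        Finset.sum_congr rfl (fun τ' _ => numDownHat_eq hL hW x₀ τ')
    _ = ((Finset.univ.erase σ).biUnion F).card := (Finset.card_biUnion hdisj).symm
    _ = (downJumps σ).card := by rw [hbi]

lemma upT_src_unique {x₀ x : Pos L} {n : ℕ} {σ σ₁ σ₂ : Config L}
    (hW1 : Wcond σ₁) (hW2 : Wcond σ₂) (hL : 3 ≤ L)
    (h1 : upT x₀ x n σ₁ σ) (h2 : upT x₀ x n σ₂ σ) : σ₁ = σ₂ := by
  rcases h1 with ⟨hx, hp1⟩ | ⟨hx, s1, hp1, he1⟩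
  · rcases h2 with ⟨-, hp2⟩ | ⟨hx2, -⟩
    · exact downPathN_unique (upPathN_rev hL hp1 hW1) (upPathN_rev hL hp2 hW2)
    · exact absurd hx2 hx
  · rcases h2 with ⟨hx2, -⟩ | ⟨-, s2, hp2, he2⟩
    · exact absurd hx hx2
    · have hs : s1 = s2 := by
        have e1 : s1 = tshift L (n:ℤ) σ := by rw [he1, tshift_cancel']
        have e2 : s2 = tshift L (n:ℤ) σ := by rw [he2, tshift_cancel']
        rw [e1, e2]
      rw [hs] at hp1
      exact downPathN_unique (upPathN_rev hL hp1 hW1) (upPathN_rev hL hp2 hW2)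

lemma downT_src_unique {x₀ x : Pos L} {n : ℕ} {σ σ₁ σ₂ : Config L}
    (hW1 : Wcond σ₁) (hW2 : Wcond σ₂) (hL : 3 ≤ L)
    (h1 : downT x₀ x n σ₁ σ) (h2 : downT x₀ x n σ₂ σ) : σ₁ = σ₂ := by
  rcases h1 with ⟨hx, hp1⟩ | ⟨hx, s1, hp1, he1⟩
  · rcases h2 with ⟨-, hp2⟩ | ⟨hx2, -⟩
    · exact upPathN_unique (downPathN_rev hL hp1 hW1) (downPathN_rev hL hp2 hW2)
    · exact absurd hx2 hx
  · rcases h2 with ⟨hx2, -⟩ | ⟨-, s2, hp2, he2⟩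
    · exact absurd hx hx2
    · have hs : s1 = s2 := by
        have e1 : s1 = tshift L (-(n:ℤ)) σ := by rw [he1, tshift_cancel]
        have e2 : s2 = tshift L (-(n:ℤ)) σ := by rw [he2, tshift_cancel]
        rw [e1, e2]
      rw [hs] at hp1
      exact upPathN_unique (downPathN_rev hL hp1 hW1) (downPathN_rev hL hp2 hW2)

lemma zsmul_coe_add_cancel (x : Pos L) (n : ℕ) : x + n • u L + (-(n:ℤ)) • u L = x := by
  rw [neg_zsmul, natCast_zsmul_u]
  abel

lemma zsmul_coe_sub_cancel (x : Pos L) (n : ℕ) : x - n • u L + ((n:ℤ)) • u L = x := by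
  rw [natCast_zsmul_u]
  abel

lemma sum_in_up (hL : 3 ≤ L) {N : Finset (Config L)} (hNpm : ∀ σ ∈ N, IsPM L σ)
    (hNdown : ∀ σ ∈ N, ∀ τ : Config L, IsDownJump L σ τ → τ ∈ N)
    (hNshift : ∀ σ ∈ N, tshift L 1 σ ∈ N)
    (x₀ : Pos L) {σ : Config L} (hσN : σ ∈ N) (hb : (x₀, 0) ∈ σ) :
    ∑ σ' ∈ (N.filter (fun ρ => ((x₀, (0 : Fin 3)) ∈ ρ))).erase σ, numUpHat L x₀ σ' σ
      = (downJumps σ).card := by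
  have hW : Wcond σ := (hNpm σ hσN).1
  set NH := N.filter (fun ρ => ((x₀, (0 : Fin 3)) ∈ ρ)) with hNH
  set F : Config L → Finset (Pos L × ℕ) := fun σ' =>
    (Finset.univ ×ˢ Finset.Icc 1 (L-1)).filter (fun p : Pos L × ℕ => upT x₀ p.1 p.2 σ' σ) with hF
  have hWof : ∀ σ' ∈ NH.erase σ, Wcond σ' := by
    intro σ' hσ'
    exact (hNpm σ' (Finset.mem_filter.mp (Finset.mem_of_mem_erase hσ')).1).1
  have hdisj : ∀ τ₁ ∈ NH.erase σ, ∀ τ₂ ∈ NH.erase σ, τ₁ ≠ τ₂ → Disjoint (F τ₁) (F τ₂) := by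
    intro τ₁ h1 τ₂ h2 hne
    rw [Finset.disjoint_left]
    intro p hp1 hp2
    simp only [hF, Finset.mem_filter] at hp1 hp2
    exact hne (upT_src_unique (hWof τ₁ h1) (hWof τ₂ h2) hL hp1.2 hp2.2)
  have hbi : (NH.erase σ).biUnion F =
      (downJumps σ).image (fun p : Pos L × ℕ => (if p.1 = x₀ then x₀ else p.1 - p.2 • u L, p.2)) := by
    ext ⟨x, n⟩
    simp only [Finset.mem_biUnion, hF, Finset.mem_filter, Finset.mem_product, Finset.mem_univ,
      true_and, Finset.mem_Icc, Finset.mem_erase, Finset.mem_image, downJumps, hNH]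
    constructor
    · rintro ⟨σ', ⟨hne, hσ'N, hσ'b⟩, ⟨hn1, hn2⟩, hT⟩
      have hW' : Wcond σ' := (hNpm σ' hσ'N).1
      rcases hT with ⟨hx, hp⟩ | ⟨hx, s, hp, he⟩
      · obtain ⟨m, hm⟩ : ∃ m, n = m + 1 := ⟨n - 1, by omega⟩
        have hbx : (x, 0) ∈ σ' := by
          rw [hm] at hp
          exact (canUp_iff.mp (upPathN_canUp hp)).1
        have hd : DownPathN L σ (x + n • u L) n σ' := upPathN_rev hL hp hW'
        have hbead : (x + n • u L, 0) ∈ σ := upPathN_final_bead hp hbx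
        have hgσ' : Gp σ' (x + n • u L) := upPathN_gates hL hp hW' n hn1 le_rfl
        have hxz : x + n • u L ≠ x₀ := by
          intro hc
          rw [hc] at hgσ'
          exact absurd (hW'.eq hgσ'.1 hσ'b) (by decide)
        refine ⟨(x + n • u L, n), ⟨⟨hn1, hn2⟩, hbead, ?_⟩, ?_⟩
        · exact fun k hk1 hk2 => downPathN_gates hL hd hW k hk1 hk2
        · rw [if_neg hxz, Prod.mk.injEq]
          exact ⟨by rw [add_sub_cancel_right], rfl⟩
      · have hρ : s = tshift L (n:ℤ) σ := by rw [he, tshift_cancel']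
        have hd0 : DownPathN L s (x₀ + n • u L) n σ' := upPathN_rev hL hp hW'
        have hd1 := downPathN_tshift (-(n:ℤ)) hd0
        rw [zsmul_coe_add_cancel] at hd1
        rw [show tshift L (-(n:ℤ)) s = σ from by rw [hρ, tshift_cancel]] at hd1
        refine ⟨(x₀, n), ⟨⟨hn1, hn2⟩, hb, ?_⟩, ?_⟩
        · exact fun k hk1 hk2 => downPathN_gates hL hd1 hW k hk1 hk2
        · rw [if_pos rfl, Prod.mk.injEq]
          exact ⟨hx.symm, rfl⟩
    · rintro ⟨⟨z, m⟩, ⟨⟨hn1, hn2⟩, hbz, hg⟩, heq⟩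
      rw [Prod.mk.injEq] at heq
      have hxe : (if z = x₀ then x₀ else z - m • u L) = x := heq.1
      have hmn : m = n := heq.2
      subst hmn
      have hn1' : 1 ≤ m := hn1
      have hn2' : m ≤ L - 1 := hn2
      have hbz' : (z, (0:Fin 3)) ∈ σ := hbz
      have hg' : ∀ k, 1 ≤ k → k ≤ m → Gm σ (z - k • u L) := hg
      obtain ⟨τ0, hp⟩ := gates_downPathN hL hW hbz' hg'
      have hτ0N : τ0 ∈ N := hNdown σ hσN τ0 (downPathN_isDownJump hL hn1' hn2' hp)
      by_cases hz : z = x₀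
      · subst hz
        rw [if_pos rfl] at hxe
        refine ⟨tshift L ((m:ℤ)) τ0, ⟨?_, ?_, ?_⟩, ⟨hn1', hn2'⟩, Or.inr ⟨hxe.symm, ?_⟩⟩
        · intro hc
          have hc2 : τ0 = tshift L (-(m:ℤ)) σ := by rw [← hc, tshift_cancel]
          rw [hc2] at hp
          exact downPathN_ne_tshift hL hW hn1' hn2' hp
        · exact tshift_mem_N hL hNshift hτ0N _
        · rw [mem_tshift]
          have hfb := downPathN_final_bead hp hbz'
          rwa [show (z : Pos L) - (m:ℤ) • u L = z - m • u L from by rw [natCast_zsmul_u]]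
        · refine ⟨tshift L ((m:ℤ)) σ, ?_, (tshift_cancel (m:ℤ) σ).symm⟩
          have hu0 : UpPathN L τ0 (z - m • u L) m σ := downPathN_rev hL hp hW
          have hu1 := upPathN_tshift ((m:ℤ)) hu0
          rwa [zsmul_coe_sub_cancel] at hu1
      · rw [if_neg hz] at hxe
        have hxne : z - m • u L ≠ x₀ := by
          have hgm : Gm σ (z - m • u L) := hg' m hn1' le_rfl
          intro hc
          rw [hc] at hgm
          exact absurd (hW.eq hgm.1 hb) (by decide)
        subst hxe
        refine ⟨τ0, ⟨downPathN_ne_self hL hW hn1' hp, hτ0N,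
          downPathN_keep_bead hL hW hb hz hp⟩, ⟨hn1', hn2'⟩,
          Or.inl ⟨hxne, downPathN_rev hL hp hW⟩⟩
  have hinj : Set.InjOn (fun p : Pos L × ℕ => (if p.1 = x₀ then x₀ else p.1 - p.2 • u L, p.2))
      ↑(downJumps σ) := by
    rintro ⟨z, n⟩ h1 ⟨z', n'⟩ h2 heq
    simp only [Finset.coe_sort_coe, Finset.mem_coe, downJumps, Finset.mem_filter,
      Finset.mem_product, Finset.mem_univ, true_and, Finset.mem_Icc] at h1 h2
    rw [Prod.mk.injEq] at heq
    obtain ⟨he1, rfl⟩ : _ ∧ n = n' := ⟨heq.1, heq.2⟩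
    rw [Prod.mk.injEq]
    refine ⟨?_, rfl⟩
    by_cases hz : z = x₀ <;> by_cases hz' : z' = x₀
    · rw [hz, hz']
    · exfalso
      rw [if_pos hz, if_neg hz'] at he1
      have hgm : Gm σ (z' - n • u L) := h2.2.2 n h2.1.1 le_rfl
      rw [← he1] at hgm
      exact absurd (hW.eq hgm.1 hb) (by decide)
    · exfalso
      rw [if_neg hz, if_pos hz'] at he1
      have hgm : Gm σ (z - n • u L) := h1.2.2 n h1.1.1 le_rfl
      rw [he1] at hgm
      exact absurd (hW.eq hgm.1 hb) (by decide)
    · rw [if_neg hz, if_neg hz'] at he1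
      exact sub_left_injective he1
  calc ∑ σ' ∈ NH.erase σ, numUpHat L x₀ σ' σ
      = ∑ σ' ∈ NH.erase σ, (F σ').card :=
        Finset.sum_congr rfl (fun σ' hσ' => numUpHat_eq hL (hWof σ' hσ') x₀ σ)
    _ = ((NH.erase σ).biUnion F).card := (Finset.card_biUnion hdisj).symm
    _ = (downJumps σ).card := by rw [hbi, Finset.card_image_of_injOn hinj]

lemma sum_in_down (hL : 3 ≤ L) {N : Finset (Config L)} (hNpm : ∀ σ ∈ N, IsPM L σ)
    (hNup : ∀ σ ∈ N, ∀ τ : Config L, IsUpJump L σ τ → τ ∈ N)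
    (hNshift : ∀ σ ∈ N, tshift L 1 σ ∈ N)
    (x₀ : Pos L) {σ : Config L} (hσN : σ ∈ N) (hb : (x₀, 0) ∈ σ) :
    ∑ σ' ∈ (N.filter (fun ρ => ((x₀, (0 : Fin 3)) ∈ ρ))).erase σ, numDownHat L x₀ σ' σ
      = (upJumps σ).card := by
  have hW : Wcond σ := (hNpm σ hσN).1
  set NH := N.filter (fun ρ => ((x₀, (0 : Fin 3)) ∈ ρ)) with hNH
  set F : Config L → Finset (Pos L × ℕ) := fun σ' =>
    (Finset.univ ×ˢ Finset.Icc 1 (L-1)).filter (fun p : Pos L × ℕ => downT x₀ p.1 p.2 σ' σ) with hF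
  have hWof : ∀ σ' ∈ NH.erase σ, Wcond σ' := by
    intro σ' hσ'
    exact (hNpm σ' (Finset.mem_filter.mp (Finset.mem_of_mem_erase hσ')).1).1
  have hdisj : ∀ τ₁ ∈ NH.erase σ, ∀ τ₂ ∈ NH.erase σ, τ₁ ≠ τ₂ → Disjoint (F τ₁) (F τ₂) := by
    intro τ₁ h1 τ₂ h2 hne
    rw [Finset.disjoint_left]
    intro p hp1 hp2
    simp only [hF, Finset.mem_filter] at hp1 hp2
    exact hne (downT_src_unique (hWof τ₁ h1) (hWof τ₂ h2) hL hp1.2 hp2.2)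
  have hbi : (NH.erase σ).biUnion F =
      (upJumps σ).image (fun p : Pos L × ℕ => (if p.1 = x₀ then x₀ else p.1 + p.2 • u L, p.2)) := by
    ext ⟨x, n⟩
    simp only [Finset.mem_biUnion, hF, Finset.mem_filter, Finset.mem_product, Finset.mem_univ,
      true_and, Finset.mem_Icc, Finset.mem_erase, Finset.mem_image, upJumps, hNH]
    constructor
    · rintro ⟨σ', ⟨hne, hσ'N, hσ'b⟩, ⟨hn1, hn2⟩, hT⟩
      have hW' : Wcond σ' := (hNpm σ' hσ'N).1
      rcases hT with ⟨hx, hp⟩ | ⟨hx, s, hp, he⟩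
      · obtain ⟨m, hm⟩ : ∃ m, n = m + 1 := ⟨n - 1, by omega⟩
        have hbx : (x, 0) ∈ σ' := by
          rw [hm] at hp
          exact (canDown_iff.mp (downPathN_canDown hp)).1
        have hd : UpPathN L σ (x - n • u L) n σ' := downPathN_rev hL hp hW'
        have hbead : (x - n • u L, 0) ∈ σ := downPathN_final_bead hp hbx
        have hgσ' : Gm σ' (x - n • u L) := downPathN_gates hL hp hW' n hn1 le_rfl
        have hxz : x - n • u L ≠ x₀ := by
          intro hc
          rw [hc] at hgσ'
          exact absurd (hW'.eq hgσ'.1 hσ'b) (by decide)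
        refine ⟨(x - n • u L, n), ⟨⟨hn1, hn2⟩, hbead, ?_⟩, ?_⟩
        · exact fun k hk1 hk2 => upPathN_gates hL hd hW k hk1 hk2
        · rw [if_neg hxz, Prod.mk.injEq]
          exact ⟨by rw [sub_add_cancel], rfl⟩
      · have hρ : s = tshift L (-(n:ℤ)) σ := by rw [he, tshift_cancel]
        have hd0 : UpPathN L s (x₀ - n • u L) n σ' := downPathN_rev hL hp hW'
        have hd1 := upPathN_tshift ((n:ℤ)) hd0
        rw [zsmul_coe_sub_cancel] at hd1
        rw [show tshift L ((n:ℤ)) s = σ from by rw [hρ, tshift_cancel']] at hd1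
        refine ⟨(x₀, n), ⟨⟨hn1, hn2⟩, hb, ?_⟩, ?_⟩
        · exact fun k hk1 hk2 => upPathN_gates hL hd1 hW k hk1 hk2
        · rw [if_pos rfl, Prod.mk.injEq]
          exact ⟨hx.symm, rfl⟩
    · rintro ⟨⟨z, m⟩, ⟨⟨hn1, hn2⟩, hbz, hg⟩, heq⟩
      rw [Prod.mk.injEq] at heq
      have hxe : (if z = x₀ then x₀ else z + m • u L) = x := heq.1
      have hmn : m = n := heq.2
      subst hmn
      have hn1' : 1 ≤ m := hn1
      have hn2' : m ≤ L - 1 := hn2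
      have hbz' : (z, (0:Fin 3)) ∈ σ := hbz
      have hg' : ∀ k, 1 ≤ k → k ≤ m → Gp σ (z + k • u L) := hg
      obtain ⟨τ0, hp⟩ := gates_upPathN hL hW hbz' hg'
      have hτ0N : τ0 ∈ N := hNup σ hσN τ0 (upPathN_isUpJump hL hn1' hn2' hp)
      by_cases hz : z = x₀
      · subst hz
        rw [if_pos rfl] at hxe
        refine ⟨tshift L (-(m:ℤ)) τ0, ⟨?_, ?_, ?_⟩, ⟨hn1', hn2'⟩, Or.inr ⟨hxe.symm, ?_⟩⟩
        · intro hc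
          have hc2 : τ0 = tshift L ((m:ℤ)) σ := by rw [← hc, tshift_cancel']
          rw [hc2] at hp
          exact upPathN_ne_tshift hL hW hn1' hn2' hp
        · exact tshift_mem_N hL hNshift hτ0N _
        · rw [mem_tshift]
          have hfb := upPathN_final_bead hp hbz'
          rwa [show (z : Pos L) - (-(m:ℤ)) • u L = z + m • u L from by
            rw [neg_zsmul, natCast_zsmul_u]; abel]
        · refine ⟨tshift L (-(m:ℤ)) σ, ?_, (tshift_cancel' (m:ℤ) σ).symm⟩
          have hu0 : DownPathN L τ0 (z + m • u L) m σ := upPathN_rev hL hp hW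
          have hu1 := downPathN_tshift (-(m:ℤ)) hu0
          rwa [zsmul_coe_add_cancel] at hu1
      · rw [if_neg hz] at hxe
        have hxne : z + m • u L ≠ x₀ := by
          have hgp : Gp σ (z + m • u L) := hg' m hn1' le_rfl
          intro hc
          rw [hc] at hgp
          exact absurd (hW.eq hgp.1 hb) (by decide)
        subst hxe
        refine ⟨τ0, ⟨upPathN_ne_self hL hW hn1' hp, hτ0N,
          upPathN_keep_bead hL hW hb hz hp⟩, ⟨hn1', hn2'⟩,
          Or.inl ⟨hxne, upPathN_rev hL hp hW⟩⟩
  have hinj : Set.InjOn (fun p : Pos L × ℕ => (if p.1 = x₀ then x₀ else p.1 + p.2 • u L, p.2))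
      ↑(upJumps σ) := by
    rintro ⟨z, n⟩ h1 ⟨z', n'⟩ h2 heq
    simp only [Finset.coe_sort_coe, Finset.mem_coe, upJumps, Finset.mem_filter,
      Finset.mem_product, Finset.mem_univ, true_and, Finset.mem_Icc] at h1 h2
    rw [Prod.mk.injEq] at heq
    obtain ⟨he1, rfl⟩ : _ ∧ n = n' := ⟨heq.1, heq.2⟩
    rw [Prod.mk.injEq]
    refine ⟨?_, rfl⟩
    by_cases hz : z = x₀ <;> by_cases hz' : z' = x₀
    · rw [hz, hz']
    · exfalso
      rw [if_pos hz, if_neg hz'] at he1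
      have hgp : Gp σ (z' + n • u L) := h2.2.2 n h2.1.1 le_rfl
      rw [← he1] at hgp
      exact absurd (hW.eq hgp.1 hb) (by decide)
    · exfalso
      rw [if_neg hz, if_pos hz'] at he1
      have hgp : Gp σ (z + n • u L) := h1.2.2 n h1.1.1 le_rfl
      rw [he1] at hgp
      exact absurd (hW.eq hgp.1 hb) (by decide)
    · rw [if_neg hz, if_neg hz'] at he1
      exact add_right_cancel he1
  calc ∑ σ' ∈ NH.erase σ, numDownHat L x₀ σ' σ
      = ∑ σ' ∈ NH.erase σ, (F σ').card :=
        Finset.sum_congr rfl (fun σ' hσ' => numDownHat_eq hL (hWof σ' hσ') x₀ σ)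
    _ = ((NH.erase σ).biUnion F).card := (Finset.card_biUnion hdisj).symm
    _ = (upJumps σ).card := by rw [hbi, Finset.card_image_of_injOn hinj]

end Aux9
/-- Let `L ≥ 3`, `p, q ≥ 0`, fix a horizontal edge `x₀` of the hexagonal
torus `T_L`, and let `N` be a nonempty set of perfect matchings of `T_L` closed under
single-bead up-jumps, down-jumps and the vertical translation `τ`.  Let
`N̂ = {σ ∈ N : σ has a bead at x₀}`, assumed nonempty.  Then the uniform probability
measure `π̂` on `N̂` is stationary for the tagged-bead generator `𝓛̂`:
for every `σ ∈ N̂`, `∑_{σ' ∈ N̂} π̂(σ')·𝓛̂(σ',σ) = 0`. -/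
theorem uniform_stationary_tagged [NeZero L] (hL : 3 ≤ L)
    (p q : ℝ) (hp : 0 ≤ p) (hq : 0 ≤ q) (x₀ : Pos L)
    (N : Finset (Config L)) (hNpm : ∀ σ ∈ N, IsPM L σ)
    (hNup : ∀ σ ∈ N, ∀ τ : Config L, IsUpJump L σ τ → τ ∈ N)
    (hNdown : ∀ σ ∈ N, ∀ τ : Config L, IsDownJump L σ τ → τ ∈ N)
    (hNshift : ∀ σ ∈ N, tshift L 1 σ ∈ N)
    (hNhatne : (N.filter (fun σ => ((x₀, (0 : Fin 3)) ∈ σ))).Nonempty)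
    (σ : Config L) (hσ : σ ∈ N.filter (fun σ => ((x₀, (0 : Fin 3)) ∈ σ))) :
    ∑ σ' ∈ N.filter (fun σ => ((x₀, (0 : Fin 3)) ∈ σ)),
        (((N.filter (fun σ => ((x₀, (0 : Fin 3)) ∈ σ))).card : ℝ))⁻¹ *
          HatGen L x₀ p q σ' σ = 0 := by
  classical
  obtain ⟨hσN, hσb⟩ := Finset.mem_filter.mp hσ
  have hpm : IsPM L σ := hNpm σ hσN
  have hW : Wcond σ := hpm.1
  rw [← Finset.mul_sum]
  suffices h : ∑ σ' ∈ N.filter (fun σ => ((x₀, (0 : Fin 3)) ∈ σ)), HatGen L x₀ p q σ' σ = 0 by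
    rw [h, mul_zero]
  rw [← Finset.add_sum_erase _ _ hσ]
  have hdiag : HatGen L x₀ p q σ σ =
      -∑ τ' ∈ Finset.univ.erase σ,
        (p * (numUpHat L x₀ σ τ' : ℝ) + q * (numDownHat L x₀ σ τ' : ℝ)) := by
    unfold HatGen
    rw [if_pos rfl]
  have hoff : ∀ σ' ∈ (N.filter (fun σ => ((x₀, (0 : Fin 3)) ∈ σ))).erase σ,
      HatGen L x₀ p q σ' σ =
        p * (numUpHat L x₀ σ' σ : ℝ) + q * (numDownHat L x₀ σ' σ : ℝ) := by
    intro σ' hσ'2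
    unfold HatGen
    rw [if_neg (fun hc => (Finset.mem_erase.mp hσ'2).1 hc.symm)]
  rw [hdiag, Finset.sum_congr rfl hoff]
  have e1 : ∑ σ' ∈ (N.filter (fun σ => ((x₀, (0 : Fin 3)) ∈ σ))).erase σ,
      (p * (numUpHat L x₀ σ' σ : ℝ) + q * (numDownHat L x₀ σ' σ : ℝ))
      = p * ((downJumps σ).card : ℝ) + q * ((upJumps σ).card : ℝ) := by
    rw [Finset.sum_add_distrib, ← Finset.mul_sum, ← Finset.mul_sum,
      ← Nat.cast_sum, ← Nat.cast_sum,
      sum_in_up hL hNpm hNdown hNshift x₀ hσN hσb,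
      sum_in_down hL hNpm hNup hNshift x₀ hσN hσb]
  have e2 : ∑ τ' ∈ Finset.univ.erase σ,
      (p * (numUpHat L x₀ σ τ' : ℝ) + q * (numDownHat L x₀ σ τ' : ℝ))
      = p * ((upJumps σ).card : ℝ) + q * ((downJumps σ).card : ℝ) := by
    rw [Finset.sum_add_distrib, ← Finset.mul_sum, ← Finset.mul_sum,
      ← Nat.cast_sum, ← Nat.cast_sum,
      sum_out_up hL hpm x₀ hσb, sum_out_down hL hpm x₀ hσb]
  rw [e1, e2, card_upJumps_eq_downJumps hL hpm hσb]
  ring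

end HexDimer
end

section
/- Let k₁, k₂, k₃ > 0, P̃(θ,φ) = k₃ + k₁e^{iθ} + k₂e^{iφ}, and assume C := (2π)^{−2}·∫₀^{2π}∫₀^{2π} |P̃(θ,φ)|^{−1} dθ dφ < ∞. For x, x' ∈ ℤ² let K⁻¹(x,x') = (2π)^{−2}·∫₀^{2π}∫₀^{2π} e^{−iθ(x'₂−x₂)+iφ(x'₁−x₁)} / P̃(θ,φ) dθ dφ. Then for every r ≥ 1 and all points x^{(1)}, …, x^{(r)}, x'^{(1)}, …, x'^{(r)} ∈ ℤ²: |det( (K⁻¹(x^{(i)}, x'^{(j)}))_{1≤i,j≤r} )| ≤ Cʳ. -/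
open MeasureTheory intervalIntegral Real Complex

namespace Kasteleyn

/-- The Kasteleyn polynomial on the torus: `P̃(θ,φ) = k₃ + k₁ e^{iθ} + k₂ e^{iφ}`. -/
noncomputable def Pt (k1 k2 k3 : ℝ) (θ φ : ℝ) : ℂ :=
  (k3 : ℂ) + (k1 : ℂ) * Complex.exp (Complex.I * θ) + (k2 : ℂ) * Complex.exp (Complex.I * φ)

/-- `C = (2π)^{−2} ∫₀^{2π}∫₀^{2π} |P̃(θ,φ)|^{−1} dθ dφ`. -/
noncomputable def Cconst (k1 k2 k3 : ℝ) : ℝ :=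
  ((2 * π) ^ 2)⁻¹ * ∫ θ in (0 : ℝ)..(2 * π), ∫ φ in (0 : ℝ)..(2 * π),
    ‖Pt k1 k2 k3 θ φ‖⁻¹

/-- The inverse Kasteleyn kernel
`K⁻¹(x,x') = (2π)^{−2} ∫₀^{2π}∫₀^{2π} e^{−iθ(x'₂−x₂)+iφ(x'₁−x₁)} / P̃(θ,φ) dθ dφ`. -/
noncomputable def Kinv (k1 k2 k3 : ℝ) (x x' : ℤ × ℤ) : ℂ :=
  (((2 * π) ^ 2)⁻¹ : ℝ) * ∫ θ in (0 : ℝ)..(2 * π), ∫ φ in (0 : ℝ)..(2 * π),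
    Complex.exp (-Complex.I * θ * ((x'.2 - x.2 : ℤ) : ℂ) +
        Complex.I * φ * ((x'.1 - x.1 : ℤ) : ℂ)) / Pt k1 k2 k3 θ φ

/-- `A_x(y) = (2π)^{−2} ∫∫ e^{−iθ(x₂−y₂)+iφ(x₁−y₁)} |P̃(θ,φ)|^{−1/2} dθ dφ`. -/
noncomputable def Afn (k1 k2 k3 : ℝ) (x y : ℤ × ℤ) : ℂ :=
  (((2 * π) ^ 2)⁻¹ : ℝ) * ∫ θ in (0 : ℝ)..(2 * π), ∫ φ in (0 : ℝ)..(2 * π),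
    Complex.exp (-Complex.I * θ * ((x.2 - y.2 : ℤ) : ℂ) +
        Complex.I * φ * ((x.1 - y.1 : ℤ) : ℂ)) *
      ((‖Pt k1 k2 k3 θ φ‖ ^ (-(1 / 2 : ℝ)) : ℝ) : ℂ)

/-- `B_{x'}(y) = (2π)^{−2} ∫∫ e^{−iθ(x'₂−y₂)+iφ(x'₁−y₁)} conj(P̃(θ,φ)) |P̃(θ,φ)|^{−3/2} dθ dφ`. -/
noncomputable def Bfn (k1 k2 k3 : ℝ) (x' y : ℤ × ℤ) : ℂ :=
  (((2 * π) ^ 2)⁻¹ : ℝ) * ∫ θ in (0 : ℝ)..(2 * π), ∫ φ in (0 : ℝ)..(2 * π),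
    Complex.exp (-Complex.I * θ * ((x'.2 - y.2 : ℤ) : ℂ) +
        Complex.I * φ * ((x'.1 - y.1 : ℤ) : ℂ)) *
      (starRingEnd ℂ) (Pt k1 k2 k3 θ φ) *
      ((‖Pt k1 k2 k3 θ φ‖ ^ (-(3 / 2 : ℝ)) : ℝ) : ℂ)

section Part2

variable {k1 k2 k3 : ℝ}

/-- Auxiliary function `u_x(θ,φ) = e^{-iθx₂+iφx₁} |P̃|^{-1/2}` (via `sqrt`). -/
noncomputable def uFn (k1 k2 k3 : ℝ) (x : ℤ × ℤ) (p : ℝ × ℝ) : ℂ :=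
  Complex.exp (-Complex.I * p.1 * (x.2 : ℂ) + Complex.I * p.2 * (x.1 : ℂ)) *
    ((Real.sqrt (‖Pt k1 k2 k3 p.1 p.2‖)⁻¹ : ℝ) : ℂ)

/-- Auxiliary function `v_x(θ,φ) = e^{-iθx₂+iφx₁} conj(P̃) |P̃|^{-3/2}` (via `sqrt`). -/
noncomputable def vFn (k1 k2 k3 : ℝ) (x : ℤ × ℤ) (p : ℝ × ℝ) : ℂ :=
  Complex.exp (-Complex.I * p.1 * (x.2 : ℂ) + Complex.I * p.2 * (x.1 : ℂ)) *
    (starRingEnd ℂ) (Pt k1 k2 k3 p.1 p.2) *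
    ((Real.sqrt (‖Pt k1 k2 k3 p.1 p.2‖)⁻¹ ^ 3 : ℝ) : ℂ)

lemma abs_exp_imag (θ φ : ℝ) (m n : ℤ) :
    ‖Complex.exp (-Complex.I * θ * (m : ℂ) + Complex.I * φ * (n : ℂ))‖ = 1 := by
  rw [Complex.norm_exp]
  have : (-Complex.I * θ * (m : ℂ) + Complex.I * φ * (n : ℂ)).re = 0 := by simp
  rw [this, Real.exp_zero]

lemma continuous_Pt : Continuous fun p : ℝ × ℝ => Pt k1 k2 k3 p.1 p.2 := by
  unfold Pt
  fun_prop

lemma continuous_exp_imag (m n : ℤ) :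
    Continuous fun p : ℝ × ℝ =>
      Complex.exp (-Complex.I * p.1 * (m : ℂ) + Complex.I * p.2 * (n : ℂ)) := by
  fun_prop

lemma measurable_sqrtinv :
    Measurable fun p : ℝ × ℝ => ((Real.sqrt (‖Pt k1 k2 k3 p.1 p.2‖)⁻¹ : ℝ) : ℂ) :=
  Complex.measurable_ofReal.comp
    (Real.continuous_sqrt.measurable.comp (continuous_norm.comp continuous_Pt).measurable.inv)

lemma measurable_uFn (x : ℤ × ℤ) : Measurable (uFn k1 k2 k3 x) :=
  (continuous_exp_imag x.2 x.1).measurable.mul measurable_sqrtinv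

lemma measurable_vFn (x : ℤ × ℤ) : Measurable (vFn k1 k2 k3 x) :=
  (((continuous_exp_imag x.2 x.1).measurable.mul
    ((Complex.continuous_conj.comp continuous_Pt).measurable))).mul
    (Complex.measurable_ofReal.comp
      ((Real.continuous_sqrt.measurable.comp
        (continuous_norm.comp continuous_Pt).measurable.inv).pow_const 3))

lemma norm_uFn_sq (x : ℤ × ℤ) (p : ℝ × ℝ) :
    ‖uFn k1 k2 k3 x p‖ ^ 2 = (‖Pt k1 k2 k3 p.1 p.2‖)⁻¹ := by
  set t := ‖Pt k1 k2 k3 p.1 p.2‖ with ht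
  have htn : (0:ℝ) ≤ t⁻¹ := inv_nonneg.mpr (norm_nonneg _)
  rw [uFn, norm_mul, abs_exp_imag,
    Complex.norm_real, Real.norm_eq_abs, one_mul, _root_.abs_of_nonneg (Real.sqrt_nonneg _), Real.sq_sqrt htn]

lemma norm_vFn_sq (x : ℤ × ℤ) (p : ℝ × ℝ) :
    ‖vFn k1 k2 k3 x p‖ ^ 2 = (‖Pt k1 k2 k3 p.1 p.2‖)⁻¹ := by
  set t := ‖Pt k1 k2 k3 p.1 p.2‖ with ht
  have htn : (0:ℝ) ≤ t := norm_nonneg _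
  rw [vFn, norm_mul, norm_mul,
    abs_exp_imag, Complex.norm_conj, Complex.norm_real, Real.norm_eq_abs, one_mul, ← ht,
    _root_.abs_of_nonneg (pow_nonneg (Real.sqrt_nonneg _) 3)]
  rcases eq_or_lt_of_le htn with h0 | hpos
  · rw [← h0]; simp
  · have hs : Real.sqrt t⁻¹ ^ 3 = t⁻¹ * Real.sqrt t⁻¹ := by
      rw [pow_succ, Real.sq_sqrt (inv_nonneg.mpr htn)]
    rw [mul_pow, hs, mul_pow, Real.sq_sqrt (inv_nonneg.mpr htn)]
    field_simp

lemma conj_uFn_mul_vFn (x x' : ℤ × ℤ) (p : ℝ × ℝ) :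
    (starRingEnd ℂ) (uFn k1 k2 k3 x p) * vFn k1 k2 k3 x' p =
      Complex.exp (-Complex.I * p.1 * ((x'.2 - x.2 : ℤ) : ℂ) +
          Complex.I * p.2 * ((x'.1 - x.1 : ℤ) : ℂ)) / Pt k1 k2 k3 p.1 p.2 := by
  set P := Pt k1 k2 k3 p.1 p.2 with hP
  set t := ‖P‖ with ht
  have htn : (0:ℝ) ≤ t⁻¹ := inv_nonneg.mpr (norm_nonneg _)
  have hconj : (starRingEnd ℂ) (uFn k1 k2 k3 x p)
      = Complex.exp (Complex.I * p.1 * (x.2 : ℂ) + -Complex.I * p.2 * (x.1 : ℂ)) *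
        ((Real.sqrt t⁻¹ : ℝ) : ℂ) := by
    rw [uFn, map_mul, ← Complex.exp_conj, Complex.conj_ofReal]
    congr 2
    simp only [map_add, map_mul, map_neg, Complex.conj_I, Complex.conj_ofReal, map_intCast]
    ring
  rw [hconj, vFn, ← hP, ← ht]
  have hsqrt : ((Real.sqrt t⁻¹ : ℝ) : ℂ) * ((Real.sqrt t⁻¹ ^ 3 : ℝ) : ℂ)
      = (((t⁻¹ ^ 2 : ℝ)) : ℂ) := by
    rw [← Complex.ofReal_mul]
    congr 1
    rw [show Real.sqrt t⁻¹ * Real.sqrt t⁻¹ ^ 3 = (Real.sqrt t⁻¹ ^ 2) ^ 2 by ring,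
      Real.sq_sqrt htn]
  have hinv : (starRingEnd ℂ) P * (((t⁻¹ ^ 2 : ℝ)) : ℂ) = P⁻¹ := by
    rw [Complex.inv_def]
    congr 1
    rw [inv_pow, ht, Complex.sq_norm]
  calc Complex.exp (Complex.I * p.1 * (x.2 : ℂ) + -Complex.I * p.2 * (x.1 : ℂ)) *
        ((Real.sqrt t⁻¹ : ℝ) : ℂ) *
        (Complex.exp (-Complex.I * p.1 * (x'.2 : ℂ) + Complex.I * p.2 * (x'.1 : ℂ)) *
          (starRingEnd ℂ) P * ((Real.sqrt t⁻¹ ^ 3 : ℝ) : ℂ))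
      = Complex.exp (Complex.I * p.1 * (x.2 : ℂ) + -Complex.I * p.2 * (x.1 : ℂ)) *
          Complex.exp (-Complex.I * p.1 * (x'.2 : ℂ) + Complex.I * p.2 * (x'.1 : ℂ)) *
          ((starRingEnd ℂ) P *
            (((Real.sqrt t⁻¹ : ℝ) : ℂ) * ((Real.sqrt t⁻¹ ^ 3 : ℝ) : ℂ))) := by ring
    _ = Complex.exp (-Complex.I * p.1 * ((x'.2 - x.2 : ℤ) : ℂ) +
          Complex.I * p.2 * ((x'.1 - x.1 : ℤ) : ℂ)) * P⁻¹ := by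
        rw [hsqrt, hinv, ← Complex.exp_add]
        congr 1
        push_cast
        ring
    _ = _ := by rw [div_eq_mul_inv]

lemma integral_Icc_prod_eq {E' : Type*} [NormedAddCommGroup E'] [NormedSpace ℝ E']
    (F : ℝ × ℝ → E')
    (hF : MeasureTheory.IntegrableOn F (Set.Icc 0 (2*π) ×ˢ Set.Icc 0 (2*π))) :
    (∫ θ in (0:ℝ)..(2*π), ∫ φ in (0:ℝ)..(2*π), F (θ, φ))
      = ∫ p in Set.Icc (0:ℝ) (2*π) ×ˢ Set.Icc (0:ℝ) (2*π), F p := by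
  have h2π : (0:ℝ) ≤ 2*π := by positivity
  have h1 : ∀ θ : ℝ, (∫ φ in (0:ℝ)..(2*π), F (θ, φ)) = ∫ φ in Set.Icc (0:ℝ) (2*π), F (θ, φ) :=
    fun θ => by
      rw [intervalIntegral.integral_of_le h2π, MeasureTheory.integral_Icc_eq_integral_Ioc]
  rw [intervalIntegral.integral_of_le h2π]
  simp_rw [h1]
  rw [← MeasureTheory.integral_Icc_eq_integral_Ioc]
  rw [MeasureTheory.Measure.volume_eq_prod] at hF
  have := (MeasureTheory.setIntegral_prod F hF).symm
  rw [MeasureTheory.Measure.volume_eq_prod]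
  exact this

end Part2



open scoped ComplexOrder

open Matrix in
/-- `|det(⟪e k, f l⟫)| ≤ 1` for orthonormal families. -/
lemma abs_det_inner_orthonormal_le {E : Type*} [NormedAddCommGroup E] [InnerProductSpace ℂ E]
    {r : ℕ} {e f : Fin r → E}
    (he : Orthonormal ℂ e) (hf : Orthonormal ℂ f) :
    ‖(Matrix.of fun k l => (inner ℂ (e k) (f l) : ℂ)).det‖ ≤ 1 := by
  classical
  set Q : Matrix (Fin r) (Fin r) ℂ := Matrix.of fun k l => (inner ℂ (e k) (f l) : ℂ) with hQ
  have hH : (Qᴴ * Q).PosSemidef := Matrix.posSemidef_conjTranspose_mul_self Q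
  have hdetH : (Qᴴ * Q).det = ((‖Q.det‖ ^ 2 : ℝ) : ℂ) := by
    rw [Matrix.det_mul, Matrix.det_conjTranspose, ← Complex.normSq_eq_norm_sq, ← Complex.mul_conj]
    rw [Complex.star_def]
    ring
  have hcm : ∀ z : ℂ, ((starRingEnd ℂ) z * z).re = ‖z‖ ^ 2 := fun z => by
    rw [← Complex.normSq_eq_conj_mul_self, Complex.ofReal_re, ← Complex.sq_norm]
  have heig : ∀ i, hH.1.eigenvalues i ≤ 1 := by
    intro i
    set x := ⇑(hH.1.eigenvectorBasis i) with hx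
    have hnx : ‖hH.1.eigenvectorBasis i‖ = 1 := hH.1.eigenvectorBasis.orthonormal.1 i
    have hxsum : ∑ l, ‖x l‖ ^ 2 = 1 := by
      have h1 := EuclideanSpace.norm_eq (hH.1.eigenvectorBasis i)
      rw [hnx] at h1
      exact Real.sqrt_eq_one.mp h1.symm
    set w : E := ∑ l, x l • f l with hw
    have hyk : ∀ k, (Q *ᵥ x) k = (inner ℂ (e k) w : ℂ) := by
      intro k
      simp [hw, Matrix.mulVec, dotProduct, inner_sum, inner_smul_right, hQ, mul_comm]
    have hkey : hH.1.eigenvalues i = ∑ k, ‖(inner ℂ (e k) w : ℂ)‖ ^ 2 := by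
      rw [hH.1.eigenvalues_eq i, ← Matrix.mulVec_mulVec, dotProduct_mulVec,
        ← Matrix.star_mulVec]
      simp only [dotProduct, Pi.star_apply, map_sum]
      refine Finset.sum_congr rfl fun k _ => ?_
      rw [hyk k, RCLike.star_def, RCLike.re_to_complex, hcm]
    have hwnorm : ‖w‖ ^ 2 = 1 := by
      rw [← @inner_self_eq_norm_sq ℂ, hw, hf.inner_sum]
      simp only [map_sum, RCLike.re_to_complex, hcm]
      exact hxsum
    calc hH.1.eigenvalues i = ∑ k, ‖(inner ℂ (e k) w : ℂ)‖ ^ 2 := hkey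
      _ ≤ ‖w‖ ^ 2 := he.sum_inner_products_le w
      _ = 1 := hwnorm
  have hprod : ‖Q.det‖ ^ 2 = ∏ i, hH.1.eigenvalues i := by
    have := hH.1.det_eq_prod_eigenvalues
    rw [hdetH] at this
    rw [← RCLike.ofReal_prod] at this
    exact RCLike.ofReal_inj.mp this
  have hle : ‖Q.det‖ ^ 2 ≤ 1 := by
    rw [hprod]
    exact Finset.prod_le_one (fun i _ => hH.eigenvalues_nonneg i) (fun i _ => heig i)
  nlinarith [norm_nonneg Q.det]




open Matrix in
/-- Generalized Hadamard inequality: `|det(⟪u i, v j⟫)| ≤ ∏‖u i‖ ∏‖v j‖`. -/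
lemma abs_det_inner_le {E : Type*} [NormedAddCommGroup E] [InnerProductSpace ℂ E] {r : ℕ}
    (u v : Fin r → E) :
    ‖(Matrix.of fun i j => (inner ℂ (u i) (v j) : ℂ)).det‖
      ≤ (∏ i, ‖u i‖) * ∏ j, ‖v j‖ := by
  classical
  have hRHS : (0:ℝ) ≤ (∏ i, ‖u i‖) * ∏ j, ‖v j‖ := by positivity
  set M : Matrix (Fin r) (Fin r) ℂ := Matrix.of fun i j => (inner ℂ (u i) (v j) : ℂ) with hM
  by_cases hv : LinearIndependent ℂ v
  · by_cases hu : LinearIndependent ℂ u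
    · haveI : WellFoundedLT (Fin r) := Finite.to_wellFoundedLT
      set e := InnerProductSpace.gramSchmidtNormed ℂ u with hedef
      set f := InnerProductSpace.gramSchmidtNormed ℂ v with hfdef
      have he : Orthonormal ℂ e := InnerProductSpace.gramSchmidtNormed_orthonormal hu
      have hf : Orthonormal ℂ f := InnerProductSpace.gramSchmidtNormed_orthonormal hv
      have hmem_u : ∀ i, u i ∈ Submodule.span ℂ (e '' Set.Iic i) := by
        intro i
        rw [hedef, InnerProductSpace.span_gramSchmidtNormed, InnerProductSpace.span_gramSchmidt_Iic]
        exact Submodule.subset_span ⟨i, le_refl i, rfl⟩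
      have hmem_v : ∀ j, v j ∈ Submodule.span ℂ (f '' Set.Iic j) := by
        intro j
        rw [hfdef, InnerProductSpace.span_gramSchmidtNormed, InnerProductSpace.span_gramSchmidt_Iic]
        exact Submodule.subset_span ⟨j, le_refl j, rfl⟩
      have horth : ∀ (g : Fin r → E), Orthonormal ℂ g → ∀ (i k : Fin r) (w : E),
          i < k → w ∈ Submodule.span ℂ (g '' Set.Iic i) → (inner ℂ (g k) w : ℂ) = 0 := by
        intro g hg i k w hik hw
        induction hw using Submodule.span_induction with
        | mem x hx =>
          obtain ⟨j, hj, rfl⟩ := hx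
          exact hg.2 (ne_of_gt (lt_of_le_of_lt hj hik))
        | zero => simp
        | add x y _ _ hx hy => rw [inner_add_right, hx, hy, add_zero]
        | smul c x _ hx => rw [inner_smul_right, hx, mul_zero]
      have hexp : ∀ (g : Fin r → E), Orthonormal ℂ g → ∀ w : E,
          w ∈ Submodule.span ℂ (Set.range g) → w = ∑ k, (inner ℂ (g k) w : ℂ) • g k := by
        intro g hg w hw
        obtain ⟨c, hc⟩ := (Submodule.mem_span_range_iff_exists_fun ℂ).mp hw
        rw [← hc]
        refine Finset.sum_congr rfl fun k _ => ?_
        rw [hg.inner_right_fintype c k]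
      set L : Matrix (Fin r) (Fin r) ℂ := Matrix.of fun i k => (inner ℂ (u i) (e k) : ℂ) with hL
      set Q : Matrix (Fin r) (Fin r) ℂ := Matrix.of fun k l => (inner ℂ (e k) (f l) : ℂ) with hQ
      set U : Matrix (Fin r) (Fin r) ℂ := Matrix.of fun l j => (inner ℂ (f l) (v j) : ℂ) with hU
      have hfact : M = L * Q * U := by
        ext i j
        have hui := hexp e he (u i) (Submodule.span_mono
          (Set.image_subset_range e (Set.Iic i)) (hmem_u i))
        have hvj := hexp f hf (v j) (Submodule.span_mono
          (Set.image_subset_range f (Set.Iic j)) (hmem_v j))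
        have : (inner ℂ (u i) (v j) : ℂ)
            = ∑ k, ∑ l, (inner ℂ (u i) (e k) : ℂ) * (inner ℂ (e k) (f l) : ℂ)
                * (inner ℂ (f l) (v j) : ℂ) := by
          conv_lhs => rw [hui, hvj]
          rw [sum_inner]
          refine Finset.sum_congr rfl fun k _ => ?_
          rw [inner_smul_left, inner_sum]
          rw [Finset.mul_sum]
          refine Finset.sum_congr rfl fun l _ => ?_
          rw [inner_smul_right, ← inner_conj_symm (u i) (e k)]
          ring
        simp only [hM, Matrix.mul_apply, Matrix.of_apply, this, Finset.sum_mul]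
        rw [Finset.sum_comm]
        rfl
      have habsQ : ‖Q.det‖ ≤ 1 := abs_det_inner_orthonormal_le he hf
      have hLtri : L.BlockTriangular OrderDual.toDual := by
        intro i k h
        have hik : (i : Fin r) < k := h
        have h0 : (inner ℂ (e k) (u i) : ℂ) = 0 := horth e he i k (u i) hik (hmem_u i)
        show (inner ℂ (u i) (e k) : ℂ) = 0
        rw [← inner_conj_symm (u i) (e k), h0, map_zero]
      have hUtri : U.BlockTriangular id := by
        intro l j h
        exact horth f hf j l (v j) h (hmem_v j)
      have hdetL : L.det = ∏ i, L i i := Matrix.det_of_lowerTriangular L hLtri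
      have hdetU : U.det = ∏ j, U j j := Matrix.det_of_upperTriangular hUtri
      have hLbound : ∀ i, ‖L i i‖ ≤ ‖u i‖ := by
        intro i
        have := norm_inner_le_norm (𝕜 := ℂ) (u i) (e i)
        rwa [he.1 i, mul_one] at this
      have hUbound : ∀ j, ‖U j j‖ ≤ ‖v j‖ := by
        intro j
        have := norm_inner_le_norm (𝕜 := ℂ) (f j) (v j)
        rwa [hf.1 j, one_mul] at this
      calc ‖M.det‖ = ‖L.det‖ * ‖Q.det‖ * ‖U.det‖ := by
            rw [hfact, Matrix.det_mul, Matrix.det_mul, norm_mul, norm_mul]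
        _ ≤ ‖L.det‖ * 1 * ‖U.det‖ := by
            have h1 : (0:ℝ) ≤ ‖L.det‖ := norm_nonneg _
            have h2 : (0:ℝ) ≤ ‖U.det‖ := norm_nonneg _
            exact mul_le_mul_of_nonneg_right (mul_le_mul_of_nonneg_left habsQ h1) h2
        _ = (∏ i, ‖L i i‖) * ∏ j, ‖U j j‖ := by
            rw [mul_one, hdetL, hdetU, norm_prod, norm_prod]
        _ ≤ (∏ i, ‖u i‖) * ∏ j, ‖v j‖ := by
            have hA : (∏ i, ‖L i i‖) ≤ ∏ i, ‖u i‖ :=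
              Finset.prod_le_prod (fun i _ => norm_nonneg _) (fun i _ => hLbound i)
            have hB : (∏ j, ‖U j j‖) ≤ ∏ j, ‖v j‖ :=
              Finset.prod_le_prod (fun j _ => norm_nonneg _) (fun j _ => hUbound j)
            have h0B : (0:ℝ) ≤ ∏ j, ‖U j j‖ :=
              Finset.prod_nonneg fun j _ => norm_nonneg _
            have h0A' : (0:ℝ) ≤ ∏ i, ‖u i‖ := Finset.prod_nonneg fun i _ => norm_nonneg _
            exact mul_le_mul hA hB h0B h0A'
    · -- u linearly dependent : det = 0
      obtain ⟨g, hsum, i, hgi⟩ := Fintype.not_linearIndependent_iff.mp hu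
      have hvm : Matrix.vecMul (star g) M = 0 := by
        ext j
        have : Matrix.vecMul (star g) M j = (inner ℂ (∑ i, g i • u i) (v j) : ℂ) := by
          rw [sum_inner]
          simp [Matrix.vecMul, dotProduct, inner_smul_left, hM]
        rw [this, hsum, inner_zero_left]
        rfl
      have hdet : M.det = 0 := by
        refine Matrix.exists_vecMul_eq_zero_iff.mp ⟨star g, ?_, hvm⟩
        intro h
        exact hgi (by simpa using congrFun (congrArg star h) i)
      rw [hdet, norm_zero]; exact hRHS
  · -- v linearly dependent : det = 0
    obtain ⟨g, hsum, j, hgj⟩ := Fintype.not_linearIndependent_iff.mp hv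
    have hmv : M.mulVec g = 0 := by
      ext i
      have : M.mulVec g i = (inner ℂ (u i) (∑ j, g j • v j) : ℂ) := by
        rw [inner_sum]
        simp [Matrix.mulVec, dotProduct, inner_smul_right, hM, mul_comm]
      rw [this, hsum, inner_zero_right]
      rfl
    have hdet : M.det = 0 := by
      refine Matrix.exists_mulVec_eq_zero_iff.mp ⟨g, ?_, hmv⟩
      intro h
      exact hgj (congrFun h j)
    rw [hdet, norm_zero]; exact hRHS



/-- Let `k₁,k₂,k₃ > 0` with
`C = (2π)^{−2}∫∫ |P̃|^{−1} < ∞` (i.e. `|P̃|⁻¹` is integrable on `[0,2π]²`).  Then for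
every `r ≥ 1` and all points `x⁽¹⁾, …, x⁽ʳ⁾, x'⁽¹⁾, …, x'⁽ʳ⁾ ∈ ℤ²`,
`|det((K⁻¹(x⁽ⁱ⁾, x'⁽ʲ⁾))_{1≤i,j≤r})| ≤ Cʳ`. -/
theorem kasteleyn_det_bound (k1 k2 k3 : ℝ)
    (h1 : 0 < k1) (h2 : 0 < k2) (h3 : 0 < k3)
    (hC : IntegrableOn (fun p : ℝ × ℝ => ‖Pt k1 k2 k3 p.1 p.2‖⁻¹)
      (Set.Icc 0 (2 * π) ×ˢ Set.Icc 0 (2 * π))) :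
    ∀ r : ℕ, 1 ≤ r → ∀ X X' : Fin r → ℤ × ℤ,
      ‖Matrix.det (Matrix.of fun i j => Kinv k1 k2 k3 (X i) (X' j))‖ ≤
        Cconst k1 k2 k3 ^ r := by
  intro r hr X X'
  classical
  have h2π : (0:ℝ) < 2*π := by positivity
  set S : Set (ℝ × ℝ) := Set.Icc 0 (2*π) ×ˢ Set.Icc 0 (2*π) with hSdef
  set μ : Measure (ℝ × ℝ) := volume.restrict S with hμ
  set t : ℝ × ℝ → ℝ := fun p => ‖Pt k1 k2 k3 p.1 p.2‖ with htdef
  have hmemu : ∀ x : ℤ × ℤ, MemLp (uFn k1 k2 k3 x) 2 μ := by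
    intro x
    refine (memLp_two_iff_integrable_sq_norm
      (measurable_uFn x).aestronglyMeasurable).mpr ?_
    have h : (fun p : ℝ × ℝ => ‖uFn k1 k2 k3 x p‖ ^ 2) = fun p => (t p)⁻¹ :=
      funext fun p => norm_uFn_sq x p
    rw [h]
    exact hC
  have hmemv : ∀ x : ℤ × ℤ, MemLp (vFn k1 k2 k3 x) 2 μ := by
    intro x
    refine (memLp_two_iff_integrable_sq_norm
      (measurable_vFn x).aestronglyMeasurable).mpr ?_
    have h : (fun p : ℝ × ℝ => ‖vFn k1 k2 k3 x p‖ ^ 2) = fun p => (t p)⁻¹ :=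
      funext fun p => norm_vFn_sq x p
    rw [h]
    exact hC
  set U : Fin r → Lp ℂ 2 μ := fun i => (hmemu (X i)).toLp _ with hUdef
  set V : Fin r → Lp ℂ 2 μ := fun j => (hmemv (X' j)).toLp _ with hVdef
  have hinner : ∀ i j, (inner ℂ (U i) (V j) : ℂ)
      = ∫ p, (starRingEnd ℂ) (uFn k1 k2 k3 (X i) p) * vFn k1 k2 k3 (X' j) p ∂μ := by
    intro i j
    rw [MeasureTheory.L2.inner_def]
    refine MeasureTheory.integral_congr_ae ?_
    filter_upwards [(hmemu (X i)).coeFn_toLp, (hmemv (X' j)).coeFn_toLp] with p h1 h2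
    simp only [hUdef, hVdef]
    rw [RCLike.inner_apply, h1, h2, mul_comm]
  have hnormsq : ∀ (g : ℝ × ℝ → ℂ) (hg : MemLp g 2 μ), (∀ p, ‖g p‖ ^ 2 = (t p)⁻¹) →
      ‖hg.toLp g‖ ^ 2 = ∫ p, (t p)⁻¹ ∂μ := by
    intro g hg hgn
    have h1 : (inner ℂ (hg.toLp g) (hg.toLp g) : ℂ) = ∫ p, (starRingEnd ℂ) (g p) * g p ∂μ := by
      rw [MeasureTheory.L2.inner_def]
      refine MeasureTheory.integral_congr_ae ?_
      filter_upwards [hg.coeFn_toLp] with p h1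
      rw [h1, RCLike.inner_apply, mul_comm]
    have h2 : (fun p => (starRingEnd ℂ) (g p) * g p) = fun p => (((t p)⁻¹ : ℝ) : ℂ) := by
      funext p
      rw [← Complex.normSq_eq_conj_mul_self, ← hgn p]
      norm_cast
      rw [Complex.normSq_eq_norm_sq]
    have h3 : (∫ p, (((t p)⁻¹ : ℝ) : ℂ) ∂μ) = (((∫ p, (t p)⁻¹ ∂μ : ℝ)) : ℂ) :=
      _root_.integral_ofReal
    rw [← @inner_self_eq_norm_sq ℂ, h1, h2, h3, RCLike.re_to_complex, Complex.ofReal_re]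
  set I0 : ℝ := ∫ p, (t p)⁻¹ ∂μ with hI0def
  have hI0nn : 0 ≤ I0 := by
    rw [hI0def]
    exact MeasureTheory.integral_nonneg fun p => inv_nonneg.mpr (norm_nonneg _)
  have hCeq : Cconst k1 k2 k3 = ((2*π)^2)⁻¹ * I0 := by
    rw [Cconst, hI0def, hμ]
    congr 1
    exact integral_Icc_prod_eq (fun p : ℝ × ℝ => (t p)⁻¹) hC
  have hnU : ∀ i, ‖U i‖ = Real.sqrt I0 := fun i => by
    rw [← Real.sqrt_sq (norm_nonneg (U i)), hUdef, hnormsq _ (hmemu (X i)) (norm_uFn_sq (X i))]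
  have hnV : ∀ j, ‖V j‖ = Real.sqrt I0 := fun j => by
    rw [← Real.sqrt_sq (norm_nonneg (V j)), hVdef, hnormsq _ (hmemv (X' j)) (norm_vFn_sq (X' j))]
  have hKinv : ∀ i j, Kinv k1 k2 k3 (X i) (X' j)
      = ((((2*π)^2)⁻¹ : ℝ) : ℂ) * (inner ℂ (U i) (V j) : ℂ) := by
    intro i j
    rw [Kinv]
    congr 1
    have hIF : MeasureTheory.IntegrableOn
        (fun p : ℝ × ℝ => Complex.exp (-Complex.I * p.1 * (((X' j).2 - (X i).2 : ℤ) : ℂ) +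
          Complex.I * p.2 * (((X' j).1 - (X i).1 : ℤ) : ℂ)) / Pt k1 k2 k3 p.1 p.2) S := by
      refine MeasureTheory.Integrable.mono' hC
        ((continuous_exp_imag _ _).measurable.div continuous_Pt.measurable).aestronglyMeasurable
        (Filter.Eventually.of_forall fun p => ?_)
      rw [norm_div, abs_exp_imag]
      exact le_of_eq (one_div _)
    calc (∫ θ in (0:ℝ)..(2*π), ∫ φ in (0:ℝ)..(2*π),
          Complex.exp (-Complex.I * θ * (((X' j).2 - (X i).2 : ℤ) : ℂ) +
            Complex.I * φ * (((X' j).1 - (X i).1 : ℤ) : ℂ)) / Pt k1 k2 k3 θ φ)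
        = ∫ p in S, Complex.exp (-Complex.I * p.1 * (((X' j).2 - (X i).2 : ℤ) : ℂ) +
            Complex.I * p.2 * (((X' j).1 - (X i).1 : ℤ) : ℂ)) / Pt k1 k2 k3 p.1 p.2 :=
          integral_Icc_prod_eq _ hIF
      _ = ∫ p, (starRingEnd ℂ) (uFn k1 k2 k3 (X i) p) * vFn k1 k2 k3 (X' j) p ∂μ := by
          rw [hμ]
          exact MeasureTheory.integral_congr_ae (Filter.Eventually.of_forall fun p =>
            (conj_uFn_mul_vFn (X i) (X' j) p).symm)
      _ = (inner ℂ (U i) (V j) : ℂ) := (hinner i j).symm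
  have hMeq : (Matrix.of fun i j => Kinv k1 k2 k3 (X i) (X' j))
      = ((((2*π)^2)⁻¹ : ℝ) : ℂ) • Matrix.of fun i j => (inner ℂ (U i) (V j) : ℂ) := by
    ext i j
    rw [Matrix.smul_apply, Matrix.of_apply, Matrix.of_apply, smul_eq_mul]
    exact hKinv i j
  rw [hMeq, Matrix.det_smul, norm_mul, norm_pow, Fintype.card_fin]
  have hc : ‖((((2*π)^2)⁻¹ : ℝ) : ℂ)‖ = ((2*π)^2)⁻¹ := by
    rw [Complex.norm_real, Real.norm_eq_abs, _root_.abs_of_nonneg (by positivity : (0:ℝ) ≤ ((2*π)^2)⁻¹)]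
  rw [hc]
  have hbound := abs_det_inner_le U V
  have hprod : (∏ i, ‖U i‖) * ∏ j, ‖V j‖ = I0 ^ r := by
    simp only [hnU, hnV, Finset.prod_const, Finset.card_univ, Fintype.card_fin]
    rw [← mul_pow, Real.mul_self_sqrt hI0nn]
  calc ((2*π)^2)⁻¹ ^ r * ‖(Matrix.of fun i j => (inner ℂ (U i) (V j) : ℂ)).det‖
      ≤ ((2*π)^2)⁻¹ ^ r * ((∏ i, ‖U i‖) * ∏ j, ‖V j‖) := by
        exact mul_le_mul_of_nonneg_left hbound (by positivity)
    _ = (((2*π)^2)⁻¹ * I0) ^ r := by rw [hprod, ← mul_pow]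
    _ = Cconst k1 k2 k3 ^ r := by rw [hCeq]

end Kasteleyn
end

section
/- Let S ⊆ ℤ × (0,∞) be a set of space–time points. Then: (i) for every a ∈ ℤ, every m ∈ ℕ, every 0 ≤ s < t and every k ≥ 0, Γ((a−m, s), t, k) ≤ Γ((a, s), t, k) + m (as elements of ℕ ∪ {∞}); and (ii) consequently, if z, z' : ℤ → ℤ satisfy z(j) ≤ z'(j) for every j ∈ ℤ, then for every n ∈ ℤ and t > 0, inf_{j ≤ n} ( z(j) + Γ((z(j), 0), t, n−j) ) ≤ inf_{j ≤ n} ( z'(j) + Γ((z'(j), 0), t, n−j) ) (infima in ℤ ∪ {±∞}). -/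
open scoped ENNReal

namespace Hammersley

/-- There is an up-right path of `n` points of `S` in the rectangle `(a,b] × (s,t]`:
points `(x₁,t₁), …, (x_n,t_n) ∈ S` with `a < x₁ < ⋯ < x_n ≤ b` and
`s < t₁ < ⋯ < t_n ≤ t`. -/
def ChainExists (S : Set (ℤ × ℝ)) (a : ℤ) (s : ℝ) (b : ℤ) (t : ℝ) (n : ℕ) : Prop :=
  ∃ (x : Fin n → ℤ) (w : Fin n → ℝ), StrictMono x ∧ StrictMono w ∧
    (∀ i, (x i, w i) ∈ S) ∧ (∀ i, a < x i ∧ x i ≤ b) ∧ (∀ i, s < w i ∧ w i ≤ t)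

/-- `L((a,s),(b,t))`: the maximal number of points of `S` on an up-right path in the
rectangle `(a,b] × (s,t]`. -/
noncomputable def Lpp (S : Set (ℤ × ℝ)) (a : ℤ) (s : ℝ) (b : ℤ) (t : ℝ) : ℕ :=
  sSup {n : ℕ | ChainExists S a s b t n}

/-- `Γ((a,s),t,k) = inf{h ≥ 0 : L((a,s),(a+h,t)) ≥ k}` (an element of `[0,∞]`,
equal to `∞` when no such `h` exists). -/
noncomputable def Gam (S : Set (ℤ × ℝ)) (a : ℤ) (s t : ℝ) (k : ℕ) : ℝ≥0∞ :=
  sInf {c : ℝ≥0∞ | ∃ h : ℕ, c = h ∧ k ≤ Lpp S a s (a + h) t}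

lemma chainExists_zero (S : Set (ℤ × ℝ)) (a : ℤ) (s : ℝ) (b : ℤ) (t : ℝ) :
    ChainExists S a s b t 0 :=
  ⟨Fin.elim0, Fin.elim0, fun i => i.elim0, fun i => i.elim0, fun i => i.elim0,
    fun i => i.elim0, fun i => i.elim0⟩

lemma chainExists_mono_left {S : Set (ℤ × ℝ)} {a a' : ℤ} {s : ℝ} {b : ℤ} {t : ℝ} {n : ℕ}
    (h : a' ≤ a) (hc : ChainExists S a s b t n) : ChainExists S a' s b t n := by
  obtain ⟨x, w, hx, hw, hmem, hab, hst⟩ := hc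
  exact ⟨x, w, hx, hw, hmem, fun i => ⟨lt_of_le_of_lt h (hab i).1, (hab i).2⟩, hst⟩

lemma chainExists_le {S : Set (ℤ × ℝ)} {a : ℤ} {s : ℝ} {b : ℤ} {t : ℝ} {n : ℕ}
    (h : ChainExists S a s b t n) : n ≤ (b - a).toNat := by
  obtain ⟨x, w, hx, _, _, hab, _⟩ := h
  calc n = (Finset.univ : Finset (Fin n)).card := by simp
    _ ≤ (Finset.Ioc a b).card :=
        Finset.card_le_card_of_injOn x
          (fun i _ => Finset.mem_Ioc.mpr ⟨(hab i).1, (hab i).2⟩)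
          (hx.injective.injOn)
    _ = (b - a).toNat := Int.card_Ioc a b

lemma bddAbove_chain (S : Set (ℤ × ℝ)) (a : ℤ) (s : ℝ) (b : ℤ) (t : ℝ) :
    BddAbove {n | ChainExists S a s b t n} :=
  ⟨(b - a).toNat, fun _ hn => chainExists_le hn⟩

lemma lpp_mono_left {S : Set (ℤ × ℝ)} {a a' : ℤ} {s : ℝ} {b : ℤ} {t : ℝ}
    (h : a' ≤ a) : Lpp S a s b t ≤ Lpp S a' s b t := by
  have hmem : sSup {n | ChainExists S a s b t n} ∈ {n | ChainExists S a s b t n} :=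
    Nat.sSup_mem ⟨0, chainExists_zero S a s b t⟩ (bddAbove_chain S a s b t)
  exact le_csSup (bddAbove_chain S a' s b t) (chainExists_mono_left h hmem)

lemma gam_shift (S : Set (ℤ × ℝ)) (a : ℤ) (m : ℕ) (s t : ℝ) (k : ℕ) :
    Gam S (a - (m : ℤ)) s t k ≤ Gam S a s t k + (m : ℝ≥0∞) := by
  rw [Gam, Gam, ENNReal.sInf_add]
  refine le_iInf₂ fun c hc => ?_
  obtain ⟨h, rfl, hk⟩ := hc
  refine sInf_le ?_
  refine ⟨h + m, by push_cast; ring, ?_⟩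
  have harg : (a - (m : ℤ)) + ((h + m : ℕ) : ℤ) = a + (h : ℤ) := by push_cast; ring
  rw [harg]
  exact hk.trans (lpp_mono_left (by omega))

/-- Let `S ⊆ ℤ × (0,∞)` be a set of space–time points.
(i) For every `a ∈ ℤ`, `m ∈ ℕ`, `0 ≤ s < t` and `k ≥ 0`:
`Γ((a−m,s),t,k) ≤ Γ((a,s),t,k) + m`.
(ii) Consequently, if `z, z' : ℤ → ℤ` satisfy `z(j) ≤ z'(j)` for all `j`, then for every
`n ∈ ℤ` and `t > 0`,
`inf_{j ≤ n} (z(j) + Γ((z(j),0),t,n−j)) ≤ inf_{j ≤ n} (z'(j) + Γ((z'(j),0),t,n−j))`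
(infima taken in `ℝ ∪ {±∞}`), expressing monotonicity of the discrete Hammersley
dynamics in the initial condition. -/
theorem hammersley_monotonicity (S : Set (ℤ × ℝ)) (hS : ∀ p ∈ S, 0 < p.2) :
    (∀ (a : ℤ) (m : ℕ) (s t : ℝ), 0 ≤ s → s < t → ∀ k : ℕ,
      Gam S (a - (m : ℤ)) s t k ≤ Gam S a s t k + (m : ℝ≥0∞)) ∧
    (∀ z z' : ℤ → ℤ, (∀ j : ℤ, z j ≤ z' j) → ∀ (n : ℤ) (t : ℝ), 0 < t →
      (⨅ j : {j : ℤ // j ≤ n}, (((z j.1 : ℝ) : EReal) +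
          ENNReal.toEReal (Gam S (z j.1) 0 t (n - j.1).toNat))) ≤
      (⨅ j : {j : ℤ // j ≤ n}, (((z' j.1 : ℝ) : EReal) +
          ENNReal.toEReal (Gam S (z' j.1) 0 t (n - j.1).toNat)))) := by
  constructor
  · intro a m s t _ _ k
    exact gam_shift S a m s t k
  · intro z z' hzz n t _
    refine iInf_mono fun j => ?_
    set m : ℕ := (z' j.1 - z j.1).toNat with hm
    have hmz : z' j.1 - (m : ℤ) = z j.1 := by
      have := hzz j.1
      omega
    have key := gam_shift S (z' j.1) m 0 t (n - j.1).toNat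
    rw [hmz] at key
    calc ((z j.1 : ℝ) : EReal) + (Gam S (z j.1) 0 t (n - j.1).toNat).toEReal
        ≤ ((z j.1 : ℝ) : EReal) + (Gam S (z' j.1) 0 t (n - j.1).toNat + m).toEReal := by
          gcongr
          exact_mod_cast key
      _ = ((z' j.1 : ℝ) : EReal) + (Gam S (z' j.1) 0 t (n - j.1).toNat).toEReal := by
          rw [EReal.coe_ennreal_add]
          rw [← add_assoc, add_comm (((z j.1 : ℝ) : EReal)) _,
            add_comm _ ((Gam S (z' j.1) 0 t (n - j.1).toNat : EReal)), add_assoc]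
          congr 1
          have : ((m : ℝ≥0∞) : EReal) = ((m : ℝ) : EReal) := by
            norm_cast
          rw [this, ← EReal.coe_add]
          norm_cast
          omega

end Hammersley
end

section
/- For every T > 0 and every ε ∈ (0,1] there exist constants c, c' > 0 such that for every real D ≥ 2: Σ_{r ∈ ℕ, r ≥ εD} Tʳ·(r/ε)ʳ / (r!)² ≤ c·exp( −c'·D·log D ). -/
set_option maxHeartbeats 1000000

private lemma aux_key (m : ℕ) : (m : ℝ) ^ m ≤ Real.exp 1 ^ m * m.factorial := by
  have h := Real.pow_div_factorial_le_exp (x := (m : ℝ)) (Nat.cast_nonneg m) m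
  have hfac : (0 : ℝ) < m.factorial := by exact_mod_cast m.factorial_pos
  rw [div_le_iff₀ hfac] at h
  calc (m : ℝ) ^ m ≤ Real.exp m * m.factorial := h
    _ = Real.exp 1 ^ m * m.factorial := by rw [← Real.exp_nat_mul, mul_one]

private lemma aux_f_le (T ε : ℝ) (hT : 0 < T) (hε : 0 < ε) (r : ℕ) :
    T ^ r * ((r : ℝ) / ε) ^ r / ((r.factorial : ℝ)) ^ 2 ≤
      (Real.exp 1 * T / ε) ^ r / r.factorial := by
  have hfac : (0 : ℝ) < r.factorial := by exact_mod_cast r.factorial_pos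
  have hnum : ((r : ℝ) / ε) ^ r ≤ Real.exp 1 ^ r * r.factorial / ε ^ r := by
    rw [div_pow]
    gcongr
    exact aux_key r
  calc T ^ r * ((r : ℝ) / ε) ^ r / ((r.factorial : ℝ)) ^ 2
      ≤ T ^ r * (Real.exp 1 ^ r * r.factorial / ε ^ r) / ((r.factorial : ℝ)) ^ 2 := by
        gcongr
    _ = (Real.exp 1 * T / ε) ^ r / r.factorial := by
        rw [div_pow, mul_pow]
        field_simp

private lemma aux_rhs (T e x : ℝ) (ε : ℝ) (hT : 0 < T) (hε : 0 < ε) (he : 0 < e)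
    (hx : 0 < x) (m : ℕ) :
    ((e ^ 2 * T / ε) / x) ^ m = T ^ m * (x / ε) ^ m / (x ^ m / e ^ m) ^ 2 := by
  have he' : e ≠ 0 := ne_of_gt he
  have hx' : x ≠ 0 := ne_of_gt hx
  have hε' : ε ≠ 0 := ne_of_gt hε
  rw [div_pow, div_pow, div_pow, div_pow, mul_pow, ← pow_mul, ← pow_mul]
  field_simp
  ring

private lemma aux_f_le_pow (T ε : ℝ) (hT : 0 < T) (hε : 0 < ε) (m : ℕ) (hm : 0 < m) :
    T ^ m * ((m : ℝ) / ε) ^ m / ((m.factorial : ℝ)) ^ 2 ≤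
      ((Real.exp 1 ^ 2 * T / ε) / m) ^ m := by
  have hm0 : (0 : ℝ) < m := by exact_mod_cast hm
  have hfac : (0 : ℝ) < m.factorial := by exact_mod_cast m.factorial_pos
  have hden : (m : ℝ) ^ m / Real.exp 1 ^ m ≤ m.factorial := by
    rw [div_le_iff₀ (by positivity)]
    calc (m : ℝ) ^ m ≤ Real.exp 1 ^ m * m.factorial := aux_key m
      _ = (m.factorial : ℝ) * Real.exp 1 ^ m := by ring
  have hden0 : (0 : ℝ) < (m : ℝ) ^ m / Real.exp 1 ^ m := by positivity
  have hRHS : ((Real.exp 1 ^ 2 * T / ε) / m) ^ m =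
      T ^ m * ((m : ℝ) / ε) ^ m / ((m : ℝ) ^ m / Real.exp 1 ^ m) ^ 2 :=
    aux_rhs T (Real.exp 1) m ε hT hε (Real.exp_pos 1) hm0 m
  rw [hRHS]
  gcongr

private lemma aux_tail (q : ℝ) (hq0 : 0 < q) (hq1 : q < 1) (g : ℕ → ℝ) (n0 : ℕ)
    (hgsum : Summable g) (hzero : ∀ r < n0, g r = 0)
    (hle : ∀ m, n0 ≤ m → g m ≤ q ^ m) :
    ∑' r, g r ≤ q ^ n0 * (1 - q)⁻¹ := by
  have hsplit := Summable.sum_add_tsum_nat_add (f := g) n0 hgsum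
  have hfin : ∑ i ∈ Finset.range n0, g i = 0 :=
    Finset.sum_eq_zero fun i hi => hzero i (Finset.mem_range.mp hi)
  have htail : ∑' i : ℕ, g (i + n0) ≤ ∑' i : ℕ, q ^ n0 * q ^ i := by
    refine Summable.tsum_le_tsum (fun i => ?_) ((summable_nat_add_iff n0).2 hgsum)
      ((summable_geometric_of_lt_one hq0.le hq1).mul_left _)
    calc g (i + n0) ≤ q ^ (i + n0) := hle _ (Nat.le_add_left _ _)
      _ = q ^ n0 * q ^ i := by rw [pow_add]; ring
  have hgeo : ∑' i : ℕ, q ^ n0 * q ^ i = q ^ n0 * (1 - q)⁻¹ := by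
    rw [tsum_mul_left, tsum_geometric_of_lt_one hq0.le hq1]
  calc ∑' r, g r = ∑ i ∈ Finset.range n0, g i + ∑' i : ℕ, g (i + n0) := hsplit.symm
    _ = ∑' i : ℕ, g (i + n0) := by rw [hfin, zero_add]
    _ ≤ ∑' i : ℕ, q ^ n0 * q ^ i := htail
    _ = q ^ n0 * (1 - q)⁻¹ := hgeo

/-- For every `T > 0` and every `ε ∈ (0,1]` there exist constants
`c, c' > 0` such that for every real `D ≥ 2`:
`∑_{r ∈ ℕ, r ≥ εD} Tʳ·(r/ε)ʳ/(r!)² ≤ c·exp(−c'·D·log D)`. -/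
theorem superexponential_tail_bound (T : ℝ) (hT : 0 < T) (ε : ℝ) (hε : 0 < ε)
    (hε1 : ε ≤ 1) :
    ∃ c c' : ℝ, 0 < c ∧ 0 < c' ∧ ∀ D : ℝ, 2 ≤ D →
      (∑' r : ℕ, if ε * D ≤ (r : ℝ) then
          T ^ r * ((r : ℝ) / ε) ^ r / ((r.factorial : ℝ)) ^ 2 else 0) ≤
        c * Real.exp (-(c' * D * Real.log D)) := by
  set f : ℕ → ℝ := fun r => T ^ r * ((r : ℝ) / ε) ^ r / ((r.factorial : ℝ)) ^ 2 with hfdef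
  have hf0 : ∀ r, 0 ≤ f r := by
    intro r; simp only [hfdef]; positivity
  have hfsum : Summable f :=
    Summable.of_nonneg_of_le hf0 (fun r => aux_f_le T ε hT hε r)
      (Real.summable_pow_div_factorial (Real.exp 1 * T / ε))
  set M : ℝ := ∑' r, f r with hM
  have hM0 : 0 ≤ M := tsum_nonneg hf0
  set A : ℝ := Real.exp 1 ^ 2 * T / ε with hA
  have hA0 : 0 < A := by positivity
  set L : ℝ := Real.log (A / ε) with hL
  set D0 : ℝ := max 2 (max (2 * A / ε) (Real.exp (2 * L))) with hD0def
  have hD02 : (2 : ℝ) ≤ D0 := le_max_left _ _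
  have hlogD0 : 0 ≤ Real.log D0 := Real.log_nonneg (by linarith)
  refine ⟨(M + 2) * Real.exp (ε / 2 * D0 * Real.log D0), ε / 2, by positivity,
    by positivity, ?_⟩
  intro D hD
  have hDpos : (0 : ℝ) < D := by linarith
  have hlogD : 0 ≤ Real.log D := Real.log_nonneg (by linarith)
  set g : ℕ → ℝ := fun r => if ε * D ≤ (r : ℝ) then f r else 0 with hgdef
  have hg0 : ∀ r, 0 ≤ g r := by
    intro r; simp only [hgdef]; split
    · exact hf0 r
    · exact le_rfl
  have hgle : ∀ r, g r ≤ f r := by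
    intro r; simp only [hgdef]; split
    · exact le_rfl
    · exact hf0 r
  have hgsum : Summable g := Summable.of_nonneg_of_le hg0 hgle hfsum
  show ∑' r, g r ≤ _
  by_cases hcase : D0 ≤ D
  · -- large D
    set q : ℝ := A / (ε * D) with hq
    have hεD : 0 < ε * D := by positivity
    have hq0 : 0 < q := by positivity
    have hAD : 2 * A / ε ≤ D := ((le_max_left _ _).trans (le_max_right _ _)).trans hcase
    have hqhalf : q ≤ 1 / 2 := by
      rw [hq, div_le_div_iff₀ hεD (by norm_num)]
      rw [div_le_iff₀ hε] at hAD
      nlinarith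
    have hq1 : q < 1 := by linarith
    set n0 : ℕ := ⌈ε * D⌉₊ with hn0def
    have hn0ge : ε * D ≤ (n0 : ℝ) := Nat.le_ceil _
    have hn0pos : 0 < n0 := Nat.ceil_pos.mpr hεD
    have hzero : ∀ r < n0, g r = 0 := by
      intro r hr
      simp only [hgdef]
      rw [if_neg]
      exact not_le.mpr (Nat.lt_ceil.mp hr)
    have hfq : ∀ m : ℕ, n0 ≤ m → g m ≤ q ^ m := by
      intro m hm
      have hm1 : 0 < m := lt_of_lt_of_le hn0pos hm
      have hm0 : (0 : ℝ) < m := by exact_mod_cast hm1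
      have step1 : f m ≤ (A / m) ^ m := by
        simp only [hfdef, hA]
        exact aux_f_le_pow T ε hT hε m hm1
      have step2 : (A / m) ^ m ≤ q ^ m := by
        apply pow_le_pow_left₀ (by positivity)
        rw [hq]
        exact div_le_div_of_nonneg_left hA0.le hεD
          (hn0ge.trans (by exact_mod_cast hm))
      exact (hgle m).trans (step1.trans step2)
    have hbound : ∑' r, g r ≤ q ^ n0 * (1 - q)⁻¹ :=
      aux_tail q hq0 hq1 g n0 hgsum hzero hfq
    have hlogq : Real.log q ≤ 0 := Real.log_nonpos hq0.le (by linarith)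
    have hqpow : q ^ n0 = Real.exp ((n0 : ℝ) * Real.log q) := by
      rw [Real.exp_nat_mul, Real.exp_log hq0]
    have hD0exp : Real.exp (2 * L) ≤ D :=
      ((le_max_right _ _).trans (le_max_right _ _)).trans hcase
    have h2L : 2 * L ≤ Real.log D := by
      rw [← Real.log_exp (2 * L)]
      exact Real.log_le_log (Real.exp_pos _) hD0exp
    have hlogqeq : Real.log q = L - Real.log D := by
      rw [hq, hL, show A / (ε * D) = (A / ε) / D by ring,
        Real.log_div (by positivity) (by positivity)]
    have h4 : (n0 : ℝ) * Real.log q ≤ (ε * D) * Real.log q :=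
      mul_le_mul_of_nonpos_right hn0ge hlogq
    have h5 : (ε * D) * Real.log q ≤ -(ε / 2 * D * Real.log D) := by
      rw [hlogqeq]
      nlinarith [mul_nonneg (mul_nonneg hε.le hDpos.le)
        (by linarith : (0 : ℝ) ≤ Real.log D - 2 * L)]
    have h6 : q ^ n0 ≤ Real.exp (-(ε / 2 * D * Real.log D)) := by
      rw [hqpow]
      exact Real.exp_le_exp.mpr (h4.trans h5)
    have h7 : (1 - q)⁻¹ ≤ 2 := by
      have h12 : (1 : ℝ) / 2 ≤ 1 - q := by linarith
      calc (1 - q)⁻¹ ≤ ((1 : ℝ) / 2)⁻¹ := by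
            apply inv_anti₀ (by norm_num) h12
        _ = 2 := by norm_num
    have hc2 : (2 : ℝ) ≤ (M + 2) * Real.exp (ε / 2 * D0 * Real.log D0) := by
      have h1 : (1 : ℝ) ≤ Real.exp (ε / 2 * D0 * Real.log D0) :=
        Real.one_le_exp (mul_nonneg (mul_nonneg (by linarith) (by linarith)) hlogD0)
      nlinarith
    calc ∑' r, g r ≤ q ^ n0 * (1 - q)⁻¹ := hbound
      _ ≤ Real.exp (-(ε / 2 * D * Real.log D)) * 2 := by
          apply mul_le_mul h6 h7 (inv_nonneg.mpr (by linarith)) (Real.exp_nonneg _)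
      _ = 2 * Real.exp (-(ε / 2 * D * Real.log D)) := by ring
      _ ≤ (M + 2) * Real.exp (ε / 2 * D0 * Real.log D0) *
            Real.exp (-(ε / 2 * D * Real.log D)) := by
          apply mul_le_mul_of_nonneg_right hc2 (Real.exp_nonneg _)
  · -- small D
    push_neg at hcase
    have hDD0 : D ≤ D0 := hcase.le
    have hDlog : D * Real.log D ≤ D0 * Real.log D0 := by
      have h1 : Real.log D ≤ Real.log D0 := Real.log_le_log hDpos hDD0
      nlinarith
    have h3 : (1 : ℝ) ≤ Real.exp (ε / 2 * D0 * Real.log D0) *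
        Real.exp (-(ε / 2 * D * Real.log D)) := by
      rw [← Real.exp_add]
      apply Real.one_le_exp
      nlinarith
    have h1 : ∑' r, g r ≤ M := Summable.tsum_le_tsum hgle hgsum hfsum
    calc ∑' r, g r ≤ M := h1
      _ ≤ (M + 2) * (Real.exp (ε / 2 * D0 * Real.log D0) *
            Real.exp (-(ε / 2 * D * Real.log D))) := by nlinarith
      _ = (M + 2) * Real.exp (ε / 2 * D0 * Real.log D0) *
            Real.exp (-(ε / 2 * D * Real.log D)) := by ring
end
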